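/- arXiv:1701.04354 — 10 statements merged into one kernel-verified Lean document; each statement's English description precedes it below -/
import Mathlib

section
/- Assume T_{2n} ≥ τ for every n ∈ ℕ. Let U be a trajectory of the on–off delay system and F its Lyapunov functional. Then for every n ∈ ℕ and every t ∈ (t_{2n+1}, t_{2n+2}) such that t ∉ {t_k − τ : k ∈ ℕ}, the function F is differentiable at t and F′(t) ≤ B_{2n+1} ‖U(t)‖². -/
open MeasureTheory Set Filter

theorem stmt_2
    {H : Type*} [NormedAddCommGroup H] [InnerProductSpace ℝ H]
    (S : ℝ → H →L[ℝ] H) (M μ : ℝ)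
    (hM : 1 ≤ M) (hμ : 0 < μ)
    (hS0 : S 0 = ContinuousLinearMap.id ℝ H)
    (hSadd : ∀ s u : ℝ, 0 ≤ s → 0 ≤ u → S (s + u) = (S s).comp (S u))
    (hScont : ∀ x : H, ContinuousOn (fun s => S s x) (Set.Ici (0:ℝ)))
    (hSbound : ∀ s : ℝ, 0 ≤ s → ‖S s‖ ≤ M * Real.exp (-μ * s))
    (hScontr : ∀ s : ℝ, 0 ≤ s → ∀ x : H, ‖S s x‖ ≤ ‖x‖)
    (t : ℕ → ℝ) (ht0 : t 0 = 0) (htmono : StrictMono t)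
    (htlim : Filter.Tendsto t Filter.atTop Filter.atTop)
    (τ : ℝ) (hτ : 0 < τ)
    (B : ℕ → H →L[ℝ] H)
    (hT2nτ : ∀ n : ℕ, τ ≤ t (2*n+1) - t (2*n))
    (b : ℝ → ℝ)
    (hbneg : ∀ s : ℝ, s < 0 → b s = 0)
    (hbeven : ∀ n : ℕ, ∀ s ∈ Set.Ico (t (2*n)) (t (2*n+1)), b s = 0)
    (hbodd : ∀ n : ℕ, ∀ s ∈ Set.Ico (t (2*n+1)) (t (2*n+2)), b s = ‖B n‖)
    (U : ℝ → H) (U₀ : H) (V : ℝ → H)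
    (hUcont : ContinuousOn U (Set.Ici (0:ℝ))) (hU0 : U 0 = U₀)
    (hUeven : ∀ n : ℕ, ∀ s ∈ Set.Icc (t (2*n)) (t (2*n+1)),
      U s = S (s - t (2*n)) (U (t (2*n))))
    (hUodd : ∀ n : ℕ, ∀ s ∈ Set.Ioo (t (2*n+1)) (t (2*n+2)),
      HasDerivAt U (V s + B n (U (s - τ))) s)
    (hdiss : ∀ n : ℕ, ∀ s ∈ Set.Ioo (t (2*n+1)) (t (2*n+2)),
      (inner ℝ (U s) (V s) : ℝ) ≤ 0)
    :
    ∀ n : ℕ, ∀ r ∈ Set.Ioo (t (2*n+1)) (t (2*n+2)), (∀ k : ℕ, r ≠ t k - τ) →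
      ∃ d : ℝ,
        HasDerivAt
          (fun y => (1/2) * ‖U y‖^2 + (1/2) * ∫ s in (y - τ)..y, b (s + τ) * ‖U s‖^2)
          d r ∧
        d ≤ ‖B n‖ * ‖U r‖^2 := by
  classical
  intro n r hr hrτ
  -- piecewise values of b
  set c : ℕ → ℝ := fun k => if k % 2 = 1 then ‖B (k / 2)‖ else 0 with hc
  have hpiece : ∀ k : ℕ, ∀ s ∈ Set.Ico (t k) (t (k+1)), b s = c k := by
    intro k s hs
    rcases Nat.even_or_odd k with hk | hk
    · obtain ⟨m, hm⟩ := hk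
      have e1 : k = 2 * m := by omega
      subst e1
      rw [hc]; simp only []
      rw [if_neg (by omega)]
      exact hbeven m s hs
    · obtain ⟨m, hm⟩ := hk
      subst hm
      rw [hc]; simp only []
      rw [if_pos (by omega)]
      have e2 : (2*m+1) / 2 = m := by omega
      rw [e2]
      have e3 : 2*m+1+1 = 2*m+2 := by omega
      rw [e3] at hs
      exact hbodd m s hs
  -- covering
  have hcover : ∀ s : ℝ, 0 ≤ s → ∃ k, s ∈ Set.Ico (t k) (t (k+1)) := by
    intro s hs
    have hex : ∃ K, s < t K := (htlim.eventually (Filter.eventually_gt_atTop s)).exists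
    have hK : s < t (Nat.find hex) := Nat.find_spec hex
    have hK0 : Nat.find hex ≠ 0 := by
      intro h
      rw [h, ht0] at hK
      linarith
    obtain ⟨m, hm⟩ : ∃ m, Nat.find hex = m + 1 := ⟨Nat.find hex - 1, by omega⟩
    have hmlt : ¬ s < t m := Nat.find_min hex (by omega)
    exact ⟨m, ⟨not_lt.mp hmlt, hm ▸ hK⟩⟩
  -- measurability of b
  have hbmeas : Measurable b := by
    intro A hA
    have hpre : b ⁻¹' A =
        (Set.Iio (0:ℝ) ∩ {_s : ℝ | (0:ℝ) ∈ A}) ∪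
        ⋃ k : ℕ, (Set.Ico (t k) (t (k+1)) ∩ {_s : ℝ | c k ∈ A}) := by
      ext s
      simp only [Set.mem_preimage, Set.mem_union, Set.mem_iUnion, Set.mem_inter_iff,
        Set.mem_Iio, Set.mem_setOf_eq, Set.mem_Ico]
      constructor
      · intro hb
        rcases lt_or_ge s 0 with h | h
        · left; exact ⟨h, by rwa [hbneg s h] at hb⟩
        · right
          obtain ⟨k, hk⟩ := hcover s h
          exact ⟨k, ⟨hk.1, hk.2⟩, by rwa [hpiece k s hk] at hb⟩
      · intro h
        rcases h with ⟨h1, h2⟩ | ⟨k, hk1, hk2⟩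
        · rwa [hbneg s h1]
        · rwa [hpiece k s hk1]
    rw [hpre]
    exact (measurableSet_Iio.inter (MeasurableSet.const _)).union
      (MeasurableSet.iUnion fun k => measurableSet_Ico.inter (MeasurableSet.const _))
  -- basic positivity facts
  have htnonneg : ∀ k, 0 ≤ t k := fun k => ht0 ▸ htmono.monotone (Nat.zero_le k)
  have hτt1 : τ ≤ t 1 := by
    have h := hT2nτ 0
    norm_num [ht0] at h
    exact h
  have ht1le : t 1 ≤ t (2*n+1) := htmono.monotone (by omega)
  have hr1 : t (2*n+1) < r := hr.1
  have hr2 : r < t (2*n+2) := hr.2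
  have hrτpos : 0 < r - τ := by linarith
  have hrpos : 0 < r := by linarith
  -- global bound for b on (-∞, r+τ]
  obtain ⟨K, hK⟩ : ∃ K, r + τ < t K :=
    (htlim.eventually (Filter.eventually_gt_atTop (r+τ))).exists
  set Cb : ℝ := ∑ k ∈ Finset.range K, |c k| with hCbdef
  have hCb : ∀ s : ℝ, s ≤ r + τ → |b s| ≤ Cb := by
    intro s hs
    rcases lt_or_ge s 0 with h | h
    · rw [hbneg s h]
      simpa using Finset.sum_nonneg (fun i _ => abs_nonneg (c i))
    · obtain ⟨k, hk⟩ := hcover s h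
      have hkK : k < K := htmono.lt_iff_lt.mp (lt_of_le_of_lt hk.1 (lt_of_le_of_lt hs hK))
      rw [hpiece k s hk]
      exact Finset.single_le_sum (fun i _ => abs_nonneg (c i)) (Finset.mem_range.mpr hkK)
  have hCb0 : 0 ≤ Cb := le_trans (abs_nonneg _) (hCb 0 (by linarith))
  -- piece containing r+τ
  obtain ⟨k₀, hk₀⟩ := hcover (r + τ) (by linarith)
  have hk₀ne : t k₀ ≠ r + τ := by
    intro h
    exact hrτ k₀ (by linarith)
  have hk₀lt : t k₀ < r + τ := lt_of_le_of_ne hk₀.1 hk₀ne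
  -- b (r+τ) ≤ ‖B n‖
  have hbrt : b (r + τ) ≤ ‖B n‖ := by
    rcases lt_or_ge (r + τ) (t (2*n+2)) with h | h
    · rw [hbodd n (r+τ) ⟨by linarith, h⟩]
    · have e1 : 2*(n+1) = 2*n+2 := by ring
      have e2 : 2*(n+1)+1 = 2*n+3 := by ring
      have h3 := hT2nτ (n+1)
      rw [e2, e1] at h3
      have hlt : r + τ < t (2*n+3) := by linarith
      have := hbeven (n+1) (r+τ) (by rw [e2, e1]; exact ⟨h, hlt⟩)
      rw [this]
      exact norm_nonneg _
  -- epsilon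
  obtain ⟨ε, hεpos, hε1, hε2, hε3, hε4, hε5⟩ :
      ∃ ε : ℝ, 0 < ε ∧ ε ≤ t (2*n+2) - r ∧ ε ≤ r - t (2*n+1) ∧
        ε ≤ t (k₀+1) - (r+τ) ∧ ε ≤ (r+τ) - t k₀ ∧ ε ≤ r - τ := by
    refine ⟨min (min (t (2*n+2) - r) (r - t (2*n+1)))
      (min (min (t (k₀+1) - (r+τ)) ((r+τ) - t k₀)) (r - τ)), ?_, ?_, ?_, ?_, ?_, ?_⟩
    · simp only [lt_min_iff]
      refine ⟨⟨?_, ?_⟩, ⟨?_, ?_⟩, ?_⟩ <;> linarith [hk₀.2]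
    · exact (min_le_left _ _).trans (min_le_left _ _)
    · exact (min_le_left _ _).trans (min_le_right _ _)
    · exact (min_le_right _ _).trans ((min_le_left _ _).trans (min_le_left _ _))
    · exact (min_le_right _ _).trans ((min_le_left _ _).trans (min_le_right _ _))
    · exact (min_le_right _ _).trans (min_le_right _ _)
  -- integrand
  set g : ℝ → ℝ := fun s => b (s + τ) * ‖U s‖ ^ 2 with hg
  -- measurability of g near positive reals
  have hUC : ContinuousOn (fun s => ‖U s‖^2) (Set.Ioi (0:ℝ)) :=
    ((hUcont.mono Set.Ioi_subset_Ici_self).norm).pow 2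
  have hgAESM : AEStronglyMeasurable g (volume.restrict (Set.Ioi (0:ℝ))) :=
    ((hbmeas.comp (measurable_add_const τ)).aestronglyMeasurable).mul
      (hUC.aestronglyMeasurable measurableSet_Ioi)
  have hmeasAt_r : StronglyMeasurableAtFilter g (nhds r) volume :=
    ⟨Set.Ioi 0, Ioi_mem_nhds hrpos, hgAESM⟩
  have hmeasAt_rτ : StronglyMeasurableAtFilter g (nhds (r - τ)) volume :=
    ⟨Set.Ioi 0, Ioi_mem_nhds hrτpos, hgAESM⟩
  -- continuity of g at r
  have hgcont_r : ContinuousAt g r := by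
    have hUc : ContinuousAt U r := (hUodd n r hr).continuousAt
    have hcA : ContinuousAt (fun s => c k₀ * ‖U s‖^2) r :=
      continuousAt_const.mul ((hUc.norm).pow 2)
    apply hcA.congr
    filter_upwards [Ioo_mem_nhds (show r - ε < r by linarith) (show r < r + ε by linarith)]
      with s hs
    rw [hg]
    show c k₀ * ‖U s‖^2 = b (s + τ) * ‖U s‖^2
    rw [hpiece k₀ (s+τ) ⟨by cases hs; linarith, by cases hs; linarith⟩]
  -- continuity of g at r - τ
  have hgcont_rτ : ContinuousAt g (r - τ) := by
    have hUc : ContinuousAt U (r - τ) := hUcont.continuousAt (Ici_mem_nhds hrτpos)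
    have hcA : ContinuousAt (fun s => ‖B n‖ * ‖U s‖^2) (r - τ) :=
      continuousAt_const.mul ((hUc.norm).pow 2)
    apply hcA.congr
    filter_upwards [Ioo_mem_nhds (show r - τ - ε < r - τ by linarith)
      (show r - τ < r - τ + ε by linarith)] with s hs
    rw [hg]
    show ‖B n‖ * ‖U s‖^2 = b (s + τ) * ‖U s‖^2
    rw [hbodd n (s+τ) ⟨by cases hs; linarith, by cases hs; linarith⟩]
  -- middle interval integrability
  obtain ⟨CU, hCU⟩ : ∃ C, ∀ x ∈ Set.Icc (r - τ) r, ‖U x‖ ≤ C :=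
    isCompact_Icc.exists_bound_of_continuousOn
      (hUcont.mono (fun x hx => le_trans hrτpos.le hx.1))
  have hCU0 : 0 ≤ CU := le_trans (norm_nonneg _) (hCU r ⟨by linarith, le_refl r⟩)
  have hint_mid : IntervalIntegrable g volume (r - τ) r := by
    rw [intervalIntegrable_iff]
    have huIoc : Set.uIoc (r - τ) r = Set.Ioc (r - τ) r := Set.uIoc_of_le (by linarith)
    have hsub : Set.uIoc (r - τ) r ⊆ Set.Ioi (0:ℝ) := by
      rw [huIoc]; intro x hx; exact lt_trans hrτpos hx.1
    apply MeasureTheory.Integrable.mono' (g := fun _ => Cb * CU^2)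
    · exact MeasureTheory.integrableOn_const (by rw [huIoc]; exact measure_Ioc_lt_top.ne) enorm_ne_top
    · exact hgAESM.mono_set hsub
    · rw [MeasureTheory.ae_restrict_iff' measurableSet_uIoc]
      refine MeasureTheory.ae_of_all _ (fun x hx => ?_)
      rw [huIoc] at hx
      have hU' : ‖U x‖ ≤ CU := hCU x ⟨le_of_lt hx.1, hx.2⟩
      rw [hg]
      show ‖b (x + τ) * ‖U x‖^2‖ ≤ Cb * CU^2
      rw [Real.norm_eq_abs, abs_mul, abs_of_nonneg (by positivity : (0:ℝ) ≤ ‖U x‖^2)]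
      exact mul_le_mul (hCb _ (by linarith [hx.2])) (by nlinarith [norm_nonneg (U x)])
        (by positivity) hCb0
  -- continuity of g near r and near r - τ
  have hIoosub : Set.Ioo (r-ε) (r+ε) ⊆ Set.Ioo (t (2*n+1)) (t (2*n+2)) := by
    intro s hs
    exact ⟨by cases hs; linarith, by cases hs; linarith⟩
  have hcont_near_r : ContinuousOn g (Set.Ioo (r-ε) (r+ε)) := by
    have hcont0 : ContinuousOn (fun s => c k₀ * ‖U s‖^2) (Set.Ioo (r-ε) (r+ε)) :=
      continuousOn_const.mul (continuousOn_of_forall_continuousAt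
        (fun s hs => (((hUodd n s (hIoosub hs)).continuousAt.norm).pow 2)))
    refine hcont0.congr (fun s hs => ?_)
    rw [hg]
    show b (s + τ) * ‖U s‖^2 = c k₀ * ‖U s‖^2
    rw [hpiece k₀ (s+τ) ⟨by cases hs; linarith, by cases hs; linarith⟩]
  have hcont_near_rτ : ContinuousOn g (Set.Ioo (r-τ-ε) (r-τ+ε)) := by
    have hcont0 : ContinuousOn (fun s => ‖B n‖ * ‖U s‖^2) (Set.Ioo (r-τ-ε) (r-τ+ε)) := by
      refine continuousOn_const.mul (continuousOn_of_forall_continuousAt (fun s hs => ?_))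
      have hs0 : 0 < s := by cases hs; linarith
      exact ((hUcont.continuousAt (Ici_mem_nhds hs0)).norm).pow 2
    refine hcont0.congr (fun s hs => ?_)
    rw [hg]
    show b (s + τ) * ‖U s‖^2 = ‖B n‖ * ‖U s‖^2
    rw [hbodd n (s+τ) ⟨by cases hs; linarith, by cases hs; linarith⟩]
  -- trivial integrabilities at a point
  have hIIrr : IntervalIntegrable g volume r r := by
    rw [intervalIntegrable_iff]; simp
  have hIIττ : IntervalIntegrable g volume (r-τ) (r-τ) := by
    rw [intervalIntegrable_iff]; simp
  -- derivative pieces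
  have hΦ : HasDerivAt (fun y => ∫ s in r..y, g s) (g r) r :=
    intervalIntegral.integral_hasDerivAt_right hIIrr hmeasAt_r hgcont_r
  have hΨ0 : HasDerivAt (fun z => ∫ s in (r-τ)..z, g s) (g (r-τ)) (r-τ) :=
    intervalIntegral.integral_hasDerivAt_right hIIττ hmeasAt_rτ hgcont_rτ
  have hΨ : HasDerivAt (fun y => ∫ s in (r-τ)..(y-τ), g s) (g (r-τ)) r := by
    have := HasDerivAt.comp r hΨ0 ((hasDerivAt_id r).sub_const τ)
    simpa [Function.comp_def] using this
  have hDU : HasDerivAt (fun y => ‖U y‖^2)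
      (2 * (inner ℝ (U r) (V r + B n (U (r - τ))) : ℝ)) r := by
    have h := hUodd n r hr
    have h3 := HasDerivAt.inner ℝ h h
    simp only [real_inner_self_eq_norm_sq] at h3
    refine h3.congr_deriv ?_
    rw [real_inner_comm (V r + B n (U (r - τ))) (U r)]
    ring
  set d : ℝ := (inner ℝ (U r) (V r + B n (U (r - τ))) : ℝ) + (1/2) * g r - (1/2) * g (r-τ)
    with hd
  refine ⟨d, ?_, ?_⟩
  · -- HasDerivAt
    have hGsum := (hDU.const_mul ((1:ℝ)/2)).add
      (((((hasDerivAt_const r (∫ s in (r-τ)..r, g s)).sub hΨ).add hΦ)).const_mul ((1:ℝ)/2))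
    have hG : HasDerivAt (fun y => (1/2) * ‖U y‖^2 +
        (1/2) * ((∫ s in (r-τ)..r, g s) - (∫ s in (r-τ)..(y-τ), g s) + ∫ s in r..y, g s))
        d r := by
      refine hGsum.congr_deriv ?_
      rw [hd]; ring
    refine hG.congr_of_eventuallyEq ?_
    filter_upwards [Ioo_mem_nhds (show r - ε < r by linarith) (show r < r + ε by linarith)]
      with y hy
    have h1 : IntervalIntegrable g volume (y-τ) (r-τ) := by
      refine (hcont_near_rτ.mono (Set.ordConnected_Ioo.uIcc_subset ?_ ?_)).intervalIntegrable
      · exact ⟨by cases hy; linarith, by cases hy; linarith⟩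
      · exact ⟨by linarith, by linarith⟩
    have h3 : IntervalIntegrable g volume r y := by
      refine (hcont_near_r.mono (Set.ordConnected_Ioo.uIcc_subset ?_ ?_)).intervalIntegrable
      · exact ⟨by linarith, by linarith⟩
      · exact hy
    have e1 := intervalIntegral.integral_add_adjacent_intervals h1 hint_mid
    have e2 := intervalIntegral.integral_add_adjacent_intervals (h1.trans hint_mid) h3
    have e3 : ∫ s in (y-τ)..(r-τ), g s = - ∫ s in (r-τ)..(y-τ), g s :=
      intervalIntegral.integral_symm _ _
    have : (∫ s in (y-τ)..y, g s) =
        (∫ s in (r-τ)..r, g s) - (∫ s in (r-τ)..(y-τ), g s) + ∫ s in r..y, g s := by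
      linarith
    rw [this]
  · -- the bound
    have hgrτ : g (r - τ) = ‖B n‖ * ‖U (r-τ)‖^2 := by
      rw [hg]
      show b (r - τ + τ) * ‖U (r-τ)‖^2 = _
      rw [sub_add_cancel, hbodd n r ⟨le_of_lt hr.1, hr.2⟩]
    have hgr : g r = b (r + τ) * ‖U r‖^2 := by rw [hg]
    have h1 : (inner ℝ (U r) (V r) : ℝ) ≤ 0 := hdiss n r hr
    have h2 : (inner ℝ (U r) (B n (U (r-τ))) : ℝ) ≤ ‖U r‖ * (‖B n‖ * ‖U (r-τ)‖) :=
      (real_inner_le_norm _ _).trans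
        (mul_le_mul_of_nonneg_left ((B n).le_opNorm _) (norm_nonneg _))
    have hbx : b (r + τ) * ‖U r‖^2 ≤ ‖B n‖ * ‖U r‖^2 :=
      mul_le_mul_of_nonneg_right hbrt (sq_nonneg _)
    rw [hd, inner_add_right, hgrτ, hgr]
    nlinarith [mul_nonneg (norm_nonneg (B n)) (sq_nonneg (‖U r‖ - ‖U (r-τ)‖))]
end

section
/- Assume T_{2n} ≥ τ and T_{2n} > T* for all n ∈ ℕ, and set c_n := M² e^{−2μ T_{2n}}. If the partial sums ∑_{n=0}^{N} ln[ e^{2 B_{2n+1} T_{2n+1}} (c_n + T_{2n+1} B_{2n+1}) ] tend to −∞ as N → ∞, then every trajectory U of the on–off delay system is asymptotically stable: ‖U(t)‖ → 0 as t → +∞. -/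
open Set Filter Topology

set_option maxHeartbeats 2000000

lemma cross_aux (f χ : ℝ → ℝ) (b d : ℝ)
    (hf : ContinuousOn f (Icc b d)) (hχ : ContinuousOn χ (Icc b d))
    (hfb : f b < χ b)
    (hder : ∀ x ∈ Ioo b d, (∀ r ∈ Ico b x, f r ≤ χ r) → f x = χ x →
      ∃ f' χ', HasDerivAt f f' x ∧ HasDerivAt χ χ' x ∧ f' < χ') :
    ∀ x ∈ Icc b d, f x ≤ χ x := by
  by_contra hcon
  push_neg at hcon
  obtain ⟨x₀, hx₀, hx₀'⟩ := hcon
  set Bad : Set ℝ := {x | x ∈ Icc b d ∧ χ x < f x} with hBadDef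
  have hne : Bad.Nonempty := ⟨x₀, hx₀, hx₀'⟩
  have hbdd : BddBelow Bad := ⟨b, fun x hx => hx.1.1⟩
  set c := sInf Bad with hc
  have hcb' : b ≤ c := le_csInf hne fun x hx => hx.1.1
  have hcd' : c ≤ d := le_trans (csInf_le hbdd ⟨hx₀, hx₀'⟩) hx₀.2
  have hcmem : c ∈ Icc b d := ⟨hcb', hcd'⟩
  have happrox : ∀ δ : ℝ, 0 < δ → ∃ x ∈ Bad, x < c + δ := by
    intro δ hδ
    exact (csInf_lt_iff hbdd hne).mp (by linarith)
  have hpast : ∀ r ∈ Ico b c, f r ≤ χ r := by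
    intro r hr
    by_contra h
    have hrBad : r ∈ Bad := ⟨⟨hr.1, le_trans (le_of_lt hr.2) hcd'⟩, lt_of_not_ge h⟩
    exact absurd (csInf_le hbdd hrBad) (not_le.mpr hr.2)
  have hge : χ c ≤ f c := by
    by_contra h
    push_neg at h
    have hcont : ContinuousWithinAt (fun x => f x - χ x) (Icc b d) c :=
      (hf c hcmem).sub (hχ c hcmem)
    have hev : ∀ᶠ x in 𝓝[Icc b d] c, f x - χ x < 0 :=
      Filter.Tendsto.eventually_lt hcont tendsto_const_nhds (by simp; linarith)
    rw [eventually_nhdsWithin_iff, Metric.eventually_nhds_iff] at hev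
    obtain ⟨δ, hδ, hball⟩ := hev
    obtain ⟨x, hxBad, hxlt⟩ := happrox δ hδ
    have hcx : c ≤ x := csInf_le hbdd hxBad
    have : f x - χ x < 0 := hball (by rw [Real.dist_eq, abs_lt]; constructor <;> linarith) hxBad.1
    linarith [hxBad.2]
  have hcb : b < c := by
    rcases eq_or_lt_of_le hcb' with h | h
    · exfalso; rw [← h] at hge; linarith
    · exact h
  have hle : f c ≤ χ c := by
    by_contra h
    push_neg at h
    have hcont : ContinuousWithinAt (fun x => f x - χ x) (Icc b d) c :=
      (hf c hcmem).sub (hχ c hcmem)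
    have hev : ∀ᶠ x in 𝓝[Icc b d] c, (0:ℝ) < f x - χ x :=
      Filter.Tendsto.eventually_lt tendsto_const_nhds hcont (by simp; linarith)
    rw [eventually_nhdsWithin_iff, Metric.eventually_nhds_iff] at hev
    obtain ⟨δ, hδ, hball⟩ := hev
    set r := max b (c - δ/2) with hr
    have hrb : b ≤ r := le_max_left _ _
    have hrc : r < c := max_lt hcb (by linarith)
    have hrd : r ≤ d := le_trans (le_of_lt hrc) hcd'
    have hrnear : c - r ≤ δ/2 := by
      have : c - δ/2 ≤ r := le_max_right _ _
      linarith
    have : (0:ℝ) < f r - χ r :=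
      hball (by rw [Real.dist_eq, abs_lt]; constructor <;> linarith) ⟨hrb, hrd⟩
    linarith [hpast r ⟨hrb, hrc⟩]
  have heq : f c = χ c := le_antisymm hle hge
  have hcd : c < d := by
    rcases lt_or_eq_of_le hcd' with h | h
    · exact h
    · exfalso
      have hx₀c : x₀ = c := le_antisymm (h ▸ hx₀.2) (csInf_le hbdd ⟨hx₀, hx₀'⟩)
      rw [hx₀c] at hx₀'; linarith
  obtain ⟨f', χ', hf', hχ', hlt⟩ := hder c ⟨hcb, hcd⟩ hpast heq
  have hd : HasDerivAt (fun x => f x - χ x) (f' - χ') c := hf'.sub hχ'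
  rw [hasDerivAt_iff_tendsto_slope] at hd
  have hev : ∀ᶠ x in 𝓝[≠] c, slope (fun x => f x - χ x) c x < 0 :=
    Filter.Tendsto.eventually_lt hd tendsto_const_nhds (by linarith)
  have hev' : ∀ᶠ x in 𝓝[>] c, slope (fun x => f x - χ x) c x < 0 :=
    hev.filter_mono (nhdsWithin_mono c fun x hx => ne_of_gt hx)
  rw [eventually_nhdsWithin_iff, Metric.eventually_nhds_iff] at hev'
  obtain ⟨δ, hδ, hball⟩ := hev'
  obtain ⟨x, hxBad, hxlt⟩ := happrox δ hδ
  have hcx : c ≤ x := csInf_le hbdd hxBad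
  have hxc : c < x := by
    rcases eq_or_lt_of_le hcx with hh | hh
    · exfalso; rw [← hh] at hxBad; linarith [hxBad.2]
    · exact hh
  have hslope : slope (fun x => f x - χ x) c x < 0 :=
    hball (by rw [Real.dist_eq, abs_lt]; constructor <;> linarith) hxc
  rw [slope_def_field] at hslope
  have hnum : 0 < f x - χ x - (f c - χ c) := by
    have := hxBad.2; rw [heq]; simp; linarith
  have : 0 < (f x - χ x - (f c - χ c)) / (x - c) := div_pos hnum (by linarith)
  linarith

theorem stmt_3
    {H : Type*} [NormedAddCommGroup H] [InnerProductSpace ℝ H]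
    (S : ℝ → H →L[ℝ] H) (M μ : ℝ)
    (hM : 1 ≤ M) (hμ : 0 < μ)
    (hS0 : S 0 = ContinuousLinearMap.id ℝ H)
    (hSadd : ∀ s u : ℝ, 0 ≤ s → 0 ≤ u → S (s + u) = (S s).comp (S u))
    (hScont : ∀ x : H, ContinuousOn (fun s => S s x) (Set.Ici (0:ℝ)))
    (hSbound : ∀ s : ℝ, 0 ≤ s → ‖S s‖ ≤ M * Real.exp (-μ * s))
    (hScontr : ∀ s : ℝ, 0 ≤ s → ∀ x : H, ‖S s x‖ ≤ ‖x‖)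
    (t : ℕ → ℝ) (ht0 : t 0 = 0) (htmono : StrictMono t)
    (htlim : Filter.Tendsto t Filter.atTop Filter.atTop)
    (τ : ℝ) (hτ : 0 < τ)
    (B : ℕ → H →L[ℝ] H)
    (hT2nτ : ∀ n : ℕ, τ ≤ t (2*n+1) - t (2*n))
    (hT2nstar : ∀ n : ℕ, Real.log M / μ < t (2*n+1) - t (2*n))
    (hdiv : Filter.Tendsto
      (fun N => ∑ n ∈ Finset.range (N+1),
        Real.log (Real.exp (2*‖B n‖*(t (2*n+2) - t (2*n+1))) *
          (M^2 * Real.exp (-2*μ*(t (2*n+1) - t (2*n))) + (t (2*n+2) - t (2*n+1))*‖B n‖)))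
      Filter.atTop Filter.atBot)
    (U : ℝ → H) (U₀ : H) (V : ℝ → H)
    (hUcont : ContinuousOn U (Set.Ici (0:ℝ))) (hU0 : U 0 = U₀)
    (hUeven : ∀ n : ℕ, ∀ s ∈ Set.Icc (t (2*n)) (t (2*n+1)),
      U s = S (s - t (2*n)) (U (t (2*n))))
    (hUodd : ∀ n : ℕ, ∀ s ∈ Set.Ioo (t (2*n+1)) (t (2*n+2)),
      HasDerivAt U (V s + B n (U (s - τ))) s)
    (hdiss : ∀ n : ℕ, ∀ s ∈ Set.Ioo (t (2*n+1)) (t (2*n+2)),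
      (inner ℝ (U s) (V s) : ℝ) ≤ 0)
    :
    Filter.Tendsto (fun r => ‖U r‖) Filter.atTop (nhds 0) := by
  have htnonneg : ∀ k, 0 ≤ t k := by
    intro k
    have := htmono.monotone (Nat.zero_le k)
    rw [ht0] at this; exact this
  set anx : ℕ → ℝ := fun n => Real.exp (2*‖B n‖*(t (2*n+2) - t (2*n+1))) *
      (M^2 * Real.exp (-2*μ*(t (2*n+1) - t (2*n))) + (t (2*n+2) - t (2*n+1))*‖B n‖) with hanx
  have hTpos : ∀ n : ℕ, 0 < t (2*n+2) - t (2*n+1) := by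
    intro n; have := htmono (show 2*n+1 < 2*n+2 by omega); linarith
  have hanxpos : ∀ n, 0 < anx n := by
    intro n
    have h1 : (0:ℝ) < M^2 * Real.exp (-2*μ*(t (2*n+1) - t (2*n))) := by positivity
    have h2 : (0:ℝ) ≤ (t (2*n+2) - t (2*n+1))*‖B n‖ :=
      mul_nonneg (hTpos n).le (norm_nonneg _)
    have : (0:ℝ) < Real.exp (2*‖B n‖*(t (2*n+2) - t (2*n+1))) := Real.exp_pos _
    rw [hanx]; positivity
  -- core per-interval estimate
  have hstep : ∀ n : ℕ,
      (∀ s ∈ Icc (t (2*n)) (t (2*n+2)), ‖U s‖^2 ≤ ‖U (t (2*n))‖^2 * (1 + anx n)) ∧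
      ‖U (t (2*n+2))‖^2 ≤ ‖U (t (2*n))‖^2 * anx n := by
    intro n
    set a := t (2*n) with hadef
    set b := t (2*n+1) with hbdef
    set d := t (2*n+2) with hddef
    set Bn := ‖B n‖ with hBndef
    have hBn : (0:ℝ) ≤ Bn := norm_nonneg _
    have ha0 : (0:ℝ) ≤ a := htnonneg _
    have hab : a < b := htmono (by omega)
    have hbd : b < d := htmono (by omega)
    have hb0 : (0:ℝ) ≤ b := le_trans ha0 hab.le
    set N2 := ‖U a‖^2 with hN2def
    have hN2 : (0:ℝ) ≤ N2 := by positivity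
    set cc := M^2 * Real.exp (-2*μ*(b-a)) with hccdef
    have hcc : (0:ℝ) < cc := by positivity
    have haT : τ ≤ b - a := hT2nτ n
    have hanxn : anx n = Real.exp (2*Bn*(d-b)) * (cc + (d-b)*Bn) := rfl
    have hUeven' : ∀ s ∈ Icc a b, U s = S (s - a) (U a) := hUeven n
    have hUodd' : ∀ s ∈ Ioo b d, HasDerivAt U (V s + B n (U (s - τ))) s := hUodd n
    have hdiss' : ∀ s ∈ Ioo b d, (inner ℝ (U s) (V s) : ℝ) ≤ 0 := hdiss n
    have hccval : cc = M^2 * Real.exp (-2*μ*(b-a)) := hccdef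
    have hN2val : N2 = ‖U a‖^2 := hN2def
    have hBnval : Bn = ‖B n‖ := hBndef
    clear_value a b d Bn N2 cc
    clear hadef hbdef hddef hBndef hN2def hccdef
    have hfcont : ContinuousOn (fun s => ‖U s‖^2) (Ici (0:ℝ)) := (hUcont.norm).pow 2
    have heven : ∀ s ∈ Icc a b, ‖U s‖^2 ≤ N2 := by
      intro s hs
      rw [hUeven' s hs, hN2val]
      exact pow_le_pow_left₀ (norm_nonneg _) (hScontr (s - a) (by linarith [hs.1]) (U a)) 2
    have hUb2 : ‖U b‖^2 ≤ cc * N2 := by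
      have he : U b = S (b - a) (U a) := hUeven' b ⟨hab.le, le_refl b⟩
      have h1 : ‖U b‖ ≤ (M * Real.exp (-μ * (b - a))) * ‖U a‖ := by
        rw [he]
        calc ‖S (b-a) (U a)‖ ≤ ‖S (b-a)‖ * ‖U a‖ := (S (b-a)).le_opNorm _
          _ ≤ (M * Real.exp (-μ * (b - a))) * ‖U a‖ :=
            mul_le_mul_of_nonneg_right (hSbound (b-a) (by linarith)) (norm_nonneg _)
      have h2 : ‖U b‖^2 ≤ ((M * Real.exp (-μ * (b - a))) * ‖U a‖)^2 :=
        pow_le_pow_left₀ (norm_nonneg _) h1 2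
      have hexp2 : (Real.exp (-μ*(b-a)))^2 = Real.exp (-2*μ*(b-a)) := by
        rw [sq, ← Real.exp_add]; ring_nf
      have h3 : ((M * Real.exp (-μ * (b - a))) * ‖U a‖)^2 = cc * N2 := by
        rw [hccval, hN2val, mul_pow, mul_pow, hexp2]
      linarith [h2, h3.le, h3.ge]
    have hmainε : ∀ ε : ℝ, 0 < ε → ∀ s ∈ Icc b d,
        ‖U s‖^2 ≤ N2 * (Real.exp (2*Bn*(s-b)) * (cc + Bn*(s-b))) + ε * Real.exp ((2*Bn+2)*(s-b)) := by
      intro ε hε s hs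
      refine cross_aux (fun s => ‖U s‖^2)
        (fun s => N2 * (Real.exp (2*Bn*(s-b)) * (cc + Bn*(s-b))) + ε * Real.exp ((2*Bn+2)*(s-b)))
        b d ?_ ?_ ?_ ?_ s hs
      · exact hfcont.mono (fun x hx => le_trans hb0 hx.1)
      · apply Continuous.continuousOn; fun_prop
      · simp only [sub_self, mul_zero, Real.exp_zero, mul_one, add_zero]
        nlinarith [hUb2, hε]
      · intro x hx hpast heqx
        have hbx : b < x := hx.1
        have hxd : x < d := hx.2
        have hθ : (0:ℝ) < x - b := by linarith
        set W := V x + B n (U (x - τ)) with hWdef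
        have hU' : HasDerivAt U W x := hUodd' x hx
        have hfd : HasDerivAt (fun s => ‖U s‖^2) ((inner ℝ (U x) W : ℝ) + (inner ℝ W (U x) : ℝ)) x := by
          have h1 := HasDerivAt.inner ℝ hU' hU'
          simpa only [real_inner_self_eq_norm_sq] using h1
        have hlin1 : HasDerivAt (fun s : ℝ => 2*Bn*(s-b)) (2*Bn) x := by
          simpa using ((hasDerivAt_id x).sub_const b).const_mul (2*Bn)
        have he1 : HasDerivAt (fun s : ℝ => Real.exp (2*Bn*(s-b)))
            (Real.exp (2*Bn*(x-b)) * (2*Bn)) x := hlin1.exp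
        have hlin2 : HasDerivAt (fun s : ℝ => cc + Bn*(s-b)) Bn x := by
          simpa using (((hasDerivAt_id x).sub_const b).const_mul Bn).const_add cc
        have hprod := he1.mul hlin2
        have hφd := hprod.const_mul N2
        have hlin3 : HasDerivAt (fun s : ℝ => (2*Bn+2)*(s-b)) (2*Bn+2) x := by
          simpa using ((hasDerivAt_id x).sub_const b).const_mul (2*Bn+2)
        have he2 : HasDerivAt (fun s : ℝ => ε * Real.exp ((2*Bn+2)*(s-b)))
            (ε * (Real.exp ((2*Bn+2)*(x-b)) * (2*Bn+2))) x := (hlin3.exp).const_mul ε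
        have hχd := hφd.add he2
        refine ⟨_, _, hfd, hχd, ?_⟩
        have heqx' : ‖U x‖^2 = N2 * (Real.exp (2*Bn*(x-b)) * (cc + Bn*(x-b)))
            + ε * Real.exp ((2*Bn+2)*(x-b)) := heqx
        have hmono : ∀ r s : ℝ, b ≤ r → r ≤ s →
            N2 * (Real.exp (2*Bn*(r-b)) * (cc + Bn*(r-b))) + ε * Real.exp ((2*Bn+2)*(r-b)) ≤
            N2 * (Real.exp (2*Bn*(s-b)) * (cc + Bn*(s-b))) + ε * Real.exp ((2*Bn+2)*(s-b)) := by
          intro r s hbr hrs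
          have h1 : Real.exp (2*Bn*(r-b)) ≤ Real.exp (2*Bn*(s-b)) :=
            Real.exp_le_exp.mpr (by nlinarith)
          have h2 : cc + Bn*(r-b) ≤ cc + Bn*(s-b) := by nlinarith
          have h3 : (0:ℝ) ≤ cc + Bn*(r-b) := by nlinarith
          have h4 : Real.exp (2*Bn*(r-b)) * (cc + Bn*(r-b)) ≤
              Real.exp (2*Bn*(s-b)) * (cc + Bn*(s-b)) :=
            mul_le_mul h1 h2 h3 (Real.exp_pos _).le
          have h5 : Real.exp ((2*Bn+2)*(r-b)) ≤ Real.exp ((2*Bn+2)*(s-b)) :=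
            Real.exp_le_exp.mpr (by nlinarith)
          have h6 := mul_le_mul_of_nonneg_left h4 hN2
          nlinarith
        have hdelay : ‖U (x - τ)‖^2 ≤ N2 + (N2 * (Real.exp (2*Bn*(x-b)) * (cc + Bn*(x-b)))
            + ε * Real.exp ((2*Bn+2)*(x-b))) := by
          have hax : a ≤ x - τ := by linarith
          have hχx0 : (0:ℝ) ≤ N2 * (Real.exp (2*Bn*(x-b)) * (cc + Bn*(x-b)))
              + ε * Real.exp ((2*Bn+2)*(x-b)) := by rw [← heqx']; positivity
          rcases le_or_gt (x - τ) b with hcase | hcase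
          · have := heven (x-τ) ⟨hax, hcase⟩
            linarith
          · have h1 : ‖U (x-τ)‖^2 ≤ N2 * (Real.exp (2*Bn*((x-τ)-b)) * (cc + Bn*((x-τ)-b)))
                + ε * Real.exp ((2*Bn+2)*((x-τ)-b)) := hpast (x-τ) ⟨hcase.le, by linarith⟩
            have h2 := hmono (x-τ) x hcase.le (by linarith)
            linarith
        have hd1 : (inner ℝ (U x) (V x) : ℝ) ≤ 0 := hdiss' x hx
        have hd2 : (inner ℝ (U x) (B n (U (x - τ))) : ℝ) ≤ ‖U x‖ * (Bn * ‖U (x-τ)‖) := by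
          calc (inner ℝ (U x) (B n (U (x - τ))) : ℝ) ≤ ‖U x‖ * ‖B n (U (x-τ))‖ :=
                real_inner_le_norm _ _
            _ ≤ ‖U x‖ * (Bn * ‖U (x-τ)‖) := by
                rw [hBnval]
                exact mul_le_mul_of_nonneg_left ((B n).le_opNorm _) (norm_nonneg _)
        have hinner : (inner ℝ (U x) W : ℝ) + (inner ℝ W (U x) : ℝ) =
            2 * ((inner ℝ (U x) (V x) : ℝ) + (inner ℝ (U x) (B n (U (x-τ))) : ℝ)) := by
          rw [hWdef, inner_add_right, inner_add_left,
            real_inner_comm (V x) (U x), real_inner_comm ((B n) (U (x - τ))) (U x)]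
          ring
        rw [hinner]
        have hE1 : (1:ℝ) ≤ Real.exp (2*Bn*(x-b)) := Real.one_le_exp (by positivity)
        have hE2 : (0:ℝ) < Real.exp ((2*Bn+2)*(x-b)) := Real.exp_pos _
        have step1 : 2 * ((inner ℝ (U x) (V x) : ℝ) + (inner ℝ (U x) (B n (U (x-τ))) : ℝ)) ≤
            2 * (‖U x‖ * (Bn * ‖U (x-τ)‖)) := by linarith
        have step2 : 2 * (‖U x‖ * (Bn * ‖U (x-τ)‖)) ≤ Bn * ‖U x‖^2 + Bn * ‖U (x-τ)‖^2 := by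
          nlinarith [mul_nonneg hBn (sq_nonneg (‖U x‖ - ‖U (x-τ)‖))]
        have step3 : Bn * ‖U x‖^2 = Bn * (N2 * (Real.exp (2*Bn*(x-b)) * (cc + Bn*(x-b)))
            + ε * Real.exp ((2*Bn+2)*(x-b))) := by rw [heqx']
        have step4 : Bn * ‖U (x-τ)‖^2 ≤ Bn * (N2 + (N2 * (Real.exp (2*Bn*(x-b)) * (cc + Bn*(x-b)))
            + ε * Real.exp ((2*Bn+2)*(x-b)))) := mul_le_mul_of_nonneg_left hdelay hBn
        have step5 : Bn * (N2 * (Real.exp (2*Bn*(x-b)) * (cc + Bn*(x-b)))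
              + ε * Real.exp ((2*Bn+2)*(x-b)))
            + Bn * (N2 + (N2 * (Real.exp (2*Bn*(x-b)) * (cc + Bn*(x-b)))
              + ε * Real.exp ((2*Bn+2)*(x-b))))
            < N2 * (Real.exp (2*Bn*(x-b)) * (2*Bn) * (cc + Bn*(x-b))
              + Real.exp (2*Bn*(x-b)) * Bn)
            + ε * (Real.exp ((2*Bn+2)*(x-b)) * (2*Bn+2)) := by
          nlinarith [mul_nonneg (mul_nonneg hBn hN2)
              (by linarith : (0:ℝ) ≤ Real.exp (2*Bn*(x-b)) - 1),
            mul_pos hε hE2]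
        linarith
    have hmain : ∀ s ∈ Icc b d, ‖U s‖^2 ≤ N2 * (Real.exp (2*Bn*(s-b)) * (cc + Bn*(s-b))) := by
      intro s hs
      have hC : (0:ℝ) < Real.exp ((2*Bn+2)*(d-b)) := Real.exp_pos _
      refine le_of_forall_pos_le_add ?_
      intro ε' hε'
      have hεs := hmainε (ε' / Real.exp ((2*Bn+2)*(d-b))) (by positivity) s hs
      have hee : Real.exp ((2*Bn+2)*(s-b)) ≤ Real.exp ((2*Bn+2)*(d-b)) :=
        Real.exp_le_exp.mpr (by nlinarith [hs.2, hBn, hs.1])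
      have hkey : (ε' / Real.exp ((2*Bn+2)*(d-b))) * Real.exp ((2*Bn+2)*(s-b)) ≤ ε' := by
        rw [div_mul_eq_mul_div, div_le_iff₀ hC]
        exact mul_le_mul_of_nonneg_left hee (le_of_lt hε')
      linarith
    have hendpt : ∀ s ∈ Icc b d, ‖U s‖^2 ≤ N2 * anx n := by
      intro s hs
      have h1 := hmain s hs
      have e1 : Real.exp (2*Bn*(s-b)) ≤ Real.exp (2*Bn*(d-b)) :=
        Real.exp_le_exp.mpr (by nlinarith [hs.2])
      have e2 : cc + Bn*(s-b) ≤ cc + (d-b)*Bn := by nlinarith [hs.2]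
      have e3 : (0:ℝ) ≤ cc + Bn*(s-b) := by nlinarith [hs.1]
      have h2 : Real.exp (2*Bn*(s-b)) * (cc + Bn*(s-b)) ≤
          Real.exp (2*Bn*(d-b)) * (cc + (d-b)*Bn) :=
        mul_le_mul e1 e2 e3 (Real.exp_pos _).le
      rw [hanxn]
      calc ‖U s‖^2 ≤ N2 * (Real.exp (2*Bn*(s-b)) * (cc + Bn*(s-b))) := h1
        _ ≤ N2 * (Real.exp (2*Bn*(d-b)) * (cc + (d-b)*Bn)) :=
          mul_le_mul_of_nonneg_left h2 hN2
    constructor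
    · intro s hs
      rcases le_total s b with hsb | hbs
      · have := heven s ⟨hs.1, hsb⟩
        nlinarith [hanxpos n, hN2]
      · have h1 := hendpt s ⟨hbs, hs.2⟩
        nlinarith [hN2]
    · exact hendpt d ⟨hbd.le, le_refl d⟩
  -- product iteration
  set P : ℕ → ℝ := fun n => ∏ k ∈ Finset.range n, anx k with hP
  have hPpos : ∀ n, 0 < P n := fun n => Finset.prod_pos fun k _ => hanxpos k
  have hiter : ∀ n, ‖U (t (2*n))‖^2 ≤ ‖U₀‖^2 * P n := by
    intro n
    induction n with
    | zero => simp [hP, ht0, hU0]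
    | succ n ih =>
      have h1 := (hstep n).2
      have h2 : ‖U (t (2*n))‖^2 * anx n ≤ (‖U₀‖^2 * P n) * anx n :=
        mul_le_mul_of_nonneg_right ih (hanxpos n).le
      have h3 : 2*(n+1) = 2*n+2 := by omega
      rw [h3]
      calc ‖U (t (2*n+2))‖^2 ≤ (‖U₀‖^2 * P n) * anx n := le_trans h1 h2
        _ = ‖U₀‖^2 * P (n+1) := by rw [hP]; simp [Finset.prod_range_succ]; ring
  have hPtend : Tendsto P atTop (𝓝 0) := by
    have hexp : ∀ N, P (N+1) = Real.exp (∑ n ∈ Finset.range (N+1), Real.log (anx n)) := by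
      intro N
      rw [Real.exp_sum]
      exact (Finset.prod_congr rfl fun k _ => (Real.exp_log (hanxpos k)).symm)
    have h1 : Tendsto (fun N => P (N+1)) atTop (𝓝 0) := by
      simp only [hexp]
      exact Real.tendsto_exp_atBot.comp hdiv
    exact (Filter.tendsto_add_atTop_iff_nat 1).mp h1
  -- conclude
  have h0 : Tendsto (fun n => ‖U₀‖^2 * (P n + P (n+1))) atTop (𝓝 0) := by
    have := (hPtend.add ((Filter.tendsto_add_atTop_iff_nat 1).mpr hPtend)).const_mul (‖U₀‖^2)
    simpa using this
  rw [Metric.tendsto_atTop]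
  intro ε hε
  have hev : ∀ᶠ n in atTop, ‖U₀‖^2 * (P n + P (n+1)) < ε^2 :=
    h0.eventually (gt_mem_nhds (by positivity))
  obtain ⟨n₀, hn₀⟩ := eventually_atTop.mp hev
  refine ⟨t (2*n₀), fun r hr => ?_⟩
  have hr0 : (0:ℝ) ≤ r := le_trans (htnonneg _) hr
  have hex : ∃ k, r < t k := (htlim.eventually_gt_atTop r).exists
  set k := Nat.find hex with hk
  have hkspec : r < t k := Nat.find_spec hex
  have hkne : k ≠ 0 := by
    intro h
    rw [h, ht0] at hkspec; linarith
  obtain ⟨m, hm⟩ : ∃ m, k = m + 1 := ⟨k - 1, by omega⟩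
  have htm : t m ≤ r := by
    by_contra h
    push_neg at h
    exact (Nat.find_min hex (by omega)) h
  set n := m / 2 with hn
  have h2n : 2*n ≤ m := by omega
  have h2n2 : m + 1 ≤ 2*n + 2 := by omega
  have hlow : t (2*n) ≤ r := le_trans (htmono.monotone h2n) htm
  have hhigh : r < t (2*n+2) := lt_of_lt_of_le hkspec (hm ▸ htmono.monotone h2n2)
  have hnn₀ : n₀ ≤ n := by
    by_contra h
    push_neg at h
    have : 2*n+2 ≤ 2*n₀ := by omega
    have := htmono.monotone this
    linarith
  have hb1 := (hstep n).1 r ⟨hlow, hhigh.le⟩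
  have hb2 : ‖U (t (2*n))‖^2 * (1 + anx n) ≤ (‖U₀‖^2 * P n) * (1 + anx n) :=
    mul_le_mul_of_nonneg_right (hiter n) (by linarith [hanxpos n])
  have hb3 : (‖U₀‖^2 * P n) * (1 + anx n) = ‖U₀‖^2 * (P n + P (n+1)) := by
    rw [hP]; simp [Finset.prod_range_succ]; ring
  have hfin : ‖U r‖^2 < ε^2 := by
    calc ‖U r‖^2 ≤ (‖U₀‖^2 * P n) * (1 + anx n) := le_trans hb1 hb2
      _ = ‖U₀‖^2 * (P n + P (n+1)) := hb3
      _ < ε^2 := hn₀ n hnn₀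
  rw [Real.dist_eq, sub_zero, abs_of_nonneg (norm_nonneg _)]
  nlinarith [norm_nonneg (U r)]
end

section
/- Let (β_n)_{n∈ℕ} and (θ_n)_{n∈ℕ} be sequences of nonnegative real numbers and (c_n)_{n∈ℕ} a sequence in (0,1). If ∑_{n=0}^∞ β_n θ_n < +∞ and the partial sums ∑_{n=0}^{N} ln c_n tend to −∞ as N → ∞, then the partial sums ∑_{n=0}^{N} ln[ e^{2 β_n θ_n} (c_n + β_n θ_n) ] tend to −∞ as N → ∞. -/
open Filter Finset Real

theorem stmt_4
    (β θ : ℕ → ℝ) (hβ : ∀ n, 0 ≤ β n) (hθ : ∀ n, 0 ≤ θ n)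
    (c : ℕ → ℝ) (hc : ∀ n, c n ∈ Set.Ioo (0:ℝ) 1)
    (hsum : Summable (fun n => β n * θ n))
    (hdiv : Filter.Tendsto (fun N => ∑ n ∈ Finset.range (N+1), Real.log (c n))
      Filter.atTop Filter.atBot)
    :
    Filter.Tendsto
      (fun N => ∑ n ∈ Finset.range (N+1),
        Real.log (Real.exp (2*β n*θ n) * (c n + β n*θ n)))
      Filter.atTop Filter.atBot := by
  classical
  have hc0 : ∀ n, 0 < c n := fun n => (hc n).1
  have hc1 : ∀ n, c n < 1 := fun n => (hc n).2
  have ha : ∀ n, 0 ≤ β n * θ n := fun n => mul_nonneg (hβ n) (hθ n)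
  set P : ℕ → Prop := fun n => c n < β n * θ n ∧ c n < 1/4 with hPdef
  set g : ℕ → ℝ :=
    fun n => if P n then Real.log (2 * (β n * θ n)) else (1/2) * Real.log (c n) with hgdef
  -- pointwise bound
  have key : ∀ n, Real.log (Real.exp (2*β n*θ n) * (c n + β n*θ n)) ≤ g n + 6 * (β n * θ n) := by
    intro n
    have h0 : 0 < c n + β n * θ n := by have := hc0 n; have := ha n; linarith
    have hsplit : Real.log (Real.exp (2*β n*θ n) * (c n + β n*θ n))
        = 2*β n*θ n + Real.log (c n + β n*θ n) := by
      rw [Real.log_mul (Real.exp_ne_zero _) (ne_of_gt h0), Real.log_exp]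
    rw [hsplit]
    have hlogc : Real.log (c n) ≤ 0 := le_of_lt (Real.log_neg (hc0 n) (hc1 n))
    by_cases hPn : P n
    · have hca : c n < β n * θ n := hPn.1
      have hl : Real.log (c n + β n * θ n) ≤ Real.log (2 * (β n * θ n)) :=
        Real.log_le_log h0 (by linarith)
      have han := ha n
      simp only [hgdef, if_pos hPn]
      linarith
    · simp only [hgdef, if_neg hPn]
      by_cases hq : c n < 1/4
      · have hac : β n * θ n ≤ c n := by
          by_contra h
          exact hPn ⟨lt_of_not_ge h, hq⟩
        have hl : Real.log (c n + β n * θ n) ≤ Real.log 2 + Real.log (c n) := by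
          calc Real.log (c n + β n * θ n) ≤ Real.log (2 * c n) :=
                Real.log_le_log h0 (by linarith)
            _ = Real.log 2 + Real.log (c n) :=
                Real.log_mul two_ne_zero (ne_of_gt (hc0 n))
        have hc4 : Real.log (c n) ≤ Real.log (1/4 : ℝ) :=
          Real.log_le_log (hc0 n) (le_of_lt hq)
        have h14 : Real.log (1/4 : ℝ) = -(2 * Real.log 2) := by
          rw [one_div, Real.log_inv, show (4:ℝ) = 2^2 by norm_num, Real.log_pow]
          push_cast; ring
        have han := ha n
        rw [h14] at hc4
        linarith
      · -- c n ≥ 1/4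
        have hq' : (1/4 : ℝ) ≤ c n := le_of_not_gt hq
        have hx : (0:ℝ) < (c n + β n * θ n) / c n := div_pos h0 (hc0 n)
        have hl1 : Real.log ((c n + β n * θ n) / c n) ≤ (c n + β n * θ n) / c n - 1 :=
          Real.log_le_sub_one_of_pos hx
        have hl2 : Real.log ((c n + β n * θ n) / c n)
            = Real.log (c n + β n * θ n) - Real.log (c n) :=
          Real.log_div (ne_of_gt h0) (ne_of_gt (hc0 n))
        have hl3 : (c n + β n * θ n) / c n - 1 = (β n * θ n) / c n := by
          field_simp
          ring
        have hl4 : (β n * θ n) / c n ≤ 4 * (β n * θ n) := by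
          rw [div_le_iff₀ (hc0 n)]
          nlinarith [ha n]
        have han := ha n
        linarith [hl1, hl2.symm.le]
  -- partial sums of g tend to -infty
  have hGbot : Tendsto (fun N => ∑ n ∈ Finset.range (N+1), g n) atTop atBot := by
    by_cases hfin : (setOf P).Finite
    · -- finite case
      obtain ⟨m, hm⟩ := hfin.bddAbove
      have hnot : ∀ n, m + 1 ≤ n → ¬ P n := by
        intro n hn hPn
        have := hm hPn
        omega
      set K : ℝ := ∑ n ∈ Finset.range (m+1), g n with hK
      set K' : ℝ := ∑ n ∈ Finset.range (m+1), Real.log (c n) with hK'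
      have heq : ∀ N, m ≤ N → (∑ n ∈ Finset.range (N+1), g n)
          = K + (1/2) * ((∑ n ∈ Finset.range (N+1), Real.log (c n)) - K') := by
        intro N hN
        have h1 : (∑ n ∈ Ico 0 (m+1), g n) + (∑ n ∈ Ico (m+1) (N+1), g n)
            = ∑ n ∈ Ico 0 (N+1), g n :=
          Finset.sum_Ico_consecutive _ (by omega) (by omega)
        have h2 : (∑ n ∈ Ico 0 (m+1), Real.log (c n))
            + (∑ n ∈ Ico (m+1) (N+1), Real.log (c n))
            = ∑ n ∈ Ico 0 (N+1), Real.log (c n) :=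
          Finset.sum_Ico_consecutive _ (by omega) (by omega)
        have h3 : ∑ n ∈ Ico (m+1) (N+1), g n
            = (1/2) * ∑ n ∈ Ico (m+1) (N+1), Real.log (c n) := by
          rw [Finset.mul_sum]
          refine Finset.sum_congr rfl (fun n hn => ?_)
          have hn' := (Finset.mem_Ico.mp hn).1
          simp only [hgdef, if_neg (hnot n hn')]
        simp only [← Finset.range_eq_Ico] at h1 h2
        linarith [hK, hK']
      have hlim : Tendsto (fun N => K + (1/2) *
          ((∑ n ∈ Finset.range (N+1), Real.log (c n)) - K')) atTop atBot := by
        apply tendsto_atBot_add_const_left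
        apply Tendsto.const_mul_atBot (by norm_num : (0:ℝ) < 1/2)
        have := tendsto_atBot_add_const_right atTop (-K') hdiv
        simpa [sub_eq_add_neg] using this
      refine hlim.congr' ?_
      filter_upwards [eventually_ge_atTop m] with N hN
      exact (heq N hN).symm
    · -- infinite case
      set g' : ℕ → ℝ := fun n => if P n then Real.log (2 * (β n * θ n)) else 0 with hg'def
      have hgle : ∀ n, g n ≤ g' n := by
        intro n
        by_cases hPn : P n
        · simp [hgdef, hg'def, if_pos hPn]
        · simp only [hgdef, hg'def, if_neg hPn]
          have : Real.log (c n) ≤ 0 := le_of_lt (Real.log_neg (hc0 n) (hc1 n))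
          linarith
      have hle : ∀ N, (∑ n ∈ Finset.range (N+1), g n) ≤ ∑ n ∈ Finset.range (N+1), g' n :=
        fun N => Finset.sum_le_sum (fun i _ => hgle i)
      refine tendsto_atBot_mono hle ?_
      -- a n → 0
      have hatend : Tendsto (fun n => β n * θ n) atTop (nhds 0) := hsum.tendsto_atTop_zero
      have hev : ∀ᶠ n in atTop, β n * θ n < Real.exp (-1) / 2 := by
        have hpos : (0:ℝ) < Real.exp (-1) / 2 := by positivity
        exact hatend.eventually (eventually_lt_nhds hpos)
      obtain ⟨n₀, hn₀⟩ := eventually_atTop.mp hev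
      have hterm : ∀ n, n₀ ≤ n → g' n ≤ 0 := by
        intro n hn
        by_cases hPn : P n
        · simp only [hg'def, if_pos hPn]
          have h1 : 0 < 2 * (β n * θ n) := by
            have := hc0 n; have := hPn.1; linarith
          have h2 : 2 * (β n * θ n) ≤ Real.exp (-1) := by
            have := hn₀ n hn; linarith
          calc Real.log (2 * (β n * θ n)) ≤ Real.log (Real.exp (-1)) :=
                Real.log_le_log h1 h2
            _ = -1 := Real.log_exp _
            _ ≤ 0 := by norm_num
        · simp [hg'def, if_neg hPn]
      have hterm1 : ∀ n, n₀ ≤ n → P n → g' n ≤ -1 := by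
        intro n hn hPn
        simp only [hg'def, if_pos hPn]
        have h1 : 0 < 2 * (β n * θ n) := by
          have := hc0 n; have := hPn.1; linarith
        have h2 : 2 * (β n * θ n) ≤ Real.exp (-1) := by
          have := hn₀ n hn; linarith
        calc Real.log (2 * (β n * θ n)) ≤ Real.log (Real.exp (-1)) :=
              Real.log_le_log h1 h2
          _ = -1 := Real.log_exp _
      rw [tendsto_atBot]
      intro b
      set Q : ℝ := ∑ n ∈ Finset.range n₀, g' n with hQ
      set m : ℕ := Nat.ceil (Q - b) with hmdef
      have hinf : (setOf P).Infinite := hfin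
      have hSinf : ({n | P n} \ {n | n < n₀}).Infinite :=
        hinf.diff (Set.finite_lt_nat n₀)
      obtain ⟨F, hFsub, hFcard⟩ := hSinf.exists_subset_card_eq m
      set M : ℕ := max n₀ (F.sup id) with hMdef
      have hFico : F ⊆ Finset.Ico n₀ (M+1) := by
        intro x hx
        have hx' := hFsub hx
        simp only [Set.mem_diff, Set.mem_setOf_eq, not_lt] at hx'
        have hxM : x ≤ F.sup id := Finset.le_sup (f := id) hx
        simp only [Finset.mem_Ico]
        constructor
        · exact hx'.2
        · omega
      have hMn₀ : n₀ ≤ M := le_max_left _ _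
      have hbound : (∑ n ∈ Finset.range (M+1), g' n) ≤ b := by
        have hsplit : (∑ n ∈ Ico 0 n₀, g' n) + (∑ n ∈ Ico n₀ (M+1), g' n)
            = ∑ n ∈ Ico 0 (M+1), g' n :=
          Finset.sum_Ico_consecutive _ (by omega) (by omega)
        have hsum2 : (∑ n ∈ Finset.Ico n₀ (M+1), g' n) ≤ -(m:ℝ) := by
          have hsplit2 : (∑ n ∈ Finset.Ico n₀ (M+1) \ F, g' n) + (∑ n ∈ F, g' n)
              = ∑ n ∈ Finset.Ico n₀ (M+1), g' n :=
            Finset.sum_sdiff hFico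
          rw [← hsplit2]
          have h4 : (∑ n ∈ F, g' n) ≤ F.card • (-1 : ℝ) := by
            apply Finset.sum_le_card_nsmul
            intro x hx
            have hx' := hFsub hx
            simp only [Set.mem_diff, Set.mem_setOf_eq, not_lt] at hx'
            exact hterm1 x hx'.2 hx'.1
          have h5 : (∑ n ∈ Finset.Ico n₀ (M+1) \ F, g' n) ≤ 0 := by
            apply Finset.sum_nonpos
            intro x hx
            have := (Finset.mem_Ico.mp (Finset.mem_sdiff.mp hx).1).1
            exact hterm x this
          rw [hFcard] at h4
          simp only [nsmul_eq_mul] at h4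
          linarith
        have hQm : Q - b ≤ (m:ℝ) := Nat.le_ceil _
        simp only [← Finset.range_eq_Ico] at hsplit
        rw [← hQ] at hsplit
        linarith
      rw [eventually_atTop]
      refine ⟨M, fun N hN => ?_⟩
      have hsplit3 : (∑ n ∈ Ico 0 (M+1), g' n) + (∑ n ∈ Ico (M+1) (N+1), g' n)
          = ∑ n ∈ Ico 0 (N+1), g' n :=
        Finset.sum_Ico_consecutive _ (by omega) (by omega)
      have h6 : (∑ n ∈ Ico (M+1) (N+1), g' n) ≤ 0 := by
        apply Finset.sum_nonpos
        intro x hx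
        have := (Finset.mem_Ico.mp hx).1
        exact hterm x (by omega)
      simp only [← Finset.range_eq_Ico] at hsplit3
      linarith
  -- conclude
  set T : ℝ := ∑' n, β n * θ n with hT
  have hle2 : ∀ N, (∑ n ∈ Finset.range (N+1),
      Real.log (Real.exp (2*β n*θ n) * (c n + β n*θ n)))
      ≤ (∑ n ∈ Finset.range (N+1), g n) + 6 * T := by
    intro N
    have h1 : (∑ n ∈ Finset.range (N+1),
        Real.log (Real.exp (2*β n*θ n) * (c n + β n*θ n)))
        ≤ ∑ n ∈ Finset.range (N+1), (g n + 6 * (β n * θ n)) :=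
      Finset.sum_le_sum (fun i _ => key i)
    have h2 : ∑ n ∈ Finset.range (N+1), (g n + 6 * (β n * θ n))
        = (∑ n ∈ Finset.range (N+1), g n)
          + 6 * ∑ n ∈ Finset.range (N+1), (β n * θ n) := by
      rw [Finset.sum_add_distrib, Finset.mul_sum]
    have h3 : (∑ n ∈ Finset.range (N+1), (β n * θ n)) ≤ T :=
      hsum.sum_le_tsum _ (fun i _ => ha i)
    linarith
  exact tendsto_atBot_mono hle2 (tendsto_atBot_add_const_right _ _ hGbot)
end

section
/- Assume T_{2n+1} ≤ τ, T_{2n} ≥ τ and T_{2n} > T* for all n ∈ ℕ, and set c_n := M² e^{−2μ T_{2n}}. If the partial sums ∑_{n=0}^{N} ln[ e^{B_{2n+1} T_{2n+1}} (c_n + 1 − e^{−B_{2n+1} T_{2n+1}}) ] tend to −∞ as N → ∞, then every trajectory U of the on–off delay system satisfies ‖U(t)‖ → 0 as t → +∞. -/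
open Filter Set Real

theorem stmt_6
    {H : Type*} [NormedAddCommGroup H] [InnerProductSpace ℝ H]
    (S : ℝ → H →L[ℝ] H) (M μ : ℝ)
    (hM : 1 ≤ M) (hμ : 0 < μ)
    (hS0 : S 0 = ContinuousLinearMap.id ℝ H)
    (hSadd : ∀ s u : ℝ, 0 ≤ s → 0 ≤ u → S (s + u) = (S s).comp (S u))
    (hScont : ∀ x : H, ContinuousOn (fun s => S s x) (Set.Ici (0:ℝ)))
    (hSbound : ∀ s : ℝ, 0 ≤ s → ‖S s‖ ≤ M * Real.exp (-μ * s))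
    (hScontr : ∀ s : ℝ, 0 ≤ s → ∀ x : H, ‖S s x‖ ≤ ‖x‖)
    (t : ℕ → ℝ) (ht0 : t 0 = 0) (htmono : StrictMono t)
    (htlim : Filter.Tendsto t Filter.atTop Filter.atTop)
    (τ : ℝ) (hτ : 0 < τ)
    (B : ℕ → H →L[ℝ] H)
    (hT2n1τ : ∀ n : ℕ, t (2*n+2) - t (2*n+1) ≤ τ)
    (hT2nτ : ∀ n : ℕ, τ ≤ t (2*n+1) - t (2*n))
    (hT2nstar : ∀ n : ℕ, Real.log M / μ < t (2*n+1) - t (2*n))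
    (hdiv : Filter.Tendsto
      (fun N => ∑ n ∈ Finset.range (N+1),
        Real.log (Real.exp (‖B n‖*(t (2*n+2) - t (2*n+1))) *
          (M^2 * Real.exp (-2*μ*(t (2*n+1) - t (2*n))) + 1 -
            Real.exp (-‖B n‖*(t (2*n+2) - t (2*n+1))))))
      Filter.atTop Filter.atBot)
    (U : ℝ → H) (U₀ : H) (V : ℝ → H)
    (hUcont : ContinuousOn U (Set.Ici (0:ℝ))) (hU0 : U 0 = U₀)
    (hUeven : ∀ n : ℕ, ∀ s ∈ Set.Icc (t (2*n)) (t (2*n+1)),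
      U s = S (s - t (2*n)) (U (t (2*n))))
    (hUodd : ∀ n : ℕ, ∀ s ∈ Set.Ioo (t (2*n+1)) (t (2*n+2)),
      HasDerivAt U (V s + B n (U (s - τ))) s)
    (hdiss : ∀ n : ℕ, ∀ s ∈ Set.Ioo (t (2*n+1)) (t (2*n+2)),
      (inner ℝ (U s) (V s) : ℝ) ≤ 0)
    :
    Filter.Tendsto (fun r => ‖U r‖) Filter.atTop (nhds 0) := by
  have htnn : ∀ n, 0 ≤ t n := fun n => ht0 ▸ htmono.monotone (Nat.zero_le n)
  set d : ℕ → ℝ := fun n => Real.exp (‖B n‖*(t (2*n+2) - t (2*n+1))) *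
      (M^2 * Real.exp (-2*μ*(t (2*n+1) - t (2*n))) + 1 -
        Real.exp (-‖B n‖*(t (2*n+2) - t (2*n+1)))) with hd
  have hdiv' : Tendsto (fun N => ∑ n ∈ Finset.range (N+1), Real.log (d n))
      atTop atBot := hdiv
  have hdpos : ∀ n, 0 < d n := by
    intro n
    have hT1 : 0 < t (2*n+2) - t (2*n+1) := sub_pos.2 (htmono (by omega))
    have h1 : Real.exp (-‖B n‖*(t (2*n+2) - t (2*n+1))) ≤ 1 := by
      apply Real.exp_le_one_iff.2
      nlinarith [norm_nonneg (B n)]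
    have h2 : 0 < M^2 * Real.exp (-2*μ*(t (2*n+1) - t (2*n))) :=
      mul_pos (by nlinarith) (Real.exp_pos _)
    rw [hd]
    exact mul_pos (Real.exp_pos _) (by linarith)
  -- bound on even intervals
  have lemA : ∀ n : ℕ, ∀ s ∈ Set.Icc (t (2*n)) (t (2*n+1)), ‖U s‖ ≤ ‖U (t (2*n))‖ := by
    intro n s hs
    rw [hUeven n s hs]
    exact hScontr _ (sub_nonneg.2 hs.1) _
  -- bound at t (2n+1)
  have lemB : ∀ n : ℕ, ‖U (t (2*n+1))‖^2 ≤
      M^2 * Real.exp (-2*μ*(t (2*n+1) - t (2*n))) * ‖U (t (2*n))‖^2 := by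
    intro n
    have hT0 : 0 ≤ t (2*n+1) - t (2*n) := (sub_nonneg.2 (htmono (by omega)).le)
    have hle : ‖U (t (2*n+1))‖ ≤
        M * Real.exp (-μ*(t (2*n+1) - t (2*n))) * ‖U (t (2*n))‖ := by
      rw [hUeven n _ ⟨(htmono (by omega)).le, le_rfl⟩]
      calc ‖S (t (2*n+1) - t (2*n)) (U (t (2*n)))‖
          ≤ ‖S (t (2*n+1) - t (2*n))‖ * ‖U (t (2*n))‖ :=
            ContinuousLinearMap.le_opNorm _ _
        _ ≤ M * Real.exp (-μ*(t (2*n+1) - t (2*n))) * ‖U (t (2*n))‖ :=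
            mul_le_mul_of_nonneg_right (hSbound _ hT0) (norm_nonneg _)
    have h3 : Real.exp (-μ*(t (2*n+1) - t (2*n))) * Real.exp (-μ*(t (2*n+1) - t (2*n)))
        = Real.exp (-2*μ*(t (2*n+1) - t (2*n))) := by
      rw [← Real.exp_add]; congr 1; ring
    have h4 : ‖U (t (2*n+1))‖^2 ≤
        (M * Real.exp (-μ*(t (2*n+1) - t (2*n))) * ‖U (t (2*n))‖)^2 :=
      pow_le_pow_left₀ (norm_nonneg _) hle 2
    calc ‖U (t (2*n+1))‖^2 ≤
        (M * Real.exp (-μ*(t (2*n+1) - t (2*n))) * ‖U (t (2*n))‖)^2 := h4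
      _ = M^2 * Real.exp (-2*μ*(t (2*n+1) - t (2*n))) * ‖U (t (2*n))‖^2 := by
          linear_combination (M^2 * ‖U (t (2*n))‖^2) * h3
  -- main estimate on odd intervals
  have lemOdd : ∀ n : ℕ, ∀ s ∈ Set.Icc (t (2*n+1)) (t (2*n+2)),
      ‖U s‖^2 ≤ d n * ‖U (t (2*n))‖^2 := by
    intro n s hs
    have hlt : t (2*n+1) < t (2*n+2) := htmono (by omega)
    have hkey : ∀ x ∈ Set.Ioo (t (2*n+1)) (t (2*n+2)),
        ∃ D, HasDerivAt (fun s => Real.exp (-‖B n‖*(s - t (2*n+1))) *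
          (‖U s‖^2 + ‖U (t (2*n))‖^2)) D x ∧ D ≤ 0 := by
      intro x hx
      have hUx := hUodd n x hx
      have h1 : HasDerivAt (fun s : ℝ => -‖B n‖*(s - t (2*n+1))) (-‖B n‖) x := by
        simpa using ((hasDerivAt_id x).sub_const (t (2*n+1))).const_mul (-‖B n‖)
      have h2 : HasDerivAt (fun s => Real.exp (-‖B n‖*(s - t (2*n+1))))
          (Real.exp (-‖B n‖*(x - t (2*n+1))) * (-‖B n‖)) x := h1.exp
      have h3 : HasDerivAt (fun s => (inner ℝ (U s) (U s) : ℝ))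
          ((inner ℝ (U x) (V x + B n (U (x - τ))) : ℝ)
            + (inner ℝ (V x + B n (U (x - τ))) (U x) : ℝ)) x :=
        HasDerivAt.inner ℝ hUx hUx
      have h4 : HasDerivAt (fun s => ‖U s‖^2 + ‖U (t (2*n))‖^2)
          ((inner ℝ (U x) (V x + B n (U (x - τ))) : ℝ)
            + (inner ℝ (V x + B n (U (x - τ))) (U x) : ℝ)) x := by
        have := h3.add_const (‖U (t (2*n))‖^2)
        simpa [real_inner_self_eq_norm_sq] using this
      refine ⟨_, h2.mul h4, ?_⟩
      have hE := Real.exp_pos (-‖B n‖*(x - t (2*n+1)))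
      have hd1 : (inner ℝ (U x) (V x) : ℝ) ≤ 0 := hdiss n x hx
      have hmem : x - τ ∈ Set.Icc (t (2*n)) (t (2*n+1)) :=
        ⟨by linarith [hx.1, hT2nτ n], by linarith [hx.2, hT2n1τ n]⟩
      have hw : ‖B n (U (x - τ))‖ ≤ ‖B n‖ * ‖U (t (2*n))‖ :=
        le_trans ((B n).le_opNorm _)
          (mul_le_mul_of_nonneg_left (lemA n _ hmem) (norm_nonneg _))
      have hip : (inner ℝ (U x) (B n (U (x - τ))) : ℝ)
          ≤ ‖U x‖ * (‖B n‖ * ‖U (t (2*n))‖) :=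
        le_trans (real_inner_le_norm _ _)
          (mul_le_mul_of_nonneg_left hw (norm_nonneg _))
      have hd1' : (inner ℝ (V x) (U x) : ℝ) ≤ 0 := by
        rw [real_inner_comm]; exact hd1
      have hip' : (inner ℝ (B n (U (x - τ))) (U x) : ℝ)
          ≤ ‖U x‖ * (‖B n‖ * ‖U (t (2*n))‖) := by
        rw [real_inner_comm]; exact hip
      rw [inner_add_right, inner_add_left]
      nlinarith [mul_nonneg (norm_nonneg (B n)) (sq_nonneg (‖U x‖ - ‖U (t (2*n))‖)),
        hE, hd1, hip, hd1', hip', norm_nonneg (U x), norm_nonneg (U (t (2*n)))]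
    have hganti : AntitoneOn (fun s => Real.exp (-‖B n‖*(s - t (2*n+1))) *
        (‖U s‖^2 + ‖U (t (2*n))‖^2)) (Set.Icc (t (2*n+1)) (t (2*n+2))) := by
      apply antitoneOn_of_deriv_nonpos (convex_Icc _ _)
      · apply ContinuousOn.mul
        · exact (Real.continuous_exp.comp
            (continuous_const.mul (continuous_id.sub continuous_const))).continuousOn
        · refine (((hUcont.mono ?_).norm.pow 2).add continuousOn_const)
          intro x hx
          exact le_trans (htnn (2*n+1)) hx.1
      · rw [interior_Icc]
        intro x hx
        obtain ⟨D, hD, _⟩ := hkey x hx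
        exact hD.differentiableAt.differentiableWithinAt
      · rw [interior_Icc]
        intro x hx
        obtain ⟨D, hD, hDle⟩ := hkey x hx
        rw [hD.deriv]
        exact hDle
    have hgs := hganti ⟨le_rfl, hlt.le⟩ hs hs.1
    simp only [sub_self, mul_zero, Real.exp_zero, one_mul] at hgs
    -- hgs : exp(-Bn (s-t₁)) * (‖U s‖² + K²) ≤ ‖U t₁‖² + K²
    have hE1 : Real.exp (‖B n‖*(s - t (2*n+1))) * Real.exp (-‖B n‖*(s - t (2*n+1))) = 1 := by
      rw [← Real.exp_add, show ‖B n‖*(s - t (2*n+1)) + -‖B n‖*(s - t (2*n+1)) = 0 by ring,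
        Real.exp_zero]
    have h5 := mul_le_mul_of_nonneg_left hgs (Real.exp_pos (‖B n‖*(s - t (2*n+1)))).le
    rw [← mul_assoc, hE1, one_mul] at h5
    have hEle : Real.exp (‖B n‖*(s - t (2*n+1))) ≤ Real.exp (‖B n‖*(t (2*n+2) - t (2*n+1))) :=
      Real.exp_le_exp.2 (mul_le_mul_of_nonneg_left (by linarith [hs.2]) (norm_nonneg (B n)))
    have hy1 := lemB n
    have h6 : Real.exp (‖B n‖*(s - t (2*n+1))) * (‖U (t (2*n+1))‖^2 + ‖U (t (2*n))‖^2)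
        ≤ Real.exp (‖B n‖*(t (2*n+2) - t (2*n+1))) *
          (M^2 * Real.exp (-2*μ*(t (2*n+1) - t (2*n))) * ‖U (t (2*n))‖^2 + ‖U (t (2*n))‖^2) := by
      apply mul_le_mul hEle (by linarith) (by positivity) (Real.exp_pos _).le
    have hE2 : Real.exp (‖B n‖*(t (2*n+2) - t (2*n+1))) *
        Real.exp (-‖B n‖*(t (2*n+2) - t (2*n+1))) = 1 := by
      rw [← Real.exp_add,
        show ‖B n‖*(t (2*n+2) - t (2*n+1)) + -‖B n‖*(t (2*n+2) - t (2*n+1)) = 0 by ring,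
        Real.exp_zero]
    simp only [hd]
    nlinarith [h5, h6, hE2, sq_nonneg (‖U (t (2*n))‖)]
  -- products
  set P : ℕ → ℝ := fun n => ∏ k ∈ Finset.range n, d k with hP
  have hPpos : ∀ n, 0 < P n := fun n => Finset.prod_pos (fun k _ => hdpos k)
  have hKP : ∀ n, ‖U (t (2*n))‖^2 ≤ P n * ‖U (t 0)‖^2 := by
    intro n
    induction n with
    | zero => simp [hP]
    | succ n ih =>
      have h1 : ‖U (t (2*(n+1)))‖^2 ≤ d n * ‖U (t (2*n))‖^2 := by
        have h := lemOdd n (t (2*n+2)) ⟨(htmono (by omega)).le, le_rfl⟩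
        rw [show 2*(n+1) = 2*n+2 by ring]
        exact h
      calc ‖U (t (2*(n+1)))‖^2 ≤ d n * ‖U (t (2*n))‖^2 := h1
        _ ≤ d n * (P n * ‖U (t 0)‖^2) := mul_le_mul_of_nonneg_left ih (hdpos n).le
        _ = P (n+1) * ‖U (t 0)‖^2 := by
            simp only [hP, Finset.prod_range_succ]; ring
  have hlogP : ∀ N : ℕ, ∑ n ∈ Finset.range (N+1), Real.log (d n) = Real.log (P (N+1)) := by
    intro N
    rw [hP]
    exact (Real.log_prod (fun k _ => (hdpos k).ne')).symm
  have hlogtend : Tendsto (fun N => Real.log (P (N+1))) atTop atBot := by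
    simpa only [hlogP] using hdiv'
  have hPtend' : Tendsto (fun N => P (N+1)) atTop (nhds 0) :=
    (Real.tendsto_exp_atBot.comp hlogtend).congr (fun N => Real.exp_log (hPpos _))
  have hPtend : Tendsto P atTop (nhds 0) :=
    (Filter.tendsto_add_atTop_iff_nat 1).1 hPtend'
  have hb : Tendsto (fun n => (P n + P (n+1)) * ‖U (t 0)‖^2) atTop (nhds 0) := by
    have := (hPtend.add hPtend').mul_const (‖U (t 0)‖^2)
    simpa using this
  have hbound : ∀ n : ℕ, ∀ r ∈ Set.Icc (t (2*n)) (t (2*n+2)),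
      ‖U r‖^2 ≤ (P n + P (n+1)) * ‖U (t 0)‖^2 := by
    intro n r hr
    rcases le_or_gt r (t (2*n+1)) with hc | hc
    · have h1 : ‖U r‖ ≤ ‖U (t (2*n))‖ := lemA n r ⟨hr.1, hc⟩
      have h2 : ‖U r‖^2 ≤ ‖U (t (2*n))‖^2 := pow_le_pow_left₀ (norm_nonneg _) h1 2
      have h3 := hKP n
      nlinarith [mul_nonneg (hPpos (n+1)).le (sq_nonneg (‖U (t 0)‖))]
    · have h1 : ‖U r‖^2 ≤ d n * ‖U (t (2*n))‖^2 := lemOdd n r ⟨hc.le, hr.2⟩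
      have h3 : d n * ‖U (t (2*n))‖^2 ≤ d n * (P n * ‖U (t 0)‖^2) :=
        mul_le_mul_of_nonneg_left (hKP n) (hdpos n).le
      have h4 : d n * (P n * ‖U (t 0)‖^2) = P (n+1) * ‖U (t 0)‖^2 := by
        simp only [hP, Finset.prod_range_succ]; ring
      nlinarith [mul_nonneg (hPpos n).le (sq_nonneg (‖U (t 0)‖))]
  have hsq : Tendsto (fun r => ‖U r‖^2) atTop (nhds 0) := by
    rw [Metric.tendsto_atTop]
    intro ε hε
    obtain ⟨n₀, hn₀⟩ := Metric.tendsto_atTop.1 hb ε hε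
    refine ⟨t (2*n₀), fun r hr => ?_⟩
    have hr0 : (0:ℝ) ≤ r := le_trans (htnn (2*n₀)) hr
    have hex : ∃ k, r < t k := (htlim.eventually (eventually_gt_atTop r)).exists
    have hNspec : r < t (Nat.find hex) := Nat.find_spec hex
    have hN0 : 0 < Nat.find hex := by
      rcases Nat.eq_zero_or_pos (Nat.find hex) with h | h
      · exfalso; rw [h, ht0] at hNspec; linarith
      · exact h
    set N := Nat.find hex with hNdef
    have htm : t (N - 1) ≤ r := not_lt.1 (Nat.find_min hex (by omega))
    set n := (N - 1) / 2 with hn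
    have hmem : r ∈ Set.Icc (t (2*n)) (t (2*n+2)) := by
      constructor
      · exact le_trans (htmono.monotone (by omega)) htm
      · exact le_of_lt (lt_of_lt_of_le hNspec (htmono.monotone (by omega)))
    have hn₀n : n₀ ≤ n := by
      by_contra hcon
      push_neg at hcon
      have h1 : t (2*n+2) ≤ t (2*n₀) := htmono.monotone (by omega)
      have h2 : r < t (2*n+2) := lt_of_lt_of_le hNspec (htmono.monotone (by omega))
      linarith
    have h3 := hbound n r hmem
    have h4 := hn₀ n hn₀n
    rw [Real.dist_eq, sub_zero] at h4 ⊢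
    rw [abs_of_nonneg (sq_nonneg _)]
    exact lt_of_le_of_lt (le_trans h3 (le_abs_self _)) h4
  have hfin : Tendsto (fun r => Real.sqrt (‖U r‖^2)) atTop (nhds 0) := by
    simpa using hsq.sqrt
  exact hfin.congr (fun r => by rw [Real.sqrt_sq_eq_abs, abs_norm])
end

section
/- Assume T_{2n} = T⁰ for all n, with T⁰ ≥ τ and T⁰ > T*, and T_{2n+1} = T̃ for all n. Set c := M e^{−μ T⁰}, and suppose there is d < 1 such that e^{2 B_{2n+1} T̃} (c + B_{2n+1} T̃) ≤ d for every n ∈ ℕ. Then there exist constants C > 0 and α > 0, depending only on M, μ, τ, T⁰, T̃ and d, such that every trajectory U of the on–off delay system with initial datum U₀ satisfies ‖U(t)‖ ≤ C e^{−α t} ‖U₀‖ for all t ≥ 0. -/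
set_option maxHeartbeats 2000000 in
theorem stmt_7
    {H : Type*} [NormedAddCommGroup H] [InnerProductSpace ℝ H]
    (S : ℝ → H →L[ℝ] H) (M μ : ℝ)
    (hM : 1 ≤ M) (hμ : 0 < μ)
    (hS0 : S 0 = ContinuousLinearMap.id ℝ H)
    (hSadd : ∀ s u : ℝ, 0 ≤ s → 0 ≤ u → S (s + u) = (S s).comp (S u))
    (hScont : ∀ x : H, ContinuousOn (fun s => S s x) (Set.Ici (0:ℝ)))
    (hSbound : ∀ s : ℝ, 0 ≤ s → ‖S s‖ ≤ M * Real.exp (-μ * s))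
    (hScontr : ∀ s : ℝ, 0 ≤ s → ∀ x : H, ‖S s x‖ ≤ ‖x‖)
    (t : ℕ → ℝ) (ht0 : t 0 = 0) (htmono : StrictMono t)
    (htlim : Filter.Tendsto t Filter.atTop Filter.atTop)
    (τ : ℝ) (hτ : 0 < τ)
    (B : ℕ → H →L[ℝ] H)
    (T0 Ttil : ℝ)
    (hT0 : ∀ n : ℕ, t (2*n+1) - t (2*n) = T0)
    (hT0τ : τ ≤ T0) (hT0star : Real.log M / μ < T0)
    (hTt : ∀ n : ℕ, t (2*n+2) - t (2*n+1) = Ttil)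
    (d : ℝ) (hd : d < 1)
    (hsup : ∀ n : ℕ,
      Real.exp (2*‖B n‖*Ttil) * (M * Real.exp (-μ*T0) + ‖B n‖*Ttil) ≤ d)
    :
    ∃ C > (0:ℝ), ∃ α > (0:ℝ), ∀ (U : ℝ → H) (U₀ : H) (V : ℝ → H),
      ContinuousOn U (Set.Ici (0:ℝ)) → U 0 = U₀ →
      (∀ n : ℕ, ∀ s ∈ Set.Icc (t (2*n)) (t (2*n+1)),
        U s = S (s - t (2*n)) (U (t (2*n)))) →
      (∀ n : ℕ, ∀ s ∈ Set.Ioo (t (2*n+1)) (t (2*n+2)),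
        HasDerivAt U (V s + B n (U (s - τ))) s) →
      (∀ n : ℕ, ∀ s ∈ Set.Ioo (t (2*n+1)) (t (2*n+2)),
        (inner ℝ (U s) (V s) : ℝ) ≤ 0) →
      ∀ r : ℝ, 0 ≤ r → ‖U r‖ ≤ C * Real.exp (-α * r) * ‖U₀‖ := by
  have hnn : ∀ k : ℕ, (0:ℝ) ≤ t k := fun k => ht0 ▸ htmono.monotone (Nat.zero_le k)
  have hT00 : 0 < T0 := by
    have h := hT0 0
    have h2 : t 0 < t 1 := htmono (by norm_num)
    norm_num at h
    linarith
  have hTtil0 : 0 < Ttil := by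
    have h := hTt 0
    have h2 : t 1 < t 2 := htmono (by norm_num)
    norm_num at h
    linarith
  set c := M * Real.exp (-μ * T0) with hc_def
  have hc0 : 0 < c := by positivity
  have hcled : c ≤ d := by
    have h := hsup 0
    have he : (1:ℝ) ≤ Real.exp (2*‖B 0‖*Ttil) := Real.one_le_exp (by positivity)
    nlinarith [norm_nonneg (B 0), mul_nonneg (norm_nonneg (B 0)) hTtil0.le]
  have hd0 : 0 < d := lt_of_lt_of_le hc0 hcled
  have hlog : Real.log d < 0 := Real.log_neg hd0 hd
  set T := T0 + Ttil with hT_def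
  have hTpos : 0 < T := by rw [hT_def]; linarith
  refine ⟨1/d, by positivity, -Real.log d / T, div_pos (by linarith) hTpos, ?_⟩
  intro U U₀ V hUc hU0 hev hode hdiss r hr
  -- per-period estimate
  have key : ∀ n : ℕ, (∀ s ∈ Set.Icc (t (2*n)) (t (2*n+2)), ‖U s‖ ≤ ‖U (t (2*n))‖) ∧
      ‖U (t (2*n+2))‖ ≤ d * ‖U (t (2*n))‖ := by
    intro n
    have hpq : t (2*n+1) - t (2*n) = T0 := hT0 n
    have hqw : t (2*n+2) - t (2*n+1) = Ttil := hTt n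
    have hp0 : (0:ℝ) ≤ t (2*n) := hnn _
    have hq0 : (0:ℝ) ≤ t (2*n+1) := hnn _
    have hqltw : t (2*n+1) < t (2*n+2) := by linarith
    set a := ‖U (t (2*n))‖ with ha_def
    have ha0 : 0 ≤ a := norm_nonneg _
    have hevenb : ∀ s ∈ Set.Icc (t (2*n)) (t (2*n+1)), ‖U s‖ ≤ a := by
      intro s hs
      rw [hev n s hs]
      exact hScontr _ (by linarith [hs.1]) _
    have hUq : ‖U (t (2*n+1))‖ ≤ c * a := by
      have h1 := hev n (t (2*n+1)) ⟨by linarith, le_refl _⟩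
      rw [h1, hpq]
      calc ‖S T0 (U (t (2*n)))‖ ≤ ‖S T0‖ * ‖U (t (2*n))‖ := (S T0).le_opNorm _
        _ ≤ c * a := mul_le_mul_of_nonneg_right (hSbound T0 hT00.le) ha0
    have hsubIcc : Set.Icc (t (2*n+1)) (t (2*n+2)) ⊆ Set.Ici (0:ℝ) :=
      fun x hx => le_trans hq0 hx.1
    have hUcK : ContinuousOn (fun s => ‖U s‖) (Set.Icc (t (2*n+1)) (t (2*n+2))) :=
      (hUc.mono hsubIcc).norm
    have hcomp : IsCompact ((fun s => ‖U s‖) '' Set.Icc (t (2*n+1)) (t (2*n+2))) :=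
      isCompact_Icc.image_of_continuousOn hUcK
    set K := sSup ((fun s => ‖U s‖) '' Set.Icc (t (2*n+1)) (t (2*n+2))) with hK_def
    have hne : ((fun s => ‖U s‖) '' Set.Icc (t (2*n+1)) (t (2*n+2))).Nonempty :=
      ⟨_, ⟨t (2*n+1), ⟨le_refl _, hqltw.le⟩, rfl⟩⟩
    have hbdd : BddAbove ((fun s => ‖U s‖) '' Set.Icc (t (2*n+1)) (t (2*n+2))) := hcomp.bddAbove
    have hKle : ∀ s ∈ Set.Icc (t (2*n+1)) (t (2*n+2)), ‖U s‖ ≤ K :=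
      fun s hs => le_csSup hbdd ⟨s, hs, rfl⟩
    set P := max a K with hP_def
    have hP0 : 0 ≤ P := le_trans ha0 (le_max_left _ _)
    have hPall : ∀ σ ∈ Set.Icc (t (2*n)) (t (2*n+2)), ‖U σ‖ ≤ P := by
      intro σ hσ
      rcases le_or_gt σ (t (2*n+1)) with h | h
      · exact le_trans (hevenb σ ⟨hσ.1, h⟩) (le_max_left _ _)
      · exact le_trans (hKle σ ⟨h.le, hσ.2⟩) (le_max_right _ _)
    set bP := ‖B n‖ * P with hbP_def
    have hbP0 : 0 ≤ bP := mul_nonneg (norm_nonneg _) hP0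
    -- fencing estimate starting slightly inside the odd interval
    have hfence : ∀ η > (0:ℝ), ∀ a' ∈ Set.Ioo (t (2*n+1)) (t (2*n+2)),
        ∀ s ∈ Set.Icc a' (t (2*n+2)),
        ‖U s‖ ≤ ‖U a'‖ + η + (bP + η) * (s - a') := by
      intro η hη a' ha' s hs
      set G : ℝ → ℝ := fun x => ‖U a'‖ + η + (bP + η) * (x - a') with hG_def
      have hGpos : ∀ x, a' ≤ x → 0 < G x := by
        intro x hx
        have h1 : 0 ≤ (bP + η) * (x - a') := mul_nonneg (by linarith) (by linarith)
        have h2 := norm_nonneg (U a')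
        simp only [hG_def]
        linarith
      have hGderiv : ∀ x : ℝ, HasDerivAt G (bP + η) x := by
        intro x
        have h1 : HasDerivAt (fun y : ℝ => y - a') 1 x := (hasDerivAt_id x).sub_const a'
        have h2 := (h1.const_mul (bP + η)).const_add (‖U a'‖ + η)
        simpa [hG_def] using h2
      have hsub2 : Set.Icc a' (t (2*n+2)) ⊆ Set.Ici (0:ℝ) :=
        fun x hx => le_trans (le_trans hq0 ha'.1.le) hx.1
      have hfc : ContinuousOn (fun s => (inner ℝ (U s) (U s) : ℝ)) (Set.Icc a' (t (2*n+2))) :=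
        (hUc.mono hsub2).inner (hUc.mono hsub2)
      have hBc : ∀ x : ℝ, HasDerivAt (fun y => (G y)^2) (2 * G x * (bP + η)) x := by
        intro x
        have h1 : HasDerivAt (fun y => (G y)^2) (((2:ℕ):ℝ) * G x ^ (2-1) * (bP + η)) x :=
          (hGderiv x).fun_pow 2
        convert h1 using 1
        push_cast
        ring
      have hmem : ∀ x ∈ Set.Ico a' (t (2*n+2)), x ∈ Set.Ioo (t (2*n+1)) (t (2*n+2)) :=
        fun x hx => ⟨lt_of_lt_of_le ha'.1 hx.1, hx.2⟩
      have hkey := image_le_of_deriv_right_lt_deriv_boundary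
        (f := fun s => (inner ℝ (U s) (U s) : ℝ))
        (f' := fun x => (inner ℝ (U x) (V x + B n (U (x - τ))) : ℝ)
          + (inner ℝ (V x + B n (U (x - τ))) (U x) : ℝ))
        (a := a') (b := t (2*n+2)) (B := fun y => (G y)^2)
        (B' := fun x => 2 * G x * (bP + η))
        hfc
        (fun x hx => ((hode n x (hmem x hx)).inner ℝ (hode n x (hmem x hx))).hasDerivWithinAt)
        (by
          -- f a' ≤ B a'
          have h1 : G a' = ‖U a'‖ + η := by simp [hG_def]
          show (inner ℝ (U a') (U a') : ℝ) ≤ (G a')^2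
          rw [real_inner_self_eq_norm_sq, h1]
          nlinarith [norm_nonneg (U a')])
        hBc
        (by
          -- bound at contact points
          intro x hx hfx0
          have hfx : (inner ℝ (U x) (U x) : ℝ) = (G x)^2 := hfx0
          have hxm := hmem x hx
          have hGx : 0 < G x := hGpos x hx.1
          have hUx : ‖U x‖ = G x := by
            have h1 : ‖U x‖^2 = (G x)^2 := by rw [← real_inner_self_eq_norm_sq]; exact hfx
            nlinarith [norm_nonneg (U x)]
          have hdel : ‖U (x - τ)‖ ≤ P := by
            apply hPall
            constructor
            · have := hx.1; have := ha'.1; linarith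
            · have := hx.2; linarith
          have hi1 : (inner ℝ (U x) (V x) : ℝ) ≤ 0 := hdiss n x hxm
          have hi2 : (inner ℝ (U x) (B n (U (x - τ))) : ℝ) ≤ ‖U x‖ * (‖B n‖ * ‖U (x - τ)‖) := by
            calc (inner ℝ (U x) (B n (U (x - τ))) : ℝ) ≤ ‖U x‖ * ‖B n (U (x - τ))‖ :=
                real_inner_le_norm _ _
              _ ≤ ‖U x‖ * (‖B n‖ * ‖U (x - τ)‖) :=
                mul_le_mul_of_nonneg_left ((B n).le_opNorm _) (norm_nonneg _)
          have hi3 : ‖U x‖ * (‖B n‖ * ‖U (x - τ)‖) ≤ G x * bP := by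
            rw [hUx, hbP_def]
            exact mul_le_mul_of_nonneg_left
              (mul_le_mul_of_nonneg_left hdel (norm_nonneg _)) hGx.le
          have hsplit : (inner ℝ (U x) (V x + B n (U (x - τ))) : ℝ)
              = (inner ℝ (U x) (V x) : ℝ) + (inner ℝ (U x) (B n (U (x - τ))) : ℝ) :=
            inner_add_right _ _ _
          have hcomm : (inner ℝ (V x + B n (U (x - τ))) (U x) : ℝ)
              = (inner ℝ (U x) (V x + B n (U (x - τ))) : ℝ) := real_inner_comm _ _
          show _ + _ < 2 * G x * (bP + η)
          rw [hcomm, hsplit]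
          nlinarith)
      have h1 : (inner ℝ (U s) (U s) : ℝ) ≤ (G s)^2 := hkey hs
      have h2 : 0 < G s := hGpos s hs.1
      have h3 : ‖U s‖ ≤ G s := by
        rw [real_inner_self_eq_norm_sq] at h1
        nlinarith [norm_nonneg (U s)]
      simpa [hG_def] using h3
    -- bound on the closed odd interval
    have hodd : ∀ s ∈ Set.Icc (t (2*n+1)) (t (2*n+2)), ‖U s‖ ≤ c * a + bP * (s - t (2*n+1)) := by
      intro s hs
      rcases eq_or_lt_of_le hs.1 with heq | hlt
      · rw [← heq]
        simpa using hUq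
      · apply le_of_forall_gt_imp_ge_of_dense
        intro b' hb'
        set ε := b' - (c * a + bP * (s - t (2*n+1))) with hε_def
        have hε : 0 < ε := by rw [hε_def]; linarith
        set η := ε / (2 + Ttil) with hη_def
        have hη : 0 < η := div_pos hε (by linarith)
        have htd : Filter.Tendsto (fun x => ‖U x‖) (nhdsWithin (t (2*n+1)) (Set.Ioi (t (2*n+1))))
            (nhds ‖U (t (2*n+1))‖) := by
          have h1 : Filter.Tendsto U (nhdsWithin (t (2*n+1)) (Set.Ici (0:ℝ)))
              (nhds (U (t (2*n+1)))) := hUc _ (Set.mem_Ici.mpr hq0)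
          have h2 : nhdsWithin (t (2*n+1)) (Set.Ioi (t (2*n+1)))
              ≤ nhdsWithin (t (2*n+1)) (Set.Ici (0:ℝ)) :=
            nhdsWithin_mono _ (fun x hx => le_trans hq0 (le_of_lt hx))
          exact (continuous_norm.tendsto _).comp (h1.mono_left h2)
        have hev1 : ∀ᶠ x in nhdsWithin (t (2*n+1)) (Set.Ioi (t (2*n+1))),
            ‖U x‖ < ‖U (t (2*n+1))‖ + η := htd.eventually_lt_const (by linarith)
        have hev2 : ∀ᶠ x in nhdsWithin (t (2*n+1)) (Set.Ioi (t (2*n+1))),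
            x ∈ Set.Ioo (t (2*n+1)) s :=
          Filter.eventually_of_mem (Ioo_mem_nhdsGT hlt) (fun x hx => hx)
        obtain ⟨a', hua', ha'⟩ := (hev1.and hev2).exists
        have ha'w : a' ∈ Set.Ioo (t (2*n+1)) (t (2*n+2)) :=
          ⟨ha'.1, lt_of_lt_of_le ha'.2 hs.2⟩
        have hb := hfence η hη a' ha'w s ⟨ha'.2.le, hs.2⟩
        have h1 : s - a' ≤ s - t (2*n+1) := by linarith [ha'.1]
        have h2 : s - t (2*n+1) ≤ Ttil := by linarith [hs.2]
        have h3 : η * (2 + Ttil) = ε := by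
          rw [hη_def]; field_simp
        have h4 : (bP + η) * (s - a') ≤ (bP + η) * (s - t (2*n+1)) :=
          mul_le_mul_of_nonneg_left h1 (by linarith)
        have h5 : η * (s - t (2*n+1)) ≤ η * Ttil := mul_le_mul_of_nonneg_left h2 hη.le
        have : ‖U s‖ ≤ c * a + bP * (s - t (2*n+1)) + ε := by nlinarith
        rw [hε_def] at this
        linarith
    -- bound on K
    have hKb : K ≤ c * a + (‖B n‖ * Ttil) * P := by
      apply csSup_le hne
      rintro y ⟨s, hs, rfl⟩
      have h1 := hodd s hs
      have h2 : s - t (2*n+1) ≤ Ttil := by linarith [hs.2]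
      have h3 : bP * (s - t (2*n+1)) ≤ bP * Ttil := mul_le_mul_of_nonneg_left h2 hbP0
      have h4 : bP * Ttil = (‖B n‖ * Ttil) * P := by rw [hbP_def]; ring
      linarith
    -- arithmetic
    set x := ‖B n‖ * Ttil with hx_def
    have hx0 : 0 ≤ x := mul_nonneg (norm_nonneg _) hTtil0.le
    have hb' : Real.exp (2*x) * (c + x) ≤ d := by
      have h := hsup n
      have he : 2*‖B n‖*Ttil = 2*x := by rw [hx_def]; ring
      rw [he] at h
      exact h
    have hexp1 : (1:ℝ) ≤ Real.exp (2*x) := Real.one_le_exp (by linarith)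
    have hexp2 : (1:ℝ) + 2*x ≤ Real.exp (2*x) := by
      have := Real.add_one_le_exp (2*x); linarith
    have hx1 : x < 1 := by nlinarith [Real.exp_pos (2*x)]
    have hcx : c + x ≤ d := by nlinarith
    have hKd : K ≤ d * a := by
      rcases le_total K a with h | h
      · have hPa : P = a := max_eq_left h
        rw [hPa] at hKb
        nlinarith
      · have hPK : P = K := max_eq_right h
        rw [hPK] at hKb
        nlinarith [mul_nonneg ha0 hx0]
    constructor
    · intro s hs
      rcases le_or_gt s (t (2*n+1)) with h | h
      · exact hevenb s ⟨hs.1, h⟩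
      · have h1 := hKle s ⟨h.le, hs.2⟩
        nlinarith
    · have h1 := hKle (t (2*n+2)) ⟨hqltw.le, le_refl _⟩
      linarith
  -- iterate
  have hiter : ∀ n : ℕ, ‖U (t (2*n))‖ ≤ d^n * ‖U₀‖ := by
    intro n
    induction n with
    | zero => simp [ht0, hU0]
    | succ k ih =>
      have h1 := (key k).2
      have h2 : 2*(k+1) = 2*k+2 := by ring
      rw [h2]
      calc ‖U (t (2*k+2))‖ ≤ d * ‖U (t (2*k))‖ := h1
        _ ≤ d * (d^k * ‖U₀‖) := mul_le_mul_of_nonneg_left ih hd0.le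
        _ = d^(k+1) * ‖U₀‖ := by ring
  have ht2n : ∀ n : ℕ, t (2*n) = n * T := by
    intro n
    induction n with
    | zero => simpa using ht0
    | succ k ih =>
      have h1 := hT0 k
      have h2 := hTt k
      have h3 : 2*(k+1) = 2*k+2 := by ring
      rw [h3]
      push_cast
      linear_combination ih + h1 + h2 - (k:ℝ) * hT_def - hT_def + (k:ℝ)*hT_def
  -- conclude
  set n := Nat.floor (r / T) with hn_def
  have hrT : 0 ≤ r / T := div_nonneg hr hTpos.le
  have h1 : (n:ℝ) * T ≤ r := by
    have h := Nat.floor_le hrT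
    calc (n:ℝ)*T ≤ (r/T)*T := mul_le_mul_of_nonneg_right h hTpos.le
      _ = r := div_mul_cancel₀ r (ne_of_gt hTpos)
  have h2 : r < ((n:ℝ)+1) * T := by
    have h := Nat.lt_floor_add_one (r/T)
    calc r = (r/T)*T := (div_mul_cancel₀ r (ne_of_gt hTpos)).symm
      _ < ((n:ℝ)+1)*T := mul_lt_mul_of_pos_right h hTpos
  have hmem : r ∈ Set.Icc (t (2*n)) (t (2*n+2)) := by
    constructor
    · rw [ht2n n]; exact h1
    · have h3 : t (2*n+2) = ((n:ℝ)+1)*T := by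
        have h4 := ht2n (n+1)
        rw [show 2*(n+1) = 2*n+2 from by ring] at h4
        rw [h4]; push_cast; ring
      rw [h3]; exact h2.le
  have hUr : ‖U r‖ ≤ d^n * ‖U₀‖ := le_trans ((key n).1 r hmem) (hiter n)
  have hdn : d^n ≤ (1/d) * Real.exp (-(-Real.log d / T) * r) := by
    have hde : Real.exp ((n:ℝ) * Real.log d) = d^n := by
      rw [Real.exp_nat_mul, Real.exp_log hd0]
    have hn1 : r/T - 1 ≤ (n:ℝ) := by
      have := Nat.lt_floor_add_one (r/T); rw [← hn_def] at this; linarith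
    have hmono : (n:ℝ) * Real.log d ≤ (r/T - 1) * Real.log d :=
      mul_le_mul_of_nonpos_right hn1 hlog.le
    have heq2 : Real.exp ((r/T - 1) * Real.log d) = (1/d) * Real.exp (-(-Real.log d / T) * r) := by
      rw [show (r/T - 1) * Real.log d = (-Real.log d) + (-(-Real.log d / T) * r) from by
        field_simp; ring]
      rw [Real.exp_add, Real.exp_neg, Real.exp_log hd0]
      ring
    calc d^n = Real.exp ((n:ℝ) * Real.log d) := hde.symm
      _ ≤ Real.exp ((r/T - 1) * Real.log d) := Real.exp_le_exp.mpr hmono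
      _ = (1/d) * Real.exp (-(-Real.log d / T) * r) := heq2
  calc ‖U r‖ ≤ d^n * ‖U₀‖ := hUr
    _ ≤ (1/d) * Real.exp (-(-Real.log d / T) * r) * ‖U₀‖ :=
      mul_le_mul_of_nonneg_right hdn (norm_nonneg _)
end

section
/- Assume T_{2n} = T⁰ for all n, with T⁰ ≥ τ and T⁰ > T*, and T_{2n+1} = T̃ for all n with T̃ ≤ τ. Set c := M e^{−μ T⁰}, and suppose there is d < 1 such that e^{B_{2n+1} T̃} (c + 1 − e^{−B_{2n+1} T̃}) ≤ d for every n ∈ ℕ. Then there exist constants C > 0 and α > 0, depending only on M, μ, τ, T⁰, T̃ and d, such that every trajectory U of the on–off delay system with initial datum U₀ satisfies ‖U(t)‖ ≤ C e^{−α t} ‖U₀‖ for all t ≥ 0. -/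
open Set Real

lemma aux_norm_growth {H : Type*} [NormedAddCommGroup H] [InnerProductSpace ℝ H]
    (U F : ℝ → H) (a b A : ℝ) (hA : 0 ≤ A)
    (hcont : ContinuousOn U (Set.Icc a b))
    (hderiv : ∀ s ∈ Set.Ioo a b, HasDerivAt U (F s) s)
    (hbound : ∀ s ∈ Set.Ioo a b, (inner ℝ (U s) (F s) : ℝ) ≤ A * ‖U s‖) :
    ∀ s ∈ Set.Icc a b, ‖U s‖ ≤ ‖U a‖ + A * (b - a) := by
  intro s hs
  have hab : a ≤ b := hs.1.trans hs.2
  refine le_of_forall_pos_le_add ?_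
  intro ε hε
  set q : ℝ → H → ℝ := fun x y => (0:ℝ) with hqdef
  have hqpos : ∀ x : ℝ, (0:ℝ) < (inner ℝ (U x) (U x) : ℝ) + ε ^ 2 := by
    intro x
    have h1 : (0:ℝ) ≤ (inner ℝ (U x) (U x) : ℝ) := real_inner_self_nonneg
    nlinarith
  set g : ℝ → ℝ := fun x => Real.sqrt ((inner ℝ (U x) (U x) : ℝ) + ε ^ 2) with hg
  have hUg : ∀ x : ℝ, ‖U x‖ ≤ g x := by
    intro x
    have : ‖U x‖ = Real.sqrt (‖U x‖ ^ 2) := (Real.sqrt_sq (norm_nonneg _)).symm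
    rw [this, hg]
    apply Real.sqrt_le_sqrt
    rw [real_inner_self_eq_norm_sq]
    nlinarith
  have hgpos : ∀ x : ℝ, 0 < g x := fun x => Real.sqrt_pos.mpr (hqpos x)
  -- derivative of g on Ioo
  have hgderiv : ∀ x ∈ Set.Ioo a b,
      HasDerivAt g (((inner ℝ (U x) (F x) : ℝ) + (inner ℝ (F x) (U x) : ℝ)) / (2 * g x)) x := by
    intro x hx
    have h1 : HasDerivAt (fun y => (inner ℝ (U y) (U y) : ℝ))
        ((inner ℝ (U x) (F x) : ℝ) + (inner ℝ (F x) (U x) : ℝ)) x :=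
      HasDerivAt.inner ℝ (hderiv x hx) (hderiv x hx)
    have h2 : HasDerivAt (fun y => (inner ℝ (U y) (U y) : ℝ) + ε ^ 2)
        ((inner ℝ (U x) (F x) : ℝ) + (inner ℝ (F x) (U x) : ℝ)) x := h1.add_const _
    exact h2.sqrt (ne_of_gt (hqpos x))
  -- h is monotone
  set h : ℝ → ℝ := fun x => A * x - g x with hh
  have hcontg : ContinuousOn g (Set.Icc a b) := by
    apply Real.continuous_sqrt.comp_continuousOn
    exact (hcont.inner hcont).add continuousOn_const
  have hmono : MonotoneOn h (Set.Icc a b) := by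
    apply monotoneOn_of_deriv_nonneg (convex_Icc a b)
    · exact (continuousOn_const.mul continuousOn_id).sub hcontg
    · intro x hx
      rw [interior_Icc] at hx
      have := ((hasDerivAt_id x).const_mul A).sub (hgderiv x hx)
      exact this.differentiableAt.differentiableWithinAt
    · intro x hx
      rw [interior_Icc] at hx
      have hD : HasDerivAt h
          (A * 1 - ((inner ℝ (U x) (F x) : ℝ) + (inner ℝ (F x) (U x) : ℝ)) / (2 * g x)) x :=
        ((hasDerivAt_id x).const_mul A).sub (hgderiv x hx)
      rw [hD.deriv]
      have hip : (inner ℝ (U x) (F x) : ℝ) ≤ A * g x := by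
        calc (inner ℝ (U x) (F x) : ℝ) ≤ A * ‖U x‖ := hbound x hx
        _ ≤ A * g x := by nlinarith [hUg x, hgpos x]
      have hcomm : (inner ℝ (F x) (U x) : ℝ) = (inner ℝ (U x) (F x) : ℝ) := real_inner_comm _ _
      rw [hcomm]
      have hgx := hgpos x
      have : ((inner ℝ (U x) (F x) : ℝ) + (inner ℝ (U x) (F x) : ℝ)) / (2 * g x) ≤ A := by
        rw [div_le_iff₀ (by linarith : (0:ℝ) < 2 * g x)]
        nlinarith
      linarith
  have hkey := hmono (Set.left_mem_Icc.mpr hab) hs hs.1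
  have hga : g a ≤ ‖U a‖ + ε := by
    rw [hg]
    have : (inner ℝ (U a) (U a) : ℝ) + ε ^ 2 ≤ (‖U a‖ + ε) ^ 2 := by
      rw [real_inner_self_eq_norm_sq]
      nlinarith [norm_nonneg (U a), le_of_lt hε]
    calc Real.sqrt ((inner ℝ (U a) (U a) : ℝ) + ε ^ 2) ≤ Real.sqrt ((‖U a‖ + ε) ^ 2) :=
      Real.sqrt_le_sqrt this
    _ = ‖U a‖ + ε := Real.sqrt_sq (by positivity)
  have hsb : s ≤ b := hs.2
  have : ‖U s‖ ≤ g s := hUg s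
  simp only [hh] at hkey
  nlinarith [hUg s]


theorem stmt_8
    {H : Type*} [NormedAddCommGroup H] [InnerProductSpace ℝ H]
    (S : ℝ → H →L[ℝ] H) (M μ : ℝ)
    (hM : 1 ≤ M) (hμ : 0 < μ)
    (hS0 : S 0 = ContinuousLinearMap.id ℝ H)
    (hSadd : ∀ s u : ℝ, 0 ≤ s → 0 ≤ u → S (s + u) = (S s).comp (S u))
    (hScont : ∀ x : H, ContinuousOn (fun s => S s x) (Set.Ici (0:ℝ)))
    (hSbound : ∀ s : ℝ, 0 ≤ s → ‖S s‖ ≤ M * Real.exp (-μ * s))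
    (hScontr : ∀ s : ℝ, 0 ≤ s → ∀ x : H, ‖S s x‖ ≤ ‖x‖)
    (t : ℕ → ℝ) (ht0 : t 0 = 0) (htmono : StrictMono t)
    (htlim : Filter.Tendsto t Filter.atTop Filter.atTop)
    (τ : ℝ) (hτ : 0 < τ)
    (B : ℕ → H →L[ℝ] H)
    (T0 Ttil : ℝ)
    (hT0 : ∀ n : ℕ, t (2*n+1) - t (2*n) = T0)
    (hT0τ : τ ≤ T0) (hT0star : Real.log M / μ < T0)
    (hTt : ∀ n : ℕ, t (2*n+2) - t (2*n+1) = Ttil) (hTtτ : Ttil ≤ τ)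
    (d : ℝ) (hd : d < 1)
    (hsup : ∀ n : ℕ,
      Real.exp (‖B n‖*Ttil) * (M * Real.exp (-μ*T0) + 1 - Real.exp (-‖B n‖*Ttil)) ≤ d)
    :
    ∃ C > (0:ℝ), ∃ α > (0:ℝ), ∀ (U : ℝ → H) (U₀ : H) (V : ℝ → H),
      ContinuousOn U (Set.Ici (0:ℝ)) → U 0 = U₀ →
      (∀ n : ℕ, ∀ s ∈ Set.Icc (t (2*n)) (t (2*n+1)),
        U s = S (s - t (2*n)) (U (t (2*n)))) →
      (∀ n : ℕ, ∀ s ∈ Set.Ioo (t (2*n+1)) (t (2*n+2)),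
        HasDerivAt U (V s + B n (U (s - τ))) s) →
      (∀ n : ℕ, ∀ s ∈ Set.Ioo (t (2*n+1)) (t (2*n+2)),
        (inner ℝ (U s) (V s) : ℝ) ≤ 0) →
      ∀ r : ℝ, 0 ≤ r → ‖U r‖ ≤ C * Real.exp (-α * r) * ‖U₀‖ := by
  have hT0pos : (0:ℝ) < T0 := lt_of_lt_of_le hτ hT0τ
  have hTtpos : (0:ℝ) < Ttil := by
    have h1 := hTt 0
    have h2 : t 1 < t 2 := htmono (by norm_num)
    simp only [Nat.mul_zero, Nat.zero_add] at h1
    linarith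
  set c : ℝ := M * Real.exp (-μ * T0) with hcdef
  have hMpos : (0:ℝ) < M := by linarith
  have hc0 : (0:ℝ) < c := by positivity
  have hc1 : c < 1 := by
    have h1 : Real.log M < μ * T0 := by
      rw [div_lt_iff₀ hμ] at hT0star; linarith [hT0star]
    have h2 : M < Real.exp (μ * T0) := by
      calc M = Real.exp (Real.log M) := (Real.exp_log hMpos).symm
      _ < Real.exp (μ * T0) := Real.exp_lt_exp.mpr h1
    have h3 : Real.exp (-μ * T0) = (Real.exp (μ * T0))⁻¹ := by
      rw [← Real.exp_neg]; ring_nf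
    rw [hcdef, h3]
    rw [mul_inv_lt_iff₀ (Real.exp_pos _)]
    linarith
  have hexpmul : ∀ n : ℕ, Real.exp (‖B n‖*Ttil) * Real.exp (-‖B n‖*Ttil) = 1 := by
    intro n
    rw [← Real.exp_add]
    ring_nf
    exact Real.exp_zero
  have key : ∀ n : ℕ, c + ‖B n‖ * Ttil ≤ d := by
    intro n
    have hx : (0:ℝ) ≤ ‖B n‖ * Ttil := by positivity
    have h1 := hsup n
    have h2 : ‖B n‖ * Ttil + 1 ≤ Real.exp (‖B n‖ * Ttil) := Real.add_one_le_exp _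
    have h3 := hexpmul n
    have h4 : (1:ℝ) ≤ Real.exp (‖B n‖ * Ttil) := by linarith
    nlinarith [Real.exp_pos (‖B n‖ * Ttil)]
  have hcd : c ≤ d := by
    have := key 0
    nlinarith [norm_nonneg (B 0)]
  have hd0 : (0:ℝ) < d := lt_of_lt_of_le hc0 hcd
  set L : ℝ := T0 + Ttil with hLdef
  have hL : (0:ℝ) < L := by linarith
  have htnn : ∀ n : ℕ, (0:ℝ) ≤ t n := by
    intro n; rw [← ht0]; exact htmono.monotone (Nat.zero_le n)
  have ht2n : ∀ n : ℕ, t (2*n) = n * L := by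
    intro n
    induction n with
    | zero => simpa using ht0
    | succ k ih =>
      have h1 := hT0 k
      have h2 := hTt k
      have h3 : 2 * (k+1) = 2*k+2 := by ring
      rw [h3]
      push_cast
      nlinarith [h1, h2, ih]
  have ht2n1 : ∀ n : ℕ, t (2*n+1) = n * L + T0 := by
    intro n
    have h1 := hT0 n
    have := ht2n n
    linarith
  have hlogd : Real.log d < 0 := Real.log_neg hd0 hd
  refine ⟨d⁻¹, by positivity, -Real.log d / L, div_pos (by linarith) hL, ?_⟩
  intro U U₀ V hUcont hU0 heven hODE hdiss r hr
  -- even-interval bound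
  have hev : ∀ n : ℕ, ∀ s ∈ Set.Icc (t (2*n)) (t (2*n+1)), ‖U s‖ ≤ ‖U (t (2*n))‖ := by
    intro n s hs
    rw [heven n s hs]
    exact hScontr _ (by linarith [hs.1, htnn (2*n)]) _
  -- end-of-even bound
  have hend : ∀ n : ℕ, ‖U (t (2*n+1))‖ ≤ c * ‖U (t (2*n))‖ := by
    intro n
    have hmem : t (2*n+1) ∈ Set.Icc (t (2*n)) (t (2*n+1)) :=
      Set.right_mem_Icc.mpr (le_of_lt (htmono (by omega)))
    rw [heven n _ hmem, hT0 n]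
    calc ‖S T0 (U (t (2*n)))‖ ≤ ‖S T0‖ * ‖U (t (2*n))‖ := (S T0).le_opNorm _
    _ ≤ c * ‖U (t (2*n))‖ := by
        apply mul_le_mul_of_nonneg_right (hSbound T0 (le_of_lt hT0pos)) (norm_nonneg _)
  -- odd-interval bound
  have hodd : ∀ n : ℕ, ∀ s ∈ Set.Icc (t (2*n+1)) (t (2*n+2)),
      ‖U s‖ ≤ d * ‖U (t (2*n))‖ := by
    intro n s hs
    have hab : t (2*n+1) ≤ t (2*n+2) := le_of_lt (htmono (by omega))
    have hgrow := aux_norm_growth U (fun x => V x + B n (U (x - τ)))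
      (t (2*n+1)) (t (2*n+2)) (‖B n‖ * ‖U (t (2*n))‖) (by positivity)
      (hUcont.mono (fun x hx => by
        simp only [Set.mem_Ici]
        exact le_trans (htnn (2*n+1)) hx.1))
      (hODE n) ?_ s hs
    · have h1 := hend n
      have h2 := hTt n
      have h3 := key n
      have h4 : (0:ℝ) ≤ ‖U (t (2*n))‖ := norm_nonneg _
      calc ‖U s‖ ≤ ‖U (t (2*n+1))‖ + ‖B n‖ * ‖U (t (2*n))‖ * (t (2*n+2) - t (2*n+1)) := hgrow
      _ ≤ c * ‖U (t (2*n))‖ + ‖B n‖ * ‖U (t (2*n))‖ * Ttil := by rw [h2]; linarith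
      _ = (c + ‖B n‖ * Ttil) * ‖U (t (2*n))‖ := by ring
      _ ≤ d * ‖U (t (2*n))‖ := mul_le_mul_of_nonneg_right h3 h4
    · intro x hx
      have hτmem : x - τ ∈ Set.Icc (t (2*n)) (t (2*n+1)) := by
        constructor
        · have := hT0 n; linarith [hx.1]
        · have := hTt n; linarith [hx.2]
      have hUd : ‖U (x - τ)‖ ≤ ‖U (t (2*n))‖ := hev n _ hτmem
      have h1 : (inner ℝ (U x) (V x + B n (U (x - τ))) : ℝ)
          = (inner ℝ (U x) (V x) : ℝ) + (inner ℝ (U x) (B n (U (x - τ))) : ℝ) :=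
        inner_add_right _ _ _
      have h2 : (inner ℝ (U x) (V x) : ℝ) ≤ 0 := hdiss n x hx
      have h3 : (inner ℝ (U x) (B n (U (x - τ))) : ℝ) ≤ ‖U x‖ * ‖B n (U (x - τ))‖ :=
        real_inner_le_norm _ _
      have h4 : ‖B n (U (x - τ))‖ ≤ ‖B n‖ * ‖U (x - τ)‖ := (B n).le_opNorm _
      have h5 : (0:ℝ) ≤ ‖U x‖ := norm_nonneg _
      have h6 : (0:ℝ) ≤ ‖B n‖ := norm_nonneg _
      have h7 : ‖U x‖ * ‖B n (U (x - τ))‖ ≤ ‖U x‖ * (‖B n‖ * ‖U (x - τ)‖) :=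
        mul_le_mul_of_nonneg_left h4 h5
      have h8 : ‖U x‖ * (‖B n‖ * ‖U (x - τ)‖) ≤ ‖U x‖ * (‖B n‖ * ‖U (t (2*n))‖) :=
        mul_le_mul_of_nonneg_left (mul_le_mul_of_nonneg_left hUd h6) h5
      rw [h1]
      nlinarith
  -- geometric decay at sampling times
  have han : ∀ n : ℕ, ‖U (t (2*n))‖ ≤ d ^ n * ‖U₀‖ := by
    intro n
    induction n with
    | zero => simp [ht0, hU0]
    | succ k ih =>
      have h3 : 2 * (k+1) = 2*k+2 := by ring
      rw [h3]
      have hmem : t (2*k+2) ∈ Set.Icc (t (2*k+1)) (t (2*k+2)) :=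
        Set.right_mem_Icc.mpr (le_of_lt (htmono (by omega)))
      calc ‖U (t (2*k+2))‖ ≤ d * ‖U (t (2*k))‖ := hodd k _ hmem
      _ ≤ d * (d ^ k * ‖U₀‖) := mul_le_mul_of_nonneg_left ih (le_of_lt hd0)
      _ = d ^ (k+1) * ‖U₀‖ := by ring
  -- pointwise bound on each two-interval block
  have hpt : ∀ n : ℕ, ∀ s ∈ Set.Icc (t (2*n)) (t (2*n+2)), ‖U s‖ ≤ d ^ n * ‖U₀‖ := by
    intro n s hs
    by_cases hcase : s ≤ t (2*n+1)
    · calc ‖U s‖ ≤ ‖U (t (2*n))‖ := hev n s ⟨hs.1, hcase⟩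
      _ ≤ d ^ n * ‖U₀‖ := han n
    · have h1 : ‖U s‖ ≤ d * ‖U (t (2*n))‖ := hodd n s ⟨le_of_not_ge hcase, hs.2⟩
      have h2 := han n
      have h3 : d * ‖U (t (2*n))‖ ≤ d * (d ^ n * ‖U₀‖) :=
        mul_le_mul_of_nonneg_left h2 (le_of_lt hd0)
      have h4 : d * (d ^ n * ‖U₀‖) ≤ 1 * (d ^ n * ‖U₀‖) :=
        mul_le_mul_of_nonneg_right (le_of_lt hd) (by positivity)
      linarith
  -- locate r
  obtain ⟨n, hn1, hn2⟩ : ∃ n : ℕ, (n:ℝ) * L ≤ r ∧ r < ((n:ℝ) + 1) * L := by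
    refine ⟨⌊r / L⌋₊, ?_, ?_⟩
    · have h := Nat.floor_le (div_nonneg hr (le_of_lt hL))
      calc ((⌊r / L⌋₊:ℕ):ℝ) * L ≤ (r / L) * L := mul_le_mul_of_nonneg_right h (le_of_lt hL)
      _ = r := by field_simp
    · have h := Nat.lt_floor_add_one (r / L)
      calc r = (r / L) * L := by field_simp
      _ < (((⌊r / L⌋₊:ℕ):ℝ) + 1) * L := mul_lt_mul_of_pos_right h hL
  have hrmem : r ∈ Set.Icc (t (2*n)) (t (2*n+2)) := by
    constructor
    · rw [ht2n n]; exact hn1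
    · have h3 : 2*n+2 = 2*(n+1) := by ring
      rw [h3, ht2n (n+1)]
      push_cast
      linarith
  have hUr : ‖U r‖ ≤ d ^ n * ‖U₀‖ := hpt n r hrmem
  -- compare with exponential
  have hdn : d ^ n ≤ d⁻¹ * Real.exp (-(-Real.log d / L) * r) := by
    have hfrac : r / L - 1 ≤ (n:ℝ) := by
      have : r / L < (n:ℝ) + 1 := by
        rw [div_lt_iff₀ hL]; linarith
      linarith
    have h1 : d ^ n = Real.exp ((n:ℝ) * Real.log d) := by
      rw [Real.exp_nat_mul, Real.exp_log hd0]
    have h2 : (n:ℝ) * Real.log d ≤ (r / L - 1) * Real.log d :=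
      mul_le_mul_of_nonpos_right hfrac (le_of_lt hlogd)
    have h3 : Real.exp ((r / L - 1) * Real.log d)
        = d⁻¹ * Real.exp (-(-Real.log d / L) * r) := by
      rw [show (r / L - 1) * Real.log d = -Real.log d + (-(-Real.log d / L) * r) by
        field_simp [hL.ne']; ring]
      rw [Real.exp_add, Real.exp_neg, Real.exp_log hd0]
    rw [h1, ← h3]
    exact Real.exp_le_exp.mpr h2
  calc ‖U r‖ ≤ d ^ n * ‖U₀‖ := hUr
  _ ≤ (d⁻¹ * Real.exp (-(-Real.log d / L) * r)) * ‖U₀‖ :=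
      mul_le_mul_of_nonneg_right hdn (norm_nonneg _)
  _ = d⁻¹ * Real.exp (-(-Real.log d / L) * r) * ‖U₀‖ := by ring
end

section
/- Assume T_{2n} > T* for all n ∈ ℕ and set c_n := M² e^{−2μ T_{2n}}. If the partial sums ∑_{n=0}^{N} ln( e^{2 D_{2n+1} T_{2n+1}} c_n ) tend to −∞ as N → ∞, then every trajectory U of the on–off anti-damped system satisfies ‖U(t)‖ → 0 as t → +∞. -/
open Real Set Filter

lemma gronwall_aux {H : Type*} [NormedAddCommGroup H] [InnerProductSpace ℝ H]
    {U V : ℝ → H} {Dop : H →L[ℝ] H} {a b : ℝ} (hab : a ≤ b)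
    (hc : ContinuousOn U (Set.Icc a b))
    (hderiv : ∀ s ∈ Set.Ioo a b, HasDerivAt U (V s + Dop (U s)) s)
    (hdiss : ∀ s ∈ Set.Ioo a b, (inner ℝ (U s) (V s) : ℝ) ≤ 0) :
    ∀ s ∈ Set.Icc a b, ‖U s‖^2 ≤ Real.exp (2*‖Dop‖*(s-a)) * ‖U a‖^2 := by
  set K : ℝ := 2 * ‖Dop‖ with hK
  set g : ℝ → ℝ := fun s => Real.exp (-(K*s)) * (inner ℝ (U s) (U s) : ℝ) with hg
  have hEderiv : ∀ x : ℝ, HasDerivAt (fun s => Real.exp (-(K*s))) (-K * Real.exp (-(K*x))) x := by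
    intro x
    have h1 : HasDerivAt (fun s : ℝ => -(K*s)) (-K) x := by
      simpa using ((hasDerivAt_id x).const_mul K).fun_neg
    simpa [mul_comm] using h1.exp
  have hgderiv : ∀ x ∈ Set.Ioo a b, HasDerivAt g
      (-K * Real.exp (-(K*x)) * (inner ℝ (U x) (U x) : ℝ)
        + Real.exp (-(K*x)) * ((inner ℝ (U x) (V x + Dop (U x)) : ℝ)
          + (inner ℝ (V x + Dop (U x)) (U x) : ℝ))) x := by
    intro x hx
    exact (hEderiv x).mul ((hderiv x hx).inner ℝ (hderiv x hx))
  have hg'le : ∀ x ∈ Set.Ioo a b, deriv g x ≤ 0 := by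
    intro x hx
    rw [(hgderiv x hx).deriv]
    have h1 : (inner ℝ (U x) (V x + Dop (U x)) : ℝ) ≤ ‖Dop‖ * ‖U x‖^2 := by
      have h2 : (inner ℝ (U x) (Dop (U x)) : ℝ) ≤ ‖Dop‖ * ‖U x‖^2 := by
        calc (inner ℝ (U x) (Dop (U x)) : ℝ) ≤ ‖U x‖ * ‖Dop (U x)‖ := real_inner_le_norm _ _
        _ ≤ ‖U x‖ * (‖Dop‖ * ‖U x‖) := by
            exact mul_le_mul_of_nonneg_left (Dop.le_opNorm _) (norm_nonneg _)
        _ = ‖Dop‖ * ‖U x‖^2 := by ring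
      calc (inner ℝ (U x) (V x + Dop (U x)) : ℝ)
          = (inner ℝ (U x) (V x) : ℝ) + (inner ℝ (U x) (Dop (U x)) : ℝ) := inner_add_right _ _ _
        _ ≤ 0 + ‖Dop‖ * ‖U x‖^2 := add_le_add (hdiss x hx) h2
        _ = ‖Dop‖ * ‖U x‖^2 := by ring
    have h3 : (inner ℝ (V x + Dop (U x)) (U x) : ℝ) ≤ ‖Dop‖ * ‖U x‖^2 := by
      rw [real_inner_comm]; exact h1
    have h4 : (inner ℝ (U x) (U x) : ℝ) = ‖U x‖^2 := real_inner_self_eq_norm_sq _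
    have h5 : (0:ℝ) < Real.exp (-(K*x)) := Real.exp_pos _
    have h6 := mul_le_mul_of_nonneg_left (add_le_add h1 h3) h5.le
    rw [h4, hK]
    nlinarith [h6]
  have hgcont : ContinuousOn g (Set.Icc a b) := by
    apply ContinuousOn.mul
    · exact (Real.continuous_exp.comp (continuous_const.mul continuous_id).neg).continuousOn
    · exact hc.inner hc
  have hanti : AntitoneOn g (Set.Icc a b) := by
    apply antitoneOn_of_deriv_nonpos (convex_Icc a b) hgcont
    · intro x hx
      rw [interior_Icc] at hx
      exact ((hgderiv x hx).differentiableAt).differentiableWithinAt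
    · intro x hx
      rw [interior_Icc] at hx
      exact hg'le x hx
  intro s hs
  have hga : g s ≤ g a := hanti (left_mem_Icc.2 hab) hs hs.1
  have h4 : ∀ y : ℝ, (inner ℝ (U y) (U y) : ℝ) = ‖U y‖^2 := fun y => real_inner_self_eq_norm_sq _
  rw [hg] at hga
  simp only [h4] at hga
  have := mul_le_mul_of_nonneg_left hga (Real.exp_nonneg (K*s))
  calc ‖U s‖^2 = Real.exp (K*s) * (Real.exp (-(K*s)) * ‖U s‖^2) := by
        rw [← mul_assoc, ← Real.exp_add]; simp
    _ ≤ Real.exp (K*s) * (Real.exp (-(K*a)) * ‖U a‖^2) := this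
    _ = Real.exp (K*(s-a)) * ‖U a‖^2 := by rw [← mul_assoc, ← Real.exp_add]; ring_nf

theorem stmt_10
    {H : Type*} [NormedAddCommGroup H] [InnerProductSpace ℝ H]
    (S : ℝ → H →L[ℝ] H) (M μ : ℝ)
    (hM : 1 ≤ M) (hμ : 0 < μ)
    (hS0 : S 0 = ContinuousLinearMap.id ℝ H)
    (hSadd : ∀ s u : ℝ, 0 ≤ s → 0 ≤ u → S (s + u) = (S s).comp (S u))
    (hScont : ∀ x : H, ContinuousOn (fun s => S s x) (Set.Ici (0:ℝ)))
    (hSbound : ∀ s : ℝ, 0 ≤ s → ‖S s‖ ≤ M * Real.exp (-μ * s))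
    (hScontr : ∀ s : ℝ, 0 ≤ s → ∀ x : H, ‖S s x‖ ≤ ‖x‖)
    (t : ℕ → ℝ) (ht0 : t 0 = 0) (htmono : StrictMono t)
    (htlim : Filter.Tendsto t Filter.atTop Filter.atTop)
    (D : ℕ → H →L[ℝ] H)
    (hDpos : ∀ (n : ℕ) (x : H), (0:ℝ) ≤ inner ℝ (D n x) x)
    (hT2nstar : ∀ n : ℕ, Real.log M / μ < t (2*n+1) - t (2*n))
    (hdiv : Filter.Tendsto
      (fun N => ∑ n ∈ Finset.range (N+1),
        Real.log (Real.exp (2*‖D n‖*(t (2*n+2) - t (2*n+1))) *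
          (M^2 * Real.exp (-2*μ*(t (2*n+1) - t (2*n))))))
      Filter.atTop Filter.atBot)
    (U : ℝ → H) (U₀ : H) (V : ℝ → H)
    (hUcont : ContinuousOn U (Set.Ici (0:ℝ))) (hU0 : U 0 = U₀)
    (hUeven : ∀ n : ℕ, ∀ s ∈ Set.Icc (t (2*n)) (t (2*n+1)),
      U s = S (s - t (2*n)) (U (t (2*n))))
    (hUodd : ∀ n : ℕ, ∀ s ∈ Set.Ioo (t (2*n+1)) (t (2*n+2)),
      HasDerivAt U (V s + D n (U s)) s)
    (hdiss : ∀ n : ℕ, ∀ s ∈ Set.Ioo (t (2*n+1)) (t (2*n+2)),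
      (inner ℝ (U s) (V s) : ℝ) ≤ 0)
    :
    Filter.Tendsto (fun r => ‖U r‖) Filter.atTop (nhds 0) := by
  have hM0 : (0:ℝ) < M := lt_of_lt_of_le one_pos hM
  have htnn : ∀ n, 0 ≤ t n := by
    intro n; rw [← ht0]; exact htmono.monotone (Nat.zero_le n)
  set F : ℕ → ℝ := fun n => Real.exp (2*‖D n‖*(t (2*n+2) - t (2*n+1))) *
      (M^2 * Real.exp (-2*μ*(t (2*n+1) - t (2*n)))) with hF
  have hFpos : ∀ n, 0 < F n := by
    intro n
    exact mul_pos (Real.exp_pos _) (mul_pos (pow_pos hM0 2) (Real.exp_pos _))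
  set P : ℕ → ℝ := fun n => ∏ k ∈ Finset.range n, F k with hP
  have hPpos : ∀ n, 0 < P n := fun n => Finset.prod_pos (fun k _ => hFpos k)
  -- product of F tends to 0
  have hPlim : Tendsto P atTop (nhds 0) := by
    have key : ∀ N, P (N+1) = Real.exp (∑ n ∈ Finset.range (N+1), Real.log (F n)) := by
      intro N
      rw [Real.exp_sum]
      exact (Finset.prod_congr rfl fun n _ => (Real.exp_log (hFpos n)).symm)
    have h1 : Tendsto (fun N => P (N+1)) atTop (nhds 0) := by
      have h2 := Real.tendsto_exp_atBot.comp hdiv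
      refine h2.congr fun N => ?_
      rw [key N]; rfl
    exact (tendsto_add_atTop_iff_nat 1).1 h1
  set a : ℕ → ℝ := fun n => ‖U (t (2*n))‖^2 with ha
  have hann : ∀ n, 0 ≤ a n := fun n => sq_nonneg _
  -- even interval contraction
  have hcontr : ∀ n, ∀ s ∈ Set.Icc (t (2*n)) (t (2*n+1)), ‖U s‖^2 ≤ a n := by
    intro n s hs
    rw [hUeven n s hs]
    have h1 : ‖S (s - t (2*n)) (U (t (2*n)))‖ ≤ ‖U (t (2*n))‖ :=
      hScontr _ (by linarith [hs.1]) _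
    exact pow_le_pow_left₀ (norm_nonneg _) h1 2
  -- decay across even interval
  have hmid : ∀ n, ‖U (t (2*n+1))‖^2 ≤ M^2 * Real.exp (-2*μ*(t (2*n+1) - t (2*n))) * a n := by
    intro n
    have hle : t (2*n) ≤ t (2*n+1) := (htmono (by omega)).le
    have hT : 0 ≤ t (2*n+1) - t (2*n) := by linarith
    rw [hUeven n _ ⟨hle, le_refl _⟩]
    have h1 : ‖S (t (2*n+1) - t (2*n)) (U (t (2*n)))‖ ≤
        (M * Real.exp (-μ * (t (2*n+1) - t (2*n)))) * ‖U (t (2*n))‖ := by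
      calc ‖S (t (2*n+1) - t (2*n)) (U (t (2*n)))‖
          ≤ ‖S (t (2*n+1) - t (2*n))‖ * ‖U (t (2*n))‖ := (S _).le_opNorm _
        _ ≤ (M * Real.exp (-μ * (t (2*n+1) - t (2*n)))) * ‖U (t (2*n))‖ :=
            mul_le_mul_of_nonneg_right (hSbound _ hT) (norm_nonneg _)
    have h2 := pow_le_pow_left₀ (norm_nonneg _) h1 2
    calc ‖S (t (2*n+1) - t (2*n)) (U (t (2*n)))‖^2
        ≤ ((M * Real.exp (-μ * (t (2*n+1) - t (2*n)))) * ‖U (t (2*n))‖)^2 := h2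
      _ = M^2 * Real.exp (-2*μ*(t (2*n+1) - t (2*n))) * a n := by
          rw [mul_pow, mul_pow, sq (Real.exp _), ← Real.exp_add, ha]
          ring_nf
  -- odd interval Gronwall bound
  have hodd : ∀ n, ∀ s ∈ Set.Icc (t (2*n+1)) (t (2*n+2)),
      ‖U s‖^2 ≤ Real.exp (2*‖D n‖*(t (2*n+2) - t (2*n+1))) * ‖U (t (2*n+1))‖^2 := by
    intro n s hs
    have hab : t (2*n+1) ≤ t (2*n+2) := (htmono (by omega)).le
    have hsub : Set.Icc (t (2*n+1)) (t (2*n+2)) ⊆ Set.Ici (0:ℝ) := by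
      intro x hx; exact le_trans (htnn _) hx.1
    have h1 := gronwall_aux hab (hUcont.mono hsub) (hUodd n) (hdiss n) s hs
    calc ‖U s‖^2 ≤ Real.exp (2*‖D n‖*(s - t (2*n+1))) * ‖U (t (2*n+1))‖^2 := h1
      _ ≤ Real.exp (2*‖D n‖*(t (2*n+2) - t (2*n+1))) * ‖U (t (2*n+1))‖^2 := by
          apply mul_le_mul_of_nonneg_right _ (sq_nonneg _)
          apply Real.exp_le_exp.2
          have := hs.2
          nlinarith [norm_nonneg (D n), hs.2]
  -- step estimate
  have hstep : ∀ n, a (n+1) ≤ F n * a n := by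
    intro n
    have h2 : (2*(n+1)) = 2*n+2 := by ring
    have h1 : a (n+1) = ‖U (t (2*n+2))‖^2 := by rw [ha]; simp only [h2]
    rw [h1]
    have hab : t (2*n+1) ≤ t (2*n+2) := (htmono (by omega)).le
    calc ‖U (t (2*n+2))‖^2
        ≤ Real.exp (2*‖D n‖*(t (2*n+2) - t (2*n+1))) * ‖U (t (2*n+1))‖^2 :=
          hodd n _ ⟨hab, le_refl _⟩
      _ ≤ Real.exp (2*‖D n‖*(t (2*n+2) - t (2*n+1))) *
            (M^2 * Real.exp (-2*μ*(t (2*n+1) - t (2*n))) * a n) :=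
          mul_le_mul_of_nonneg_left (hmid n) (Real.exp_nonneg _)
      _ = F n * a n := by rw [hF]; ring
  have haP : ∀ n, a n ≤ P n * a 0 := by
    intro n
    induction n with
    | zero => simp [hP]
    | succ n ih =>
      calc a (n+1) ≤ F n * a n := hstep n
        _ ≤ F n * (P n * a 0) := mul_le_mul_of_nonneg_left ih (hFpos n).le
        _ = P (n+1) * a 0 := by simp only [hP, Finset.prod_range_succ]; ring
  -- uniform bound on [t(2n), t(2n+2)]
  have hkey : ∀ n, ∀ s ∈ Set.Icc (t (2*n)) (t (2*n+2)),
      ‖U s‖^2 ≤ P n * a 0 + P (n+1) * a 0 := by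
    intro n s hs
    have hP1 : 0 ≤ P n * a 0 := mul_nonneg (hPpos n).le (hann 0)
    have hP2 : 0 ≤ P (n+1) * a 0 := mul_nonneg (hPpos (n+1)).le (hann 0)
    rcases le_or_gt s (t (2*n+1)) with hle | hlt
    · calc ‖U s‖^2 ≤ a n := hcontr n s ⟨hs.1, hle⟩
        _ ≤ P n * a 0 := haP n
        _ ≤ P n * a 0 + P (n+1) * a 0 := by linarith
    · calc ‖U s‖^2
          ≤ Real.exp (2*‖D n‖*(t (2*n+2) - t (2*n+1))) * ‖U (t (2*n+1))‖^2 :=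
            hodd n s ⟨hlt.le, hs.2⟩
        _ ≤ Real.exp (2*‖D n‖*(t (2*n+2) - t (2*n+1))) *
              (M^2 * Real.exp (-2*μ*(t (2*n+1) - t (2*n))) * a n) :=
            mul_le_mul_of_nonneg_left (hmid n) (Real.exp_nonneg _)
        _ = F n * a n := by rw [hF]; ring
        _ ≤ F n * (P n * a 0) := mul_le_mul_of_nonneg_left (haP n) (hFpos n).le
        _ = P (n+1) * a 0 := by simp only [hP, Finset.prod_range_succ]; ring
        _ ≤ P n * a 0 + P (n+1) * a 0 := by linarith
  -- the envelope tends to 0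
  have hQlim : Tendsto (fun n => P n * a 0 + P (n+1) * a 0) atTop (nhds 0) := by
    have h1 : Tendsto (fun n => P n * a 0) atTop (nhds (0 * a 0)) := hPlim.mul_const _
    have h2 : Tendsto (fun n => P (n+1) * a 0) atTop (nhds (0 * a 0)) :=
      (hPlim.comp (tendsto_add_atTop_nat 1)).mul_const _
    simpa using h1.add h2
  -- conclude
  rw [Metric.tendsto_atTop]
  intro ε hε
  obtain ⟨N, hN⟩ := (Metric.tendsto_atTop.1 hQlim (ε^2) (by positivity))
  refine ⟨t (2*N), fun r hr => ?_⟩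
  have hex : ∃ m, r < t (2*(N+m)+2) := by
    obtain ⟨k, hk⟩ := (htlim.eventually_gt_atTop r).exists
    exact ⟨k, lt_of_lt_of_le hk (htmono.monotone (by omega))⟩
  have hjub : r < t (2*(N + Nat.find hex)+2) := Nat.find_spec hex
  have hjlb : t (2*(N + Nat.find hex)) ≤ r := by
    rcases Nat.eq_zero_or_pos (Nat.find hex) with h0 | hpos
    · rw [h0]; simpa using hr
    · have h1 : ¬ (r < t (2*(N + (Nat.find hex - 1))+2)) := Nat.find_min hex (by omega)
      have h2 : 2*(N + (Nat.find hex - 1))+2 = 2*(N + Nat.find hex) := by omega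
      rw [h2] at h1; exact not_lt.1 h1
  have hbound := hkey (N + Nat.find hex) r ⟨hjlb, hjub.le⟩
  have hQ : P (N + Nat.find hex) * a 0 + P (N + Nat.find hex + 1) * a 0 < ε^2 := by
    have := hN (N + Nat.find hex) (by omega)
    rw [Real.dist_eq, sub_zero] at this
    exact lt_of_le_of_lt (le_abs_self _) this
  have hfin : ‖U r‖^2 < ε^2 := lt_of_le_of_lt hbound hQ
  have : ‖U r‖ < ε := lt_of_pow_lt_pow_left₀ 2 hε.le hfin
  rw [Real.dist_eq, sub_zero, abs_of_nonneg (norm_nonneg _)]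
  exact this
end

section
/- Assume T_{2n} ≥ τ and T_{2n} > T* for all n ∈ ℕ, and set c_n := M² e^{−2μ T_{2n}}. Then every trajectory U of the on–off delay system satisfies, for every n ∈ ℕ, the one-step estimate ‖U(t_{2n+2})‖² ≤ e^{2 B_{2n+1} T_{2n+1}} (c_n + T_{2n+1} B_{2n+1}) ‖U(t_{2n})‖². -/
open Real Set Filter Topology

private lemma gronwall_aux_s12 {f G : ℝ → ℝ} {t1 t2 : ℝ} (h12 : t1 < t2)
    (hfc : ContinuousOn f (Set.Icc t1 t2))
    (hGc : Continuous G)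
    (hG1 : f t1 < G t1)
    (hkey : ∀ s ∈ Set.Ioo t1 t2, (∀ r ∈ Set.Icc t1 s, f r ≤ G r) → f s = G s →
      ∃ d d', HasDerivAt f d s ∧ HasDerivAt G d' s ∧ d < d') :
    ∀ s ∈ Set.Icc t1 t2, f s ≤ G s := by
  by_contra hcon
  push_neg at hcon
  obtain ⟨b, hb, hfb⟩ := hcon
  set Q : Set ℝ := {q | q ∈ Set.Icc t1 t2 ∧ G q < f q} with hQdef
  have hQne : Q.Nonempty := ⟨b, hb, hfb⟩
  have hQbdd : BddBelow Q := ⟨t1, fun q hq => hq.1.1⟩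
  set s := sInf Q with hsdef
  have hsle : ∀ q ∈ Q, s ≤ q := fun q hq => csInf_le hQbdd hq
  have hs1 : t1 ≤ s := le_csInf hQne fun q hq => hq.1.1
  have hs2 : s ≤ t2 := (hsle b ⟨hb, hfb⟩).trans hb.2
  have hsIcc : s ∈ Set.Icc t1 t2 := ⟨hs1, hs2⟩
  have hhist : ∀ r ∈ Set.Ico t1 s, f r ≤ G r := by
    intro r hr
    by_contra h
    push_neg at h
    exact absurd (hsle r ⟨⟨hr.1, hr.2.le.trans hs2⟩, h⟩) (not_le.mpr hr.2)
  have hGf : G s ≤ f s := by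
    have hcl : s ∈ closure Q := csInf_mem_closure hQne hQbdd
    haveI hne : (𝓝[Q] s).NeBot := mem_closure_iff_nhdsWithin_neBot.mp hcl
    have hQsub : Q ⊆ Set.Icc t1 t2 := fun q hq => hq.1
    have hft : Filter.Tendsto (fun x => f x - G x) (𝓝[Q] s) (𝓝 (f s - G s)) :=
      ((hfc s hsIcc).mono hQsub).sub hGc.continuousWithinAt
    have h0 : (0:ℝ) ≤ f s - G s := by
      refine ge_of_tendsto hft ?_
      filter_upwards [self_mem_nhdsWithin] with q hq
      exact (sub_pos.mpr hq.2).le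
    linarith
  have ht1s : t1 < s := by
    rcases eq_or_lt_of_le hs1 with h | h
    · exfalso
      have := hGf
      rw [← h] at this
      linarith
    · exact h
  have hfGs : f s = G s := by
    have hle : f s ≤ G s := by
      haveI hne : (𝓝[Set.Ico t1 s] s).NeBot := by
        refine mem_closure_iff_nhdsWithin_neBot.mp ?_
        rw [closure_Ico (ne_of_lt ht1s)]
        exact ⟨ht1s.le, le_rfl⟩
      have hsub : Set.Ico t1 s ⊆ Set.Icc t1 t2 := fun r hr => ⟨hr.1, hr.2.le.trans hs2⟩
      have hft : Filter.Tendsto (fun x => f x - G x) (𝓝[Set.Ico t1 s] s) (𝓝 (f s - G s)) :=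
        ((hfc s hsIcc).mono hsub).sub hGc.continuousWithinAt
      have h0 : f s - G s ≤ 0 := by
        refine le_of_tendsto hft ?_
        filter_upwards [self_mem_nhdsWithin] with r hr
        exact sub_nonpos.mpr (hhist r hr)
      linarith
    linarith
  have hst2 : s < t2 := by
    rcases eq_or_lt_of_le hs2 with h | h
    · exfalso
      obtain ⟨q, hq⟩ := hQne
      have hq1 : s ≤ q := hsle q hq
      have hq2 : q ≤ t2 := hq.1.2
      have hqs : q = s := le_antisymm (by rw [h]; exact hq2) hq1
      rw [hqs] at hq
      linarith [hq.2]
    · exact h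
  have hhist' : ∀ r ∈ Set.Icc t1 s, f r ≤ G r := by
    intro r hr
    rcases eq_or_lt_of_le hr.2 with h | h
    · rw [h, hfGs]
    · exact hhist r ⟨hr.1, h⟩
  obtain ⟨d, d', hd, hd', hdd⟩ := hkey s ⟨ht1s, hst2⟩ hhist' hfGs
  have hφ : HasDerivAt (fun x => f x - G x) (d - d') s := hd.sub hd'
  have hslope := hasDerivAt_iff_tendsto_slope.mp hφ
  have hev : ∀ᶠ z in 𝓝[>] s, slope (fun x => f x - G x) s z < 0 := by
    have h1 : ∀ᶠ z in 𝓝[≠] s, slope (fun x => f x - G x) s z < 0 :=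
      hslope.eventually (gt_mem_nhds (by linarith))
    exact h1.filter_mono (nhdsWithin_mono s fun x hx => ne_of_gt hx)
  obtain ⟨u, hu, huo⟩ := mem_nhdsGT_iff_exists_Ioo_subset.mp hev
  have hneg : ∀ z ∈ Set.Ioo s u, f z < G z := by
    intro z hz
    have h1 : slope (fun x => f x - G x) s z < 0 := huo hz
    rw [slope_def_field] at h1
    have h2 : 0 < z - s := sub_pos.mpr hz.1
    have h3 : (f z - G z) - (f s - G s) < 0 := by
      by_contra h
      push_neg at h
      exact absurd h1 (not_lt.mpr (div_nonneg h h2.le))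
    rw [hfGs] at h3
    linarith
  have hlb : ∀ q ∈ Q, u ≤ q := by
    intro q hq
    have hqs : s < q := by
      rcases eq_or_lt_of_le (hsle q hq) with h | h
      · exfalso; rw [← h] at hq; linarith [hq.2, hfGs]
      · exact h
    by_contra h
    push_neg at h
    exact absurd (hneg q ⟨hqs, h⟩) (not_lt.mpr hq.2.le)
  exact absurd (le_csInf hQne hlb) (not_le.mpr hu)

set_option maxHeartbeats 1000000 in
theorem stmt_12
    {H : Type*} [NormedAddCommGroup H] [InnerProductSpace ℝ H]
    (S : ℝ → H →L[ℝ] H) (M μ : ℝ)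
    (hM : 1 ≤ M) (hμ : 0 < μ)
    (hS0 : S 0 = ContinuousLinearMap.id ℝ H)
    (hSadd : ∀ s u : ℝ, 0 ≤ s → 0 ≤ u → S (s + u) = (S s).comp (S u))
    (hScont : ∀ x : H, ContinuousOn (fun s => S s x) (Set.Ici (0:ℝ)))
    (hSbound : ∀ s : ℝ, 0 ≤ s → ‖S s‖ ≤ M * Real.exp (-μ * s))
    (hScontr : ∀ s : ℝ, 0 ≤ s → ∀ x : H, ‖S s x‖ ≤ ‖x‖)
    (t : ℕ → ℝ) (ht0 : t 0 = 0) (htmono : StrictMono t)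
    (htlim : Filter.Tendsto t Filter.atTop Filter.atTop)
    (τ : ℝ) (hτ : 0 < τ)
    (B : ℕ → H →L[ℝ] H)
    (hT2nτ : ∀ n : ℕ, τ ≤ t (2*n+1) - t (2*n))
    (hT2nstar : ∀ n : ℕ, Real.log M / μ < t (2*n+1) - t (2*n))
    (U : ℝ → H) (U₀ : H) (V : ℝ → H)
    (hUcont : ContinuousOn U (Set.Ici (0:ℝ))) (hU0 : U 0 = U₀)
    (hUeven : ∀ n : ℕ, ∀ s ∈ Set.Icc (t (2*n)) (t (2*n+1)),
      U s = S (s - t (2*n)) (U (t (2*n))))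
    (hUodd : ∀ n : ℕ, ∀ s ∈ Set.Ioo (t (2*n+1)) (t (2*n+2)),
      HasDerivAt U (V s + B n (U (s - τ))) s)
    (hdiss : ∀ n : ℕ, ∀ s ∈ Set.Ioo (t (2*n+1)) (t (2*n+2)),
      (inner ℝ (U s) (V s) : ℝ) ≤ 0)
    :
    ∀ n : ℕ,
      ‖U (t (2*n+2))‖^2 ≤
        Real.exp (2*‖B n‖*(t (2*n+2) - t (2*n+1))) *
          (M^2 * Real.exp (-2*μ*(t (2*n+1) - t (2*n))) + (t (2*n+2) - t (2*n+1))*‖B n‖) *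
          ‖U (t (2*n))‖^2 := by
  intro n
  have ht01 : t (2*n) < t (2*n+1) := htmono (by omega)
  have ht12 : t (2*n+1) < t (2*n+2) := htmono (by omega)
  have ht00 : (0:ℝ) ≤ t (2*n) := by
    have := htmono.monotone (Nat.zero_le (2*n)); rw [ht0] at this; exact this
  have ha0 : (0:ℝ) ≤ ‖B n‖ := norm_nonneg _
  set a := ‖B n‖ with ha
  set D := ‖U (t (2*n))‖^2 with hD
  have hD0 : 0 ≤ D := sq_nonneg _
  set K := M^2 * Real.exp (-2*μ*(t (2*n+1) - t (2*n))) * D with hK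
  have hK0 : 0 ≤ K := mul_nonneg (by positivity) hD0
  -- Step B : contraction on the even interval
  have hpast : ∀ r, t (2*n) ≤ r → r ≤ t (2*n+1) → ‖U r‖^2 ≤ D := by
    intro r h1 h2
    rw [hUeven n r ⟨h1, h2⟩, hD]
    have h3 := hScontr (r - t (2*n)) (by linarith) (U (t (2*n)))
    exact pow_le_pow_left₀ (norm_nonneg _) h3 2
  -- Step A : exponential decay bound at t (2n+1)
  have hUt1 : ‖U (t (2*n+1))‖^2 ≤ K := by
    have h1 : U (t (2*n+1)) = S (t (2*n+1) - t (2*n)) (U (t (2*n))) :=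
      hUeven n _ ⟨ht01.le, le_rfl⟩
    have h2 : ‖U (t (2*n+1))‖ ≤ (M * Real.exp (-μ * (t (2*n+1) - t (2*n)))) * ‖U (t (2*n))‖ := by
      rw [h1]
      calc ‖S (t (2*n+1) - t (2*n)) (U (t (2*n)))‖
          ≤ ‖S (t (2*n+1) - t (2*n))‖ * ‖U (t (2*n))‖ := ContinuousLinearMap.le_opNorm _ _
        _ ≤ _ := mul_le_mul_of_nonneg_right (hSbound _ (by linarith)) (norm_nonneg _)
    have h3 := pow_le_pow_left₀ (norm_nonneg _) h2 2
    have hexp : (Real.exp (-μ * (t (2*n+1) - t (2*n))))^2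
        = Real.exp (-2*μ*(t (2*n+1) - t (2*n))) := by
      rw [sq, ← Real.exp_add]
      congr 1
      ring
    calc ‖U (t (2*n+1))‖^2 ≤ _ := h3
      _ = K := by rw [hK, hD, mul_pow, mul_pow, hexp]
  -- continuity of the squared norm on the odd interval
  have hfc : ContinuousOn (fun s => ‖U s‖^2) (Set.Icc (t (2*n+1)) (t (2*n+2))) := by
    have hsub : Set.Icc (t (2*n+1)) (t (2*n+2)) ⊆ Set.Ici (0:ℝ) :=
      fun x hx => le_trans (by linarith) hx.1
    exact ((hUcont.mono hsub).norm).pow 2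
  -- derivative bound on the odd interval
  have hderiv : ∀ s ∈ Set.Ioo (t (2*n+1)) (t (2*n+2)),
      ∃ d, HasDerivAt (fun x => ‖U x‖^2) d s ∧ d ≤ a * ‖U s‖^2 + a * ‖U (s - τ)‖^2 := by
    intro s hs
    have hU' := hUodd n s hs
    have h2 := hU'.inner ℝ hU'
    have heq : (fun x => (inner ℝ (U x) (U x) : ℝ)) = fun x => ‖U x‖^2 :=
      funext fun x => real_inner_self_eq_norm_sq _
    rw [heq] at h2
    refine ⟨_, h2, ?_⟩
    have hdiss' := hdiss n s hs
    set w := V s + B n (U (s - τ)) with hw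
    have hcomm : (inner ℝ w (U s) : ℝ) = (inner ℝ (U s) w : ℝ) := real_inner_comm _ _
    have hsplit : (inner ℝ (U s) w : ℝ)
        = (inner ℝ (U s) (V s) : ℝ) + (inner ℝ (U s) (B n (U (s - τ))) : ℝ) := by
      rw [hw, inner_add_right]
    have hcs : (inner ℝ (U s) (B n (U (s - τ))) : ℝ) ≤ ‖U s‖ * (a * ‖U (s - τ)‖) := by
      calc (inner ℝ (U s) (B n (U (s - τ))) : ℝ) ≤ ‖U s‖ * ‖B n (U (s - τ))‖ :=
            real_inner_le_norm _ _
        _ ≤ ‖U s‖ * (a * ‖U (s - τ)‖) :=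
            mul_le_mul_of_nonneg_left (ContinuousLinearMap.le_opNorm _ _) (norm_nonneg _)
    have hsq : 2 * (‖U s‖ * (a * ‖U (s - τ)‖)) ≤ a * ‖U s‖^2 + a * ‖U (s - τ)‖^2 := by
      nlinarith [sq_nonneg (‖U s‖ - ‖U (s - τ)‖), ha0]
    rw [hcomm, hsplit]
    linarith
  -- main Gronwall-type estimate with parameter ε
  have main : ∀ ε : ℝ, 0 < ε → ‖U (t (2*n+2))‖^2 ≤
      Real.exp (2*a*(t (2*n+2) - t (2*n+1)))
        * (K + ε + (t (2*n+2) - t (2*n+1))*(a*D + ε)) := by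
    intro ε hε
    set G : ℝ → ℝ := fun s =>
      Real.exp (2*a*(s - t (2*n+1))) * (K + ε + (s - t (2*n+1))*(a*D + ε)) with hGdef
    have hGc : Continuous G := by
      refine Continuous.mul ?_ ?_
      · exact Real.continuous_exp.comp (continuous_const.mul (continuous_id.sub continuous_const))
      · exact continuous_const.add ((continuous_id.sub continuous_const).mul continuous_const)
    have hGmono : ∀ x y, t (2*n+1) ≤ x → x ≤ y → G x ≤ G y := by
      intro x y hx hxy
      have h1 : Real.exp (2*a*(x - t (2*n+1))) ≤ Real.exp (2*a*(y - t (2*n+1))) :=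
        Real.exp_le_exp.mpr (by nlinarith [mul_nonneg ha0 (sub_nonneg.mpr hxy)])
      have h2 : K + ε + (x - t (2*n+1))*(a*D+ε) ≤ K + ε + (y - t (2*n+1))*(a*D+ε) := by
        nlinarith [mul_nonneg (sub_nonneg.mpr hxy) (add_nonneg (mul_nonneg ha0 hD0) hε.le)]
      have h3 : 0 ≤ K + ε + (x - t (2*n+1))*(a*D+ε) := by
        nlinarith [mul_nonneg (sub_nonneg.mpr hx) (add_nonneg (mul_nonneg ha0 hD0) hε.le)]
      exact mul_le_mul h1 h2 h3 (Real.exp_pos _).le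
    have hGderiv : ∀ s : ℝ, HasDerivAt G
        (2*a*G s + Real.exp (2*a*(s - t (2*n+1)))*(a*D+ε)) s := by
      intro s
      have h1 : HasDerivAt (fun x : ℝ => 2*a*(x - t (2*n+1))) (2*a) s := by
        simpa using ((hasDerivAt_id s).sub_const (t (2*n+1))).const_mul (2*a)
      have h2 := h1.exp
      have h3 : HasDerivAt (fun x : ℝ => K + ε + (x - t (2*n+1))*(a*D+ε)) (a*D+ε) s := by
        simpa using (((hasDerivAt_id s).sub_const (t (2*n+1))).mul_const (a*D+ε)).const_add (K + ε)
      have h4 := h2.mul h3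
      refine h4.congr_deriv ?_
      simp only [hGdef]
      ring
    have hG1 : (fun x => ‖U x‖^2) (t (2*n+1)) < G (t (2*n+1)) := by
      have hGt1 : G (t (2*n+1)) = K + ε := by
        show Real.exp (2*a*(t (2*n+1) - t (2*n+1))) * (K + ε + (t (2*n+1) - t (2*n+1))*(a*D + ε)) = K + ε
        rw [sub_self]
        simp
      show ‖U (t (2*n+1))‖^2 < G (t (2*n+1))
      rw [hGt1]
      calc ‖U (t (2*n+1))‖^2 ≤ K := hUt1
        _ < K + ε := by linarith
    have hmain := gronwall_aux_s12 ht12 hfc hGc hG1 ?_ (t (2*n+2)) ⟨ht12.le, le_rfl⟩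
    · exact hmain
    · intro s hs hhist hfGs
      obtain ⟨d, hd, hdle⟩ := hderiv s hs
      refine ⟨d, _, hd, hGderiv s, ?_⟩
      have hfGs' : ‖U s‖^2 = G s := hfGs
      have hsτ : t (2*n) ≤ s - τ := by
        have := hT2nτ n; have := hs.1; linarith
      have hfτ : ‖U (s - τ)‖^2 ≤ max D (G s) := by
        rcases le_or_gt (s - τ) (t (2*n+1)) with h | h
        · exact le_max_of_le_left (hpast _ hsτ h)
        · refine le_max_of_le_right ?_
          have h5 : ‖U (s-τ)‖^2 ≤ G (s - τ) := hhist _ ⟨h.le, by linarith [hs.2.le]⟩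
          exact h5.trans (hGmono _ _ h.le (by linarith))
      have hE : 1 ≤ Real.exp (2*a*(s - t (2*n+1))) := by
        rw [← Real.exp_zero]
        exact Real.exp_le_exp.mpr (by nlinarith [mul_nonneg ha0 (sub_nonneg.mpr hs.1.le)])
      have hGs0 : 0 ≤ G s := by rw [← hfGs']; positivity
      have hdle2 : d ≤ a * G s + a * max D (G s) := by
        calc d ≤ a * ‖U s‖^2 + a * ‖U (s-τ)‖^2 := hdle
          _ ≤ a * G s + a * max D (G s) := by
              rw [hfGs']
              exact add_le_add le_rfl (mul_le_mul_of_nonneg_left hfτ ha0)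
      have hfin : a * G s + a * max D (G s)
          < 2*a*G s + Real.exp (2*a*(s - t (2*n+1)))*(a*D+ε) := by
        rcases le_total D (G s) with h | h
        · rw [max_eq_right h]
          nlinarith [mul_nonneg (mul_nonneg ha0 hD0) (sub_nonneg.mpr hE)]
        · rw [max_eq_left h]
          nlinarith [mul_nonneg (mul_nonneg ha0 hD0) (sub_nonneg.mpr hE)]
      linarith
  -- take ε → 0
  have hbase : ‖U (t (2*n+2))‖^2 ≤
      Real.exp (2*a*(t (2*n+2) - t (2*n+1))) * (K + (t (2*n+2) - t (2*n+1))*(a*D)) := by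
    by_contra h
    push_neg at h
    set T := t (2*n+2) - t (2*n+1) with hT
    have hT0 : 0 < T := by rw [hT]; linarith
    set E := Real.exp (2*a*T) with hE
    have hE0 : (0:ℝ) < E := Real.exp_pos _
    have hC : (0:ℝ) < E * (1 + T) := by nlinarith
    set δ := (‖U (t (2*n+2))‖^2 - E * (K + T*(a*D))) / (2 * (E * (1 + T))) with hδ
    have hδ0 : 0 < δ := div_pos (by linarith) (by linarith)
    have h2 := main δ hδ0
    have h3 : E * (K + δ + T*(a*D + δ)) = E*(K + T*(a*D)) + δ * (E * (1 + T)) := by ring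
    have h4 : δ * (E * (1 + T)) = (‖U (t (2*n+2))‖^2 - E * (K + T*(a*D))) / 2 := by
      rw [hδ]
      field_simp

    rw [h3, h4] at h2
    clear_value δ E T K D a
    linarith
  calc ‖U (t (2*n+2))‖^2 ≤ _ := hbase
    _ = _ := by rw [hK, hD]; ring
end

section
/- Assume T_{2n} ≥ τ and T_{2n} > T* for all n ∈ ℕ, and set c_n := M² e^{−2μ T_{2n}}. Then every trajectory U of the on–off delay system with initial datum U₀ satisfies, for every n ∈ ℕ, the iterated estimate ‖U(t_{2n+2})‖² ≤ [ ∏_{k=0}^{n} e^{2 B_{2k+1} T_{2k+1}} (c_k + T_{2k+1} B_{2k+1}) ] · ‖U₀‖². -/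
set_option maxHeartbeats 1000000

open Set Filter Real
open scoped Topology

lemma my_gronwall {f g : ℝ → ℝ} {δ K ε a b : ℝ} (hab : a ≤ b)
    (hf : ContinuousOn f (Icc a b))
    (hd : ∀ x ∈ Ioo a b, HasDerivAt f (g x) x)
    (hbound : ∀ x ∈ Ioo a b, g x ≤ K * f x + ε)
    (ha : f a ≤ δ) :
    f b ≤ gronwallBound δ K ε (b - a) := by
  rcases eq_or_lt_of_le hab with rfl | hlt
  · simpa [gronwallBound_x0] using ha
  set g' : ℝ → ℝ := fun x => if x = a then K * f x + ε else g x with hg'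
  refine le_gronwallBound_of_liminf_deriv_right_le (f' := g') hf ?_ ha ?_ b
    (right_mem_Icc.2 hab)
  · intro x hx r hr
    rcases eq_or_lt_of_le hx.1 with h | hax
    · subst h
      simp only [hg', if_pos rfl] at hr
      have hcont : ContinuousWithinAt (fun z => K * f z + ε) (Icc a b) a :=
        ((continuousWithinAt_const.mul (hf a (left_mem_Icc.2 hab))).add
          continuousWithinAt_const)
      have hev : ∀ᶠ z in 𝓝[Icc a b] a, K * f z + ε < r :=
        hcont.eventually_lt_const hr
      rw [eventually_nhdsWithin_iff] at hev
      rcases Metric.eventually_nhds_iff.mp hev with ⟨d, hd0, hball⟩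
      have hmem : Ioo a (min b (a + d)) ∈ 𝓝[>] a :=
        Ioo_mem_nhdsGT_of_mem ⟨le_refl _, lt_min hlt (by linarith)⟩
      have hev2 : ∀ᶠ z in 𝓝[>] a, (z - a)⁻¹ * (f z - f a) < r := by
        filter_upwards [hmem] with z hz
        obtain ⟨hz1, hz2⟩ := hz
        have hzb : z ≤ b := le_of_lt (lt_of_lt_of_le hz2 (min_le_left _ _))
        obtain ⟨c, hc, hceq⟩ := exists_hasDerivAt_eq_slope f g hz1
          (hf.mono (Icc_subset_Icc le_rfl hzb))
          (fun y hy => hd y ⟨hy.1, lt_of_lt_of_le hy.2 hzb⟩)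
        have hcxd : dist c a < d := by
          rw [Real.dist_eq, abs_of_nonneg (by linarith [hc.1])]
          have h1 := hc.2
          have h2 := lt_of_lt_of_le hz2 (min_le_right _ _)
          linarith
        have hcr : K * f c + ε < r :=
          hball hcxd ⟨le_of_lt hc.1, le_trans (le_of_lt hc.2) hzb⟩
        have hgc : g c ≤ K * f c + ε := hbound c ⟨hc.1, lt_of_lt_of_le hc.2 hzb⟩
        rw [inv_mul_eq_div]
        calc (f z - f a) / (z - a) = g c := hceq.symm
          _ < r := lt_of_le_of_lt hgc hcr
      exact hev2.frequently
    · have hx' : x ∈ Ioo a b := ⟨hax, hx.2⟩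
      simp only [hg', if_neg (ne_of_gt hax)] at hr
      exact ((hd x hx').hasDerivWithinAt (s := Ici x)).liminf_right_slope_le hr
  · intro x hx
    rcases eq_or_lt_of_le hx.1 with h | hax
    · subst h; simp only [hg', if_pos rfl]; exact le_refl _
    · simp only [hg', if_neg (ne_of_gt hax)]
      exact hbound x ⟨hax, hx.2⟩

lemma gronwallBound_comp (δ K ε x y : ℝ) :
    gronwallBound (gronwallBound δ K ε x) K ε y = gronwallBound δ K ε (x + y) := by
  by_cases hK : K = 0
  · subst hK; simp [gronwallBound_K0]; ring
  · simp only [gronwallBound_of_K_ne_0 hK, mul_add, Real.exp_add]; ring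

lemma gronwallBound_mono_delta {δ δ' : ℝ} (K ε x : ℝ) (h : δ ≤ δ') :
    gronwallBound δ K ε x ≤ gronwallBound δ' K ε x := by
  by_cases hK : K = 0
  · subst hK; simp only [gronwallBound_K0]; linarith
  · simp only [gronwallBound_of_K_ne_0 hK]
    have := Real.exp_pos (K * x)
    nlinarith

lemma gronwallBound_le_exp {δ K ε x : ℝ} (hK : 0 ≤ K) (hδ : 0 ≤ δ) (hε : 0 ≤ ε) (hx : 0 ≤ x) :
    gronwallBound δ K ε x ≤ Real.exp (K * x) * (δ + ε * x) := by
  by_cases hK0 : K = 0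
  · subst hK0; simp only [gronwallBound_K0, zero_mul, Real.exp_zero, one_mul]; linarith
  · have hKpos : 0 < K := lt_of_le_of_ne hK (Ne.symm hK0)
    rw [gronwallBound_of_K_ne_0 hK0]
    have h1 : Real.exp (K * x) - 1 ≤ (K * x) * Real.exp (K * x) := by
      have h2 := Real.add_one_le_exp (-(K * x))
      have h3 : Real.exp (K * x) * Real.exp (-(K * x)) = 1 := by
        rw [← Real.exp_add]; simp
      nlinarith [Real.exp_pos (K * x)]
    have h4 : ε / K * (Real.exp (K * x) - 1) ≤ ε / K * ((K * x) * Real.exp (K * x)) :=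
      mul_le_mul_of_nonneg_left h1 (div_nonneg hε hK)
    have h5 : ε / K * ((K * x) * Real.exp (K * x)) = ε * x * Real.exp (K * x) := by
      field_simp
    nlinarith [Real.exp_pos (K * x)]

theorem stmt_13
    {H : Type*} [NormedAddCommGroup H] [InnerProductSpace ℝ H]
    (S : ℝ → H →L[ℝ] H) (M μ : ℝ)
    (hM : 1 ≤ M) (hμ : 0 < μ)
    (hS0 : S 0 = ContinuousLinearMap.id ℝ H)
    (hSadd : ∀ s u : ℝ, 0 ≤ s → 0 ≤ u → S (s + u) = (S s).comp (S u))
    (hScont : ∀ x : H, ContinuousOn (fun s => S s x) (Set.Ici (0:ℝ)))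
    (hSbound : ∀ s : ℝ, 0 ≤ s → ‖S s‖ ≤ M * Real.exp (-μ * s))
    (hScontr : ∀ s : ℝ, 0 ≤ s → ∀ x : H, ‖S s x‖ ≤ ‖x‖)
    (t : ℕ → ℝ) (ht0 : t 0 = 0) (htmono : StrictMono t)
    (htlim : Filter.Tendsto t Filter.atTop Filter.atTop)
    (τ : ℝ) (hτ : 0 < τ)
    (B : ℕ → H →L[ℝ] H)
    (hT2nτ : ∀ n : ℕ, τ ≤ t (2*n+1) - t (2*n))
    (hT2nstar : ∀ n : ℕ, Real.log M / μ < t (2*n+1) - t (2*n))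
    (U : ℝ → H) (U₀ : H) (V : ℝ → H)
    (hUcont : ContinuousOn U (Set.Ici (0:ℝ))) (hU0 : U 0 = U₀)
    (hUeven : ∀ n : ℕ, ∀ s ∈ Set.Icc (t (2*n)) (t (2*n+1)),
      U s = S (s - t (2*n)) (U (t (2*n))))
    (hUodd : ∀ n : ℕ, ∀ s ∈ Set.Ioo (t (2*n+1)) (t (2*n+2)),
      HasDerivAt U (V s + B n (U (s - τ))) s)
    (hdiss : ∀ n : ℕ, ∀ s ∈ Set.Ioo (t (2*n+1)) (t (2*n+2)),
      (inner ℝ (U s) (V s) : ℝ) ≤ 0)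
    :
    ∀ n : ℕ,
      ‖U (t (2*n+2))‖^2 ≤
        (∏ k ∈ Finset.range (n+1),
          Real.exp (2*‖B k‖*(t (2*k+2) - t (2*k+1))) *
            (M^2 * Real.exp (-2*μ*(t (2*k+1) - t (2*k))) + (t (2*k+2) - t (2*k+1))*‖B k‖)) *
          ‖U₀‖^2 := by
  have htnn : ∀ m : ℕ, 0 ≤ t m := fun m => by
    have := htmono.monotone (Nat.zero_le m); rwa [ht0] at this
  set E : ℝ → ℝ := fun s => ‖U s‖^2 with hE
  have hEnn : ∀ s, 0 ≤ E s := fun s => pow_two_nonneg _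
  have hEcont : ContinuousOn E (Ici 0) := hUcont.norm.pow 2
  set F : ℕ → ℝ := fun k =>
    Real.exp (2*‖B k‖*(t (2*k+2) - t (2*k+1))) *
      (M^2 * Real.exp (-2*μ*(t (2*k+1) - t (2*k))) + (t (2*k+2) - t (2*k+1))*‖B k‖) with hF
  have hFnn : ∀ k, 0 ≤ F k := by
    intro k
    have h1 : (0:ℝ) ≤ t (2*k+2) - t (2*k+1) := by
      have := htmono (show 2*k+1 < 2*k+2 by omega); linarith
    have h2 : (0:ℝ) ≤ ‖B k‖ := norm_nonneg _
    have h3 := Real.exp_pos (2*‖B k‖*(t (2*k+2) - t (2*k+1)))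
    have h4 := Real.exp_pos (-2*μ*(t (2*k+1) - t (2*k)))
    simp only [hF]
    exact mul_nonneg h3.le (add_nonneg (mul_nonneg (sq_nonneg M) h4.le) (mul_nonneg h1 h2))
  have key : ∀ k : ℕ, E (t (2*k+2)) ≤ F k * E (t (2*k)) := by
    intro n
    set p := t (2*n) with hp
    set a := t (2*n+1) with ha'
    set b := t (2*n+2) with hb'
    have hpa : p < a := htmono (by omega)
    have hab : a < b := htmono (by omega)
    have hp0 : (0:ℝ) ≤ p := htnn _
    have ha0 : (0:ℝ) < a := lt_of_le_of_lt hp0 hpa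
    have hτa : τ ≤ a - p := hT2nτ n
    set Bn := ‖B n‖ with hBn'
    have hBn : (0:ℝ) ≤ Bn := norm_nonneg _
    -- E ≤ E p on [p, a]
    have heven : ∀ s ∈ Icc p a, E s ≤ E p := by
      intro s hs
      have h1 : U s = S (s - p) (U p) := hUeven n s hs
      have h2 : ‖U s‖ ≤ ‖U p‖ := by rw [h1]; exact hScontr _ (by linarith [hs.1]) _
      exact pow_le_pow_left₀ (norm_nonneg _) h2 2
    -- integrability
    have hInt : ∀ x y : ℝ, 0 ≤ x → 0 ≤ y → IntervalIntegrable E MeasureTheory.volume x y := by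
      intro x y hx hy
      apply ContinuousOn.intervalIntegrable
      apply hEcont.mono
      rw [uIcc]
      intro z hz
      exact le_trans (le_min hx hy) hz.1
    -- FTC
    have hprim : ∀ x : ℝ, 0 < x → HasDerivAt (fun u => ∫ σ in a..u, E σ) (E x) x := by
      intro x hx
      refine intervalIntegral.integral_hasDerivAt_right (hInt a x ha0.le hx.le) ?_ ?_
      · exact (hEcont.mono Ioi_subset_Ici_self).stronglyMeasurableAtFilter isOpen_Ioi x hx
      · exact hEcont.continuousAt (Ici_mem_nhds hx)
    set Pr : ℝ → ℝ := fun u => ∫ σ in a..u, E σ with hPr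
    have hPrCont : ∀ x : ℝ, 0 < x → ContinuousAt Pr x := fun x hx => (hprim x hx).continuousAt
    -- derivative of E
    have hdE : ∀ s ∈ Ioo a b,
        HasDerivAt E (2 * (inner ℝ (U s) (V s + B n (U (s - τ))) : ℝ)) s := by
      intro s hs
      have h := HasDerivAt.inner ℝ (hUodd n s hs) (hUodd n s hs)
      simp only [real_inner_self_eq_norm_sq] at h
      refine h.congr_deriv ?_
      rw [real_inner_comm (V s + B n (U (s - τ))) (U s)]
      ring
    -- derivative bound
    have hDb : ∀ s ∈ Ioo a b,
        2 * (inner ℝ (U s) (V s + B n (U (s - τ))) : ℝ) ≤ Bn * E s + Bn * E (s - τ) := by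
      intro s hs
      have h1 : (inner ℝ (U s) (V s) : ℝ) ≤ 0 := hdiss n s hs
      have h2 : (inner ℝ (U s) (B n (U (s - τ))) : ℝ) ≤ ‖U s‖ * ‖B n (U (s - τ))‖ :=
        real_inner_le_norm _ _
      have h3 : ‖B n (U (s - τ))‖ ≤ Bn * ‖U (s - τ)‖ := (B n).le_opNorm _
      have h5 : (inner ℝ (U s) (V s + B n (U (s - τ))) : ℝ)
          = (inner ℝ (U s) (V s) : ℝ) + (inner ℝ (U s) (B n (U (s - τ))) : ℝ) :=
        inner_add_right _ _ _
      have h6 : 0 ≤ ‖U s‖ := norm_nonneg _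
      have h7 : 0 ≤ ‖U (s - τ)‖ := norm_nonneg _
      simp only [hE]
      nlinarith [mul_le_mul_of_nonneg_left h3 h6, sq_nonneg (‖U s‖ - ‖U (s - τ)‖),
        mul_nonneg hBn (mul_nonneg h6 h7)]
    -- phase 1
    have claim1 : ∀ d, a ≤ d → d ≤ b → d ≤ a + τ →
        E d + Bn * Pr d ≤ gronwallBound (E a) (2*Bn) (Bn * E p) (d - a) := by
      intro d had hdb hdτ
      refine my_gronwall (f := fun s => E s + Bn * Pr s)
        (g := fun s => 2 * (inner ℝ (U s) (V s + B n (U (s - τ))) : ℝ) + Bn * E s)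
        had ?_ ?_ ?_ ?_
      · intro x hx
        have hx0 : 0 < x := lt_of_lt_of_le ha0 hx.1
        exact ((hEcont.continuousAt (Ici_mem_nhds hx0)).add
          ((hPrCont x hx0).const_mul Bn)).continuousWithinAt
      · intro x hx
        have hx' : x ∈ Ioo a b := ⟨hx.1, lt_of_lt_of_le hx.2 hdb⟩
        exact (hdE x hx').add ((hprim x (lt_trans ha0 hx.1)).const_mul Bn)
      · intro x hx
        have hx' : x ∈ Ioo a b := ⟨hx.1, lt_of_lt_of_le hx.2 hdb⟩
        have h1 := hDb x hx'
        have h2 : E (x - τ) ≤ E p := heven _ ⟨by linarith [hx.1], by linarith [hx.2]⟩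
        have h3 : 0 ≤ Pr x :=
          intervalIntegral.integral_nonneg (le_of_lt hx.1) (fun u _ => hEnn u)
        nlinarith [mul_le_mul_of_nonneg_left h2 hBn, mul_nonneg (mul_nonneg hBn hBn) h3]
      · simp only [hPr, intervalIntegral.integral_same, mul_zero, add_zero, le_refl]
    -- main estimate on [a, b]
    have main : E b ≤ gronwallBound (E a) (2*Bn) (Bn * E p) (b - a) := by
      by_cases hcase : b ≤ a + τ
      · have h1 := claim1 b hab.le le_rfl hcase
        have h3 : 0 ≤ Pr b :=
          intervalIntegral.integral_nonneg hab.le (fun u _ => hEnn u)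
        nlinarith
      · push_neg at hcase
        have h1 := claim1 (a + τ) (by linarith) (by linarith) le_rfl
        have hPrτ : ∀ x : ℝ, 0 < x - τ → HasDerivAt (fun u => Pr (u - τ)) (E (x - τ)) x := by
          intro x hx
          have h := (hprim (x - τ) hx).comp x ((hasDerivAt_id x).sub_const τ)
          rw [mul_one] at h; exact h
        have claim2 : E b + Bn * (Pr b - Pr (b - τ))
            ≤ gronwallBound (E (a+τ) + Bn * (Pr (a+τ) - Pr (a+τ-τ))) (2*Bn) (Bn * E p)
              (b - (a+τ)) := by
          refine my_gronwall (f := fun s => E s + Bn * (Pr s - Pr (s - τ)))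
            (g := fun s => 2 * (inner ℝ (U s) (V s + B n (U (s - τ))) : ℝ)
              + Bn * (E s - E (s - τ)))
            (by linarith) ?_ ?_ ?_ le_rfl
          · intro x hx
            have hx0 : 0 < x := by have := hx.1; linarith
            have hxτ : 0 < x - τ := by have := hx.1; linarith
            exact ((hEcont.continuousAt (Ici_mem_nhds hx0)).add
              (((hPrCont x hx0).sub (hPrτ x hxτ).continuousAt).const_mul Bn)).continuousWithinAt
          · intro x hx
            have hx' : x ∈ Ioo a b := ⟨by linarith [hx.1], hx.2⟩
            have hxτ : 0 < x - τ := by have := hx.1; linarith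
            exact (hdE x hx').add (((hprim x (by linarith [hx.1])).sub (hPrτ x hxτ)).const_mul Bn)
          · intro x hx
            have hx' : x ∈ Ioo a b := ⟨by linarith [hx.1], hx.2⟩
            have h2 := hDb x hx'
            have hxτa : a ≤ x - τ := by linarith [hx.1]
            have hadd : Pr (x - τ) + ∫ σ in (x-τ)..x, E σ = Pr x :=
              intervalIntegral.integral_add_adjacent_intervals
                (hInt a (x-τ) ha0.le (by linarith)) (hInt (x-τ) x (by linarith) (by linarith [hx.1, ha0]))
            have h4 : 0 ≤ ∫ σ in (x-τ)..x, E σ :=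
              intervalIntegral.integral_nonneg (by linarith [hτ]) (fun u _ => hEnn u)
            have h5 : 0 ≤ Bn * E p := mul_nonneg hBn (hEnn p)
            nlinarith [mul_nonneg (mul_nonneg hBn hBn) h4]
          
        have hW2c : E (a+τ) + Bn * (Pr (a+τ) - Pr (a+τ-τ)) = E (a+τ) + Bn * Pr (a+τ) := by
          rw [show a + τ - τ = a by ring]
          simp [hPr, intervalIntegral.integral_same]
        have hEb : E b ≤ E b + Bn * (Pr b - Pr (b - τ)) := by
          have hadd : Pr (b - τ) + ∫ σ in (b-τ)..b, E σ = Pr b :=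
            intervalIntegral.integral_add_adjacent_intervals
              (hInt a (b-τ) ha0.le (by linarith)) (hInt (b-τ) b (by linarith) (by linarith))
          have h4 : 0 ≤ ∫ σ in (b-τ)..b, E σ :=
            intervalIntegral.integral_nonneg (by linarith [hτ]) (fun u _ => hEnn u)
          nlinarith
        calc E b ≤ E b + Bn * (Pr b - Pr (b - τ)) := hEb
          _ ≤ gronwallBound (E (a+τ) + Bn * (Pr (a+τ) - Pr (a+τ-τ))) (2*Bn) (Bn * E p)
              (b - (a+τ)) := claim2
          _ ≤ gronwallBound (gronwallBound (E a) (2*Bn) (Bn * E p) (a+τ-a)) (2*Bn) (Bn * E p)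
              (b - (a+τ)) := by
            apply gronwallBound_mono_delta
            rw [hW2c]
            exact h1
          _ = gronwallBound (E a) (2*Bn) (Bn * E p) ((a+τ-a) + (b-(a+τ))) :=
            gronwallBound_comp _ _ _ _ _
          _ = gronwallBound (E a) (2*Bn) (Bn * E p) (b - a) := by congr 1; ring
    -- from gronwall bound to final form
    have hfin := le_trans main
      (gronwallBound_le_exp (by positivity) (hEnn a) (mul_nonneg hBn (hEnn p)) (by linarith))
    have hEa : E a ≤ M^2 * Real.exp (-2*μ*(a-p)) * E p := by
      have h1 : U a = S (a - p) (U p) := hUeven n a ⟨hpa.le, le_rfl⟩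
      have h2 : ‖U a‖ ≤ M * Real.exp (-μ*(a-p)) * ‖U p‖ := by
        rw [h1]
        calc ‖S (a-p) (U p)‖ ≤ ‖S (a-p)‖ * ‖U p‖ := (S (a-p)).le_opNorm _
          _ ≤ M * Real.exp (-μ*(a-p)) * ‖U p‖ :=
            mul_le_mul_of_nonneg_right (hSbound _ (by linarith)) (norm_nonneg _)
      have h3 := pow_le_pow_left₀ (norm_nonneg (U a)) h2 2
      have h4 : Real.exp (-μ*(a-p)) * Real.exp (-μ*(a-p)) = Real.exp (-2*μ*(a-p)) := by
        rw [← Real.exp_add]; congr 1; ring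
      calc E a = ‖U a‖^2 := rfl
        _ ≤ (M * Real.exp (-μ*(a-p)) * ‖U p‖)^2 := h3
        _ = M^2 * (Real.exp (-μ*(a-p)) * Real.exp (-μ*(a-p))) * ‖U p‖^2 := by ring
        _ = M^2 * Real.exp (-2*μ*(a-p)) * ‖U p‖^2 := by rw [h4]
        _ = M^2 * Real.exp (-2*μ*(a-p)) * E p := rfl
    have hexp := Real.exp_pos (2*Bn*(b-a))
    have step : E a + Bn * E p * (b-a)
        ≤ M^2 * Real.exp (-2*μ*(a-p)) * E p + (b-a)*Bn * E p := by nlinarith [hEa]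
    calc E b ≤ Real.exp (2*Bn*(b-a)) * (E a + Bn * E p * (b-a)) := hfin
      _ ≤ Real.exp (2*Bn*(b-a)) * (M^2 * Real.exp (-2*μ*(a-p)) * E p + (b-a)*Bn * E p) :=
        mul_le_mul_of_nonneg_left step hexp.le
      _ = (Real.exp (2*Bn*(b-a)) * (M^2 * Real.exp (-2*μ*(a-p)) + (b-a)*Bn)) * E p := by
        ring
      _ = F n * E p := by
        simp only [hF, ← hp, ← ha', ← hb', ← hBn']
  -- final induction
  have key2 : ∀ n : ℕ, E (t (2*n+2)) ≤ (∏ k ∈ Finset.range (n+1), F k) * ‖U₀‖^2 := by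
    intro n
    induction n with
    | zero =>
      rw [Finset.prod_range_one]
      have h0 : E (t (2*0)) = ‖U₀‖^2 := by
        show ‖U (t 0)‖^2 = ‖U₀‖^2
        rw [ht0, hU0]
      have h := key 0
      rw [h0] at h
      exact h
    | succ m ih =>
      have h := key (m+1)
      have h2 : E (t (2*(m+1))) ≤ (∏ k ∈ Finset.range (m+1), F k) * ‖U₀‖^2 := by
        have e : 2*(m+1) = 2*m+2 := by ring
        rw [e]; exact ih
      calc E (t (2*(m+1)+2)) ≤ F (m+1) * E (t (2*(m+1))) := h
        _ ≤ F (m+1) * ((∏ k ∈ Finset.range (m+1), F k) * ‖U₀‖^2) :=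
          mul_le_mul_of_nonneg_left h2 (hFnn _)
        _ = (∏ k ∈ Finset.range (m+1+1), F k) * ‖U₀‖^2 := by
          conv_rhs => rw [Finset.prod_range_succ]
          rw [← mul_assoc, mul_comm (F (m+1)) (∏ k ∈ Finset.range (m+1), F k)]
  intro n
  exact key2 n
end

section
/- Assume T_{2n} ≥ τ and T_{2n} > T* for all n ∈ ℕ, and set c_n := M² e^{−2μ T_{2n}}. Then every trajectory U of the on–off delay system satisfies, for every n ∈ ℕ and every t ∈ [t_{2n+1}, t_{2n+2}), the interior estimate ‖U(t)‖² ≤ e^{2 B_{2n+1} T_{2n+1}} (c_n + B_{2n+1} T_{2n+1}) ‖U(t_{2n})‖². -/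
open Set Filter Real

set_option maxHeartbeats 1000000

lemma my_exp_sub_one_le (y : ℝ) (hy : 0 ≤ y) : Real.exp y - 1 ≤ y * Real.exp y := by
  have h2 := Real.add_one_le_exp (-y)
  have h3 : Real.exp (-y) * Real.exp y = 1 := by rw [← Real.exp_add]; simp
  nlinarith [Real.exp_pos y]

lemma my_gb_le {δ K ε x X : ℝ} (hδ : 0 ≤ δ) (hε : 0 ≤ ε) (hK : 0 ≤ K) (hx : 0 ≤ x)
    (hxX : x ≤ X) : gronwallBound δ K ε x ≤ (δ + ε * X) * Real.exp (K * X) := by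
  have hX : 0 ≤ X := hx.trans hxX
  have hexp1 : Real.exp (K*x) ≤ Real.exp (K*X) :=
    Real.exp_le_exp.2 (mul_le_mul_of_nonneg_left hxX hK)
  have hone : (1:ℝ) ≤ Real.exp (K*X) := Real.one_le_exp (by positivity)
  rcases eq_or_lt_of_le hK with h0 | hKpos
  · rw [gronwallBound, if_pos h0.symm]
    nlinarith [mul_le_mul_of_nonneg_left hone (add_nonneg hδ (mul_nonneg hε hX)),
      mul_nonneg hε (sub_nonneg.2 hxX)]
  · rw [gronwallBound, if_neg (ne_of_gt hKpos)]
    have hKx : (0:ℝ) ≤ K * x := by positivity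
    have h2 : Real.exp (K*x) - 1 ≤ (K*x) * Real.exp (K*x) := my_exp_sub_one_le _ hKx
    have h3 : ε / K * (Real.exp (K*x) - 1) ≤ ε * x * Real.exp (K*x) := by
      have h4 := mul_le_mul_of_nonneg_left h2 (div_nonneg hε hK)
      have h5 : ε / K * ((K*x) * Real.exp (K*x)) = ε * x * Real.exp (K*x) := by
        field_simp
      linarith
    have h6 : ε * x * Real.exp (K*x) ≤ ε * X * Real.exp (K*X) := by
      apply mul_le_mul (by nlinarith) hexp1 (Real.exp_pos _).le (by positivity)
    nlinarith [mul_le_mul_of_nonneg_left hexp1 hδ]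

lemma my_gronwall_s14 {f f' : ℝ → ℝ} {δ K ε a b : ℝ} (hf : ContinuousOn f (Set.Icc a b))
    (hf' : ∀ x ∈ Set.Ico a b, HasDerivWithinAt f (f' x) (Set.Ici x) x)
    (ha : f a ≤ δ) (bound : ∀ x ∈ Set.Ico a b, f' x ≤ K * f x + ε) :
    ∀ x ∈ Set.Icc a b, f x ≤ gronwallBound δ K ε (x - a) :=
  le_gronwallBound_of_liminf_deriv_right_le hf
    (fun x hx r hr => by
      simpa only [slope_def_field, div_eq_inv_mul] using (hf' x hx).liminf_right_slope_le hr)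
    ha bound

theorem stmt_14
    {H : Type*} [NormedAddCommGroup H] [InnerProductSpace ℝ H]
    (S : ℝ → H →L[ℝ] H) (M μ : ℝ)
    (hM : 1 ≤ M) (hμ : 0 < μ)
    (hS0 : S 0 = ContinuousLinearMap.id ℝ H)
    (hSadd : ∀ s u : ℝ, 0 ≤ s → 0 ≤ u → S (s + u) = (S s).comp (S u))
    (hScont : ∀ x : H, ContinuousOn (fun s => S s x) (Set.Ici (0:ℝ)))
    (hSbound : ∀ s : ℝ, 0 ≤ s → ‖S s‖ ≤ M * Real.exp (-μ * s))
    (hScontr : ∀ s : ℝ, 0 ≤ s → ∀ x : H, ‖S s x‖ ≤ ‖x‖)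
    (t : ℕ → ℝ) (ht0 : t 0 = 0) (htmono : StrictMono t)
    (htlim : Filter.Tendsto t Filter.atTop Filter.atTop)
    (τ : ℝ) (hτ : 0 < τ)
    (B : ℕ → H →L[ℝ] H)
    (hT2nτ : ∀ n : ℕ, τ ≤ t (2*n+1) - t (2*n))
    (hT2nstar : ∀ n : ℕ, Real.log M / μ < t (2*n+1) - t (2*n))
    (U : ℝ → H) (U₀ : H) (V : ℝ → H)
    (hUcont : ContinuousOn U (Set.Ici (0:ℝ))) (hU0 : U 0 = U₀)
    (hUeven : ∀ n : ℕ, ∀ s ∈ Set.Icc (t (2*n)) (t (2*n+1)),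
      U s = S (s - t (2*n)) (U (t (2*n))))
    (hUodd : ∀ n : ℕ, ∀ s ∈ Set.Ioo (t (2*n+1)) (t (2*n+2)),
      HasDerivAt U (V s + B n (U (s - τ))) s)
    (hdiss : ∀ n : ℕ, ∀ s ∈ Set.Ioo (t (2*n+1)) (t (2*n+2)),
      (inner ℝ (U s) (V s) : ℝ) ≤ 0)
    :
    ∀ n : ℕ, ∀ r ∈ Set.Ico (t (2*n+1)) (t (2*n+2)),
      ‖U r‖^2 ≤
        Real.exp (2*‖B n‖*(t (2*n+2) - t (2*n+1))) *
          (M^2 * Real.exp (-2*μ*(t (2*n+1) - t (2*n))) + ‖B n‖*(t (2*n+2) - t (2*n+1))) *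
          ‖U (t (2*n))‖^2 := by
  intro n r hr
  obtain ⟨hra, hrb⟩ := hr
  have h2n1 := hT2nτ n
  have hea : t (2*n) < t (2*n+1) := htmono (by omega)
  have hab : t (2*n+1) < t (2*n+2) := htmono (by omega)
  have h0e : (0:ℝ) ≤ t (2*n) := ht0 ▸ htmono.monotone (Nat.zero_le _)
  have h0a : (0:ℝ) < t (2*n+1) := lt_of_le_of_lt h0e hea
  have hBn : (0:ℝ) ≤ ‖B n‖ := norm_nonneg _
  have hD : (0:ℝ) ≤ ‖U (t (2*n))‖^2 := by positivity
  -- good bound on even interval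
  have heven : ∀ s, s ∈ Set.Icc (t (2*n)) (t (2*n+1)) → ‖U s‖^2 ≤ ‖U (t (2*n))‖^2 := by
    intro s hs
    rw [hUeven n s hs]
    exact pow_le_pow_left₀ (norm_nonneg _)
      (hScontr (s - t (2*n)) (by linarith [hs.1]) (U (t (2*n)))) 2
  -- bound at t(2n+1)
  have hFa : ‖U (t (2*n+1))‖^2 ≤
      M^2 * Real.exp (-2*μ*(t (2*n+1) - t (2*n))) * ‖U (t (2*n))‖^2 := by
    have hT0 : (0:ℝ) ≤ t (2*n+1) - t (2*n) := by linarith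
    have h1 : ‖U (t (2*n+1))‖ ≤
        (M * Real.exp (-μ*(t (2*n+1) - t (2*n)))) * ‖U (t (2*n))‖ := by
      rw [hUeven n (t (2*n+1)) ⟨hea.le, le_refl _⟩]
      calc ‖S (t (2*n+1) - t (2*n)) (U (t (2*n)))‖
          ≤ ‖S (t (2*n+1) - t (2*n))‖ * ‖U (t (2*n))‖ := ContinuousLinearMap.le_opNorm _ _
        _ ≤ _ := mul_le_mul_of_nonneg_right (hSbound _ hT0) (norm_nonneg _)
    have hsq : Real.exp (-μ*(t (2*n+1) - t (2*n)))^2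
        = Real.exp (-2*μ*(t (2*n+1) - t (2*n))) := by
      rw [sq, ← Real.exp_add]; ring_nf
    calc ‖U (t (2*n+1))‖^2
        ≤ ((M * Real.exp (-μ*(t (2*n+1) - t (2*n)))) * ‖U (t (2*n))‖)^2 :=
          pow_le_pow_left₀ (norm_nonneg _) h1 2
      _ = M^2 * Real.exp (-μ*(t (2*n+1) - t (2*n)))^2 * ‖U (t (2*n))‖^2 := by ring
      _ = _ := by rw [hsq]
  -- continuous extension of ‖U‖²
  set Fc : ℝ → ℝ := fun s => ‖U (max s 0)‖^2 with hFc_def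
  have hUc : Continuous (fun s : ℝ => U (max s 0)) :=
    hUcont.comp_continuous (continuous_id.max continuous_const)
      (fun x => Set.mem_Ici.2 (le_max_right _ _))
  have hFc_cont : Continuous Fc := (hUc.norm).pow 2
  have hFc_eq : ∀ s : ℝ, 0 ≤ s → Fc s = ‖U s‖^2 := by
    intro s hs; simp only [hFc_def]; rw [max_eq_left hs]
  have hFc_nonneg : ∀ s : ℝ, 0 ≤ Fc s := by
    intro s; simp only [hFc_def]; positivity
  -- primitive
  set P : ℝ → ℝ := fun x => ∫ u in (t (2*n+1))..x, Fc u with hP_def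
  have hPd : ∀ x : ℝ, HasDerivAt P (Fc x) x :=
    fun x => (hFc_cont.integral_hasStrictDerivAt _ x).hasDerivAt
  have hPc : Continuous P := by
    have : Differentiable ℝ P := fun x => (hPd x).differentiableAt
    exact this.continuous
  set q : ℝ → ℝ := fun s => P (max (s - τ) (t (2*n+1))) with hq_def
  have hqc : Continuous q :=
    hPc.comp ((continuous_id.sub continuous_const).max continuous_const)
  have hPq : ∀ x : ℝ, t (2*n+1) ≤ x → 0 ≤ P x - q x := by
    intro x hx
    have hmle : max (x - τ) (t (2*n+1)) ≤ x := max_le (by linarith) hx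
    have heq : P x - q x = ∫ u in (max (x - τ) (t (2*n+1)))..x, Fc u := by
      simp only [hP_def, hq_def]
      exact intervalIntegral.integral_interval_sub_left
        (hFc_cont.intervalIntegrable _ _) (hFc_cont.intervalIntegrable _ _)
    rw [heq]
    exact intervalIntegral.integral_nonneg hmle (fun u _ => hFc_nonneg u)
  set h : ℝ → ℝ := fun s => ‖U s‖^2 + ‖B n‖ * (P s - q s) with hh_def
  set h' : ℝ → ℝ := fun s =>
    2 * (inner ℝ (U s) (V s + B n (U (s - τ))) : ℝ) +
      ‖B n‖ * (Fc s - (if t (2*n+1) ≤ s - τ then Fc (s - τ) else 0)) with hh'_def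
  -- derivative of q
  have hq'd : ∀ x : ℝ, t (2*n+1) < x →
      HasDerivWithinAt q (if t (2*n+1) ≤ x - τ then Fc (x - τ) else 0) (Set.Ici x) x := by
    intro x hx
    by_cases hc : t (2*n+1) ≤ x - τ
    · rw [if_pos hc]
      have hd : HasDerivAt (fun u : ℝ => P (u - τ)) (Fc (x - τ)) x := by
        have h1 := (hPd (x - τ)).comp x ((hasDerivAt_id x).sub_const τ)
        exact (hPd (x - τ)).comp_sub_const x τ
      refine HasDerivWithinAt.congr (hd.hasDerivWithinAt) ?_ ?_
      · intro u hu
        have hu' : x ≤ u := hu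
        simp only [hq_def]
        rw [max_eq_left (by linarith)]
      · simp only [hq_def]
        rw [max_eq_left hc]
    · rw [if_neg hc]
      push_neg at hc
      have hev : q =ᶠ[nhds x] (fun _ : ℝ => P (t (2*n+1))) := by
        have hmem : Set.Iio (t (2*n+1) + τ) ∈ nhds x := Iio_mem_nhds (by linarith)
        filter_upwards [hmem] with u hu
        have : u - τ < t (2*n+1) := by
          have := Set.mem_Iio.1 hu; linarith
        simp only [hq_def]
        rw [max_eq_right this.le]
      exact ((hasDerivAt_const x (P (t (2*n+1)))).congr_of_eventuallyEq hev).hasDerivWithinAt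
  -- derivative of h
  have hhd : ∀ x : ℝ, t (2*n+1) < x → x < t (2*n+2) →
      HasDerivWithinAt h (h' x) (Set.Ici x) x := by
    intro x hx1 hx2
    have hU' := hUodd n x ⟨hx1, hx2⟩
    have hinner : HasDerivAt (fun s => ‖U s‖^2)
        (2 * (inner ℝ (U x) (V x + B n (U (x - τ))) : ℝ)) x := by
      have h1 := HasDerivAt.inner (𝕜 := ℝ) hU' hU'
      have h2 : (fun s : ℝ => (inner ℝ (U s) (U s) : ℝ)) = fun s => ‖U s‖^2 :=
        funext fun s => real_inner_self_eq_norm_sq _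
      rw [h2] at h1
      refine h1.congr_deriv ?_
      rw [real_inner_comm (U x)]
      ring
    exact hinner.hasDerivWithinAt.add
      (((hPd x).hasDerivWithinAt.sub (hq'd x hx1)).const_mul ‖B n‖)
  -- differential inequality
  have hbound : ∀ x : ℝ, t (2*n+1) < x → x < t (2*n+2) →
      h' x ≤ 2*‖B n‖ * h x + ‖B n‖ * ‖U (t (2*n))‖^2 := by
    intro x hx1 hx2
    have hx0 : (0:ℝ) ≤ x := by linarith
    have hxτe : t (2*n) ≤ x - τ := by linarith
    have hxτ0 : (0:ℝ) ≤ x - τ := by linarith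
    have hid : (inner ℝ (U x) (V x) : ℝ) ≤ 0 := hdiss n x ⟨hx1, hx2⟩
    have hi2 : (inner ℝ (U x) (B n (U (x - τ))) : ℝ) ≤ ‖B n‖ * (‖U x‖ * ‖U (x - τ)‖) := by
      calc (inner ℝ (U x) (B n (U (x - τ))) : ℝ)
          ≤ ‖U x‖ * ‖B n (U (x - τ))‖ := real_inner_le_norm _ _
        _ ≤ ‖U x‖ * (‖B n‖ * ‖U (x - τ)‖) :=
            mul_le_mul_of_nonneg_left ((B n).le_opNorm _) (norm_nonneg _)
        _ = _ := by ring
    have hadd : (inner ℝ (U x) (V x + B n (U (x - τ))) : ℝ)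
        = (inner ℝ (U x) (V x) : ℝ) + (inner ℝ (U x) (B n (U (x - τ))) : ℝ) :=
      inner_add_right _ _ _
    have h2ab : 2 * (‖U x‖ * ‖U (x - τ)‖) ≤ ‖U x‖^2 + ‖U (x - τ)‖^2 := by
      nlinarith [sq_nonneg (‖U x‖ - ‖U (x - τ)‖)]
    have hFcx : Fc x = ‖U x‖^2 := hFc_eq x hx0
    have hPqx : 0 ≤ P x - q x := hPq x (by linarith)
    have hBpq : 0 ≤ ‖B n‖ * (P x - q x) := mul_nonneg hBn hPqx
    simp only [hh'_def, hh_def]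
    by_cases hc : t (2*n+1) ≤ x - τ
    · rw [if_pos hc, hFcx, hFc_eq (x - τ) hxτ0, hadd]
      nlinarith [mul_le_mul_of_nonneg_left h2ab hBn, mul_nonneg hBn hD]
    · rw [if_neg hc, hFcx, hadd]
      push_neg at hc
      have hUxτ : ‖U (x - τ)‖^2 ≤ ‖U (t (2*n))‖^2 := heven (x - τ) ⟨hxτe, hc.le⟩
      nlinarith [mul_le_mul_of_nonneg_left h2ab hBn,
        mul_le_mul_of_nonneg_left hUxτ hBn]
  -- value of h at t(2n+1)
  have hha_eq : h (t (2*n+1)) = ‖U (t (2*n+1))‖^2 := by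
    have hP0 : P (t (2*n+1)) = 0 := intervalIntegral.integral_same
    have hq0 : q (t (2*n+1)) = 0 := by
      simp only [hq_def]
      rw [max_eq_right (by linarith)]
      exact hP0
    simp only [hh_def, hP0, hq0]
    ring
  rcases eq_or_lt_of_le hra with heq | hlt
  · -- r = t(2n+1)
    rw [← heq]
    have hT1 : (0:ℝ) ≤ t (2*n+2) - t (2*n+1) := by linarith
    have hexp1 : (1:ℝ) ≤ Real.exp (2*‖B n‖*(t (2*n+2) - t (2*n+1))) :=
      Real.one_le_exp (by positivity)
    have hc0 : (0:ℝ) ≤ M^2 * Real.exp (-2*μ*(t (2*n+1) - t (2*n))) := by positivity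
    nlinarith [hFa, mul_nonneg (mul_nonneg hBn hT1) hD, mul_nonneg hc0 hD,
      mul_le_mul_of_nonneg_right hexp1
        (add_nonneg (mul_nonneg hc0 hD) (mul_nonneg (mul_nonneg hBn hT1) hD))]
  · -- t(2n+1) < r
    have hcontIcc : ContinuousOn h (Set.Icc (t (2*n+1)) r) := by
      have hsub : Set.Icc (t (2*n+1)) r ⊆ Set.Ici (0:ℝ) :=
        fun x hx => le_trans h0a.le hx.1
      simp only [hh_def]
      exact (((hUcont.mono hsub).norm).pow 2).add
        ((continuous_const.mul (hPc.sub hqc)).continuousOn)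
    have key : ∀ a' ∈ Set.Ioc (t (2*n+1)) r,
        h r ≤ (h a' + ‖B n‖ * ‖U (t (2*n))‖^2 * (r - t (2*n+1))) *
          Real.exp (2*‖B n‖*(r - t (2*n+1))) := by
      intro a' ha'
      obtain ⟨haa', ha'r⟩ := ha'
      have hG := my_gronwall_s14 (f := h) (f' := h') (δ := h a') (K := 2*‖B n‖)
        (ε := ‖B n‖ * ‖U (t (2*n))‖^2)
        (hcontIcc.mono (Set.Icc_subset_Icc_left haa'.le))
        (fun x hx => hhd x (lt_of_lt_of_le haa' hx.1) (lt_trans hx.2 hrb))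
        (le_refl _)
        (fun x hx => hbound x (lt_of_lt_of_le haa' hx.1) (lt_trans hx.2 hrb))
        r ⟨ha'r, le_refl _⟩
      refine le_trans hG ?_
      have hδ0 : 0 ≤ h a' := by
        have := hPq a' haa'.le
        simp only [hh_def]
        positivity
      exact my_gb_le hδ0 (mul_nonneg hBn hD) (by positivity) (by linarith) (by linarith)
    have hha : ContinuousAt h (t (2*n+1)) := by
      have hUa : ContinuousAt U (t (2*n+1)) := hUcont.continuousAt (Ici_mem_nhds h0a)
      simp only [hh_def]
      exact ((hUa.norm).pow 2).add
        (continuousAt_const.mul ((hPc.continuousAt).sub (hqc.continuousAt)))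
    have htend : Filter.Tendsto
        (fun a' => (h a' + ‖B n‖ * ‖U (t (2*n))‖^2 * (r - t (2*n+1))) *
          Real.exp (2*‖B n‖*(r - t (2*n+1))))
        (nhdsWithin (t (2*n+1)) (Set.Ioi (t (2*n+1))))
        (nhds ((h (t (2*n+1)) + ‖B n‖ * ‖U (t (2*n))‖^2 * (r - t (2*n+1))) *
          Real.exp (2*‖B n‖*(r - t (2*n+1))))) :=
      ((hha.continuousWithinAt.tendsto).add tendsto_const_nhds).mul tendsto_const_nhds
    have hev : ∀ᶠ a' in nhdsWithin (t (2*n+1)) (Set.Ioi (t (2*n+1))),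
        h r ≤ (h a' + ‖B n‖ * ‖U (t (2*n))‖^2 * (r - t (2*n+1))) *
          Real.exp (2*‖B n‖*(r - t (2*n+1))) := by
      filter_upwards [Ioc_mem_nhdsGT hlt] with a' ha' using key a' ha'
    have hlim := ge_of_tendsto htend hev
    rw [hha_eq] at hlim
    -- final numeric assembly
    have hFr : ‖U r‖^2 ≤ h r := by
      have := mul_nonneg hBn (hPq r (le_of_lt hlt))
      simp only [hh_def]
      linarith
    have hσ0 : (0:ℝ) ≤ r - t (2*n+1) := by linarith
    have hσT : r - t (2*n+1) ≤ t (2*n+2) - t (2*n+1) := by linarith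
    have hE : Real.exp (2*‖B n‖*(r - t (2*n+1)))
        ≤ Real.exp (2*‖B n‖*(t (2*n+2) - t (2*n+1))) :=
      Real.exp_le_exp.2 (mul_le_mul_of_nonneg_left hσT (by positivity))
    have hc0 : (0:ℝ) ≤ M^2 * Real.exp (-2*μ*(t (2*n+1) - t (2*n))) := by positivity
    calc ‖U r‖^2 ≤ h r := hFr
      _ ≤ (‖U (t (2*n+1))‖^2 + ‖B n‖ * ‖U (t (2*n))‖^2 * (r - t (2*n+1))) *
          Real.exp (2*‖B n‖*(r - t (2*n+1))) := hlim
      _ ≤ ((M^2 * Real.exp (-2*μ*(t (2*n+1) - t (2*n))) +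
            ‖B n‖*(t (2*n+2) - t (2*n+1))) * ‖U (t (2*n))‖^2) *
          Real.exp (2*‖B n‖*(t (2*n+2) - t (2*n+1))) := by
        apply mul_le_mul _ hE (Real.exp_pos _).le _
        · nlinarith [mul_le_mul_of_nonneg_left hσT (mul_nonneg hBn hD)]
        · exact mul_nonneg (add_nonneg hc0 (mul_nonneg hBn (by linarith))) hD
      _ = _ := by ring
end
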